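/- arXiv:1511.08004 — 7 statements merged into one kernel-verified Lean document; each statement's English description precedes it below -/
import Mathlib

section
/- A tuple $\mathbf{i} = (i_1, \ldots, i_e) \in (\mathbb{Z}/e\mathbb{Z})^e$ is the residue sequence of some standard tableau whose shape is an $e$-hook partition $(k, 1^{e-k})$ if and only if $i_1 = 0$ and both $(1, 2, \ldots, i_e - 1)$ and $(e-1, e-2, \ldots, i_e + 1)$ are subsequences of $\mathbf{i}$ (where elements of $\mathbb{Z}/e\mathbb{Z}$ are identified with $\{0, 1, \ldots, e-1\}$). -/
/-- The `e`-residue of a box `(a, b)` (0-indexed), i.e. `b - a` mod `e`. -/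
def boxRes (e : ℕ) (c : ℕ × ℕ) : ZMod e := (((c.2 : ℤ) - (c.1 : ℤ)) : ℤ)

/-- A standard tableau of size `n`: an injective filling whose image is a Young
diagram (a lower set in `ℕ × ℕ`) and whose inverse increases along rows and
columns. -/
def IsStandardTableau (n : ℕ) (t : Fin n → ℕ × ℕ) : Prop :=
  Function.Injective t ∧
  IsLowerSet (↑(Finset.image t Finset.univ) : Set (ℕ × ℕ)) ∧
  (∀ m m' : Fin n, (t m).1 = (t m').1 → (t m).2 < (t m').2 → m < m') ∧
  (∀ m m' : Fin n, (t m).2 = (t m').2 → (t m).1 < (t m').1 → m < m')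

/-- The cells of the `e`-hook partition `(k, 1^{e-k})` (0-indexed). -/
def hookCells (e k : ℕ) : Finset (ℕ × ℕ) :=
  ((Finset.range k).image fun j => (0, j)) ∪
    ((Finset.range (e + 1 - k)).image fun a => (a, 0))

lemma mem_hookCells {e k : ℕ} {c : ℕ × ℕ} :
    c ∈ hookCells e k ↔ (c.1 = 0 ∧ c.2 < k) ∨ (c.2 = 0 ∧ c.1 < e + 1 - k) := by
  cases c with
  | mk x y =>
    simp only [hookCells, Finset.mem_union, Finset.mem_image, Finset.mem_range, Prod.mk.injEq]
    constructor
    · rintro (⟨j, hj, rfl, rfl⟩ | ⟨a, ha, rfl, rfl⟩) <;> simp_all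
    · rintro (⟨h1, h2⟩ | ⟨h1, h2⟩)
      · exact Or.inl ⟨y, h2, h1.symm, rfl⟩
      · exact Or.inr ⟨x, h2, rfl, h1.symm⟩

private lemma natCast_zmod_inj {e x y : ℕ} (hx : x < e) (hy : y < e) (h : (x : ZMod e) = y) : x = y := by
  have : NeZero e := ⟨by omega⟩
  have := congrArg ZMod.val h
  rwa [ZMod.val_cast_of_lt hx, ZMod.val_cast_of_lt hy] at this

lemma neg_natCast_zmod {e l : ℕ} (h : l + 1 ≤ e) :
    ((e - 1 - l : ℕ) : ZMod e) = -((l + 1 : ℕ) : ZMod e) := by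
  have h2 : (e - 1 - l) + (l + 1) = e := by omega
  have : ((e - 1 - l : ℕ) : ZMod e) + ((l + 1 : ℕ) : ZMod e) = 0 := by
    rw [← Nat.cast_add, h2, ZMod.natCast_self]
  linear_combination this

lemma boxRes_row (e j : ℕ) : boxRes e (0, j) = (j : ZMod e) := by
  simp [boxRes]

lemma boxRes_col (e a : ℕ) : boxRes e (a, 0) = -(a : ZMod e) := by
  simp [boxRes]

set_option maxHeartbeats 2000000 in
lemma hook_backward (e : ℕ) (he : 2 ≤ e) [NeZero e] (i : Fin e → ZMod e) (v : ℕ)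
    (hv1 : 1 ≤ v) (hve : v < e)
    (hi0 : i ⟨0, by omega⟩ = 0) (hiv : i ⟨e - 1, by omega⟩ = (v : ZMod e))
    (a : Fin (v - 1) → Fin e) (ha : StrictMono a)
    (hai : ∀ l, i (a l) = (((l : ℕ) + 1 : ℕ) : ZMod e))
    (b : Fin (e - 1 - v) → Fin e) (hb : StrictMono b)
    (hbi : ∀ l, i (b l) = ((e - 1 - (l : ℕ) : ℕ) : ZMod e)) :
    ∃ (t : Fin e → ℕ × ℕ) (k : ℕ), 1 ≤ k ∧ k ≤ e ∧ IsStandardTableau e t ∧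
      Finset.image t Finset.univ = hookCells e k ∧
      ∀ m : Fin e, boxRes e (t m) = i m := by
  classical
  -- value computations
  have hval_a : ∀ l : Fin (v - 1), (i (a l)).val = (l : ℕ) + 1 := by
    intro l
    rw [hai l, ZMod.val_cast_of_lt (by have := l.isLt; omega)]
  have hval_b : ∀ l : Fin (e - 1 - v), (i (b l)).val = e - 1 - (l : ℕ) := by
    intro l
    rw [hbi l, ZMod.val_cast_of_lt (by have := l.isLt; omega)]
  have hval_0 : (i ⟨0, by omega⟩).val = 0 := by rw [hi0, ZMod.val_zero]
  have hval_e : (i ⟨e - 1, by omega⟩).val = v := by rw [hiv, ZMod.val_cast_of_lt hve]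
  -- index distinctness
  have ha0 : ∀ l, a l ≠ ⟨0, by omega⟩ := by
    intro l h
    have h1 := hval_a l; rw [h, hval_0] at h1; omega
  have hae : ∀ l, a l ≠ ⟨e - 1, by omega⟩ := by
    intro l h
    have h1 := hval_a l; rw [h, hval_e] at h1; have := l.isLt; omega
  have hb0 : ∀ l, b l ≠ ⟨0, by omega⟩ := by
    intro l h
    have h1 := hval_b l; rw [h, hval_0] at h1; have := l.isLt; omega
  have hbe : ∀ l, b l ≠ ⟨e - 1, by omega⟩ := by
    intro l h
    have h1 := hval_b l; rw [h, hval_e] at h1; have := l.isLt; omega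
  have hab : ∀ l l', a l ≠ b l' := by
    intro l l' h
    have h1 := hval_a l
    have h2 := hval_b l'
    rw [h] at h1
    have := l.isLt; have := l'.isLt; omega
  -- covering
  have hcov : ∀ m : Fin e, m = ⟨0, by omega⟩ ∨ m = ⟨e - 1, by omega⟩ ∨
      (∃ l, a l = m) ∨ (∃ l, b l = m) := by
    intro m
    by_contra hcon
    push_neg at hcon
    obtain ⟨h1, h2, h3, h4⟩ := hcon
    have hAB : Disjoint (Finset.image a Finset.univ) (Finset.image b Finset.univ) := by
      simp only [Finset.disjoint_left, Finset.mem_image, Finset.mem_univ, true_and,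
        forall_exists_index]
      rintro x l rfl ⟨l', h⟩
      exact hab l l' h.symm
    have hcardA : (Finset.image a Finset.univ).card = v - 1 := by
      rw [Finset.card_image_of_injective _ ha.injective, Finset.card_univ, Fintype.card_fin]
    have hcardB : (Finset.image b Finset.univ).card = e - 1 - v := by
      rw [Finset.card_image_of_injective _ hb.injective, Finset.card_univ, Fintype.card_fin]
    have hem : (⟨e - 1, by omega⟩ : Fin e) ∉
        Finset.image a Finset.univ ∪ Finset.image b Finset.univ := by
      simp only [Finset.mem_union, Finset.mem_image, Finset.mem_univ, true_and]
      rintro (⟨l, h⟩ | ⟨l, h⟩)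
      · exact hae l h
      · exact hbe l h
    have h0m : (⟨0, by omega⟩ : Fin e) ∉ insert (⟨e - 1, by omega⟩ : Fin e)
        (Finset.image a Finset.univ ∪ Finset.image b Finset.univ) := by
      simp only [Finset.mem_insert, Finset.mem_union, Finset.mem_image, Finset.mem_univ,
        true_and, Fin.mk.injEq]
      rintro ((h : (0:ℕ) = e - 1) | ⟨l, h⟩ | ⟨l, h⟩)
      · omega
      · exact ha0 l h
      · exact hb0 l h
    set S : Finset (Fin e) :=
      insert ⟨0, by omega⟩ (insert ⟨e - 1, by omega⟩
        (Finset.image a Finset.univ ∪ Finset.image b Finset.univ)) with hS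
    have hmS : m ∉ S := by
      simp only [hS, Finset.mem_insert, Finset.mem_union, Finset.mem_image,
        Finset.mem_univ, true_and]
      push_neg
      exact ⟨h1, h2, fun l => fun h => h3 l h, fun l h => h4 l h⟩
    have hcard : S.card = e := by
      rw [hS, Finset.card_insert_of_notMem h0m, Finset.card_insert_of_notMem hem,
        Finset.card_union_of_disjoint hAB, hcardA, hcardB]
      omega
    have hSuniv : S = Finset.univ := Finset.eq_univ_of_card S (by simpa using hcard)
    rw [hSuniv] at hmS
    exact hmS (Finset.mem_univ m)
  -- the tableau
  set t : Fin e → ℕ × ℕ := fun m =>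
    if h : ∃ l, a l = m then (0, (h.choose : ℕ) + 1)
    else if h' : ∃ l, b l = m then ((h'.choose : ℕ) + 1, 0)
    else if m = ⟨e - 1, by omega⟩ then (0, v) else (0, 0) with htdef
  have hta : ∀ l, t (a l) = (0, (l : ℕ) + 1) := by
    intro l
    have hex : ∃ l', a l' = a l := ⟨l, rfl⟩
    have : hex.choose = l := ha.injective hex.choose_spec
    simp only [htdef, dif_pos hex, this]
  have htb : ∀ l, t (b l) = ((l : ℕ) + 1, 0) := by
    intro l
    have hnex : ¬ ∃ l', a l' = b l := by rintro ⟨l', h⟩; exact hab l' l h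
    have hex : ∃ l', b l' = b l := ⟨l, rfl⟩
    have : hex.choose = l := hb.injective hex.choose_spec
    simp only [htdef, dif_neg hnex, dif_pos hex, this]
  have hte : t ⟨e - 1, by omega⟩ = (0, v) := by
    have hnex : ¬ ∃ l', a l' = ⟨e - 1, by omega⟩ := by rintro ⟨l', h⟩; exact hae l' h
    have hnex' : ¬ ∃ l', b l' = ⟨e - 1, by omega⟩ := by rintro ⟨l', h⟩; exact hbe l' h
    simp only [htdef, dif_neg hnex, dif_neg hnex']
    simp
  have ht0 : t ⟨0, by omega⟩ = (0, 0) := by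
    have hnex : ¬ ∃ l', a l' = ⟨0, by omega⟩ := by rintro ⟨l', h⟩; exact ha0 l' h
    have hnex' : ¬ ∃ l', b l' = ⟨0, by omega⟩ := by rintro ⟨l', h⟩; exact hb0 l' h
    have hne : (⟨0, by omega⟩ : Fin e) ≠ ⟨e - 1, by omega⟩ := by
      intro h; simp only [Fin.mk.injEq] at h; omega
    simp only [htdef, dif_neg hnex, dif_neg hnex', if_neg hne]
  -- strict mono as val
  have hamono : ∀ l l' : Fin (v - 1), (l : ℕ) < (l' : ℕ) → (a l : ℕ) < (a l' : ℕ) :=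
    fun l l' h => ha h
  have hbmono : ∀ l l' : Fin (e - 1 - v), (l : ℕ) < (l' : ℕ) → (b l : ℕ) < (b l' : ℕ) :=
    fun l l' h => hb h
  have hapos : ∀ l, 0 < (a l : ℕ) := by
    intro l
    have := ha0 l
    have h2 : (a l : ℕ) ≠ 0 := fun h => this (Fin.ext h)
    omega
  have halt : ∀ l, (a l : ℕ) < e - 1 := by
    intro l
    have := hae l
    have h2 : (a l : ℕ) ≠ e - 1 := fun h => this (Fin.ext h)
    have := (a l).isLt
    omega
  have hbpos : ∀ l, 0 < (b l : ℕ) := by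
    intro l
    have := hb0 l
    have h2 : (b l : ℕ) ≠ 0 := fun h => this (Fin.ext h)
    omega
  have hblt : ∀ l, (b l : ℕ) < e - 1 := by
    intro l
    have := hbe l
    have h2 : (b l : ℕ) ≠ e - 1 := fun h => this (Fin.ext h)
    have := (b l).isLt
    omega
  have himg : Finset.image t Finset.univ = hookCells e (v + 1) := by
    apply Finset.ext
    intro c
    simp only [Finset.mem_image, Finset.mem_univ, true_and]
    constructor
    · rintro ⟨m, rfl⟩
      rcases hcov m with rfl | rfl | ⟨la, rfl⟩ | ⟨lb, rfl⟩ <;>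
        simp only [ht0, hte, hta, htb] <;> rw [mem_hookCells]
      · exact Or.inl ⟨rfl, by omega⟩
      · exact Or.inl ⟨rfl, by omega⟩
      · exact Or.inl ⟨rfl, by have := la.isLt; omega⟩
      · exact Or.inr ⟨rfl, by have := lb.isLt; omega⟩
    · intro hc
      rw [mem_hookCells] at hc
      rcases hc with ⟨h1, h2⟩ | ⟨h1, h2⟩
      · obtain ⟨x, y⟩ := c
        simp only at h1 h2
        subst h1
        rcases Nat.eq_zero_or_pos y with rfl | hy
        · exact ⟨⟨0, by omega⟩, ht0⟩
        · rcases Nat.lt_or_ge y v with hyv | hyv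
          · refine ⟨a ⟨y - 1, by omega⟩, ?_⟩
            rw [hta]; simp; omega
          · have : y = v := by omega
            subst this
            exact ⟨⟨e - 1, by omega⟩, hte⟩
      · obtain ⟨x, y⟩ := c
        simp only at h1 h2
        subst h1
        rcases Nat.eq_zero_or_pos x with rfl | hx
        · exact ⟨⟨0, by omega⟩, ht0⟩
        · refine ⟨b ⟨x - 1, by omega⟩, ?_⟩
          rw [htb]; simp; omega
  refine ⟨t, v + 1, by omega, by omega, ⟨?_, ?_, ?_, ?_⟩, ?_, ?_⟩
  · -- injective
    intro m m' h
    rcases hcov m with rfl | rfl | ⟨la, rfl⟩ | ⟨lb, rfl⟩ <;>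
      rcases hcov m' with rfl | rfl | ⟨la', rfl⟩ | ⟨lb', rfl⟩ <;>
      simp only [ht0, hte, hta, htb, Prod.mk.injEq, true_and, and_true, eq_self_iff_true] at h <;>
      first
      | rfl
      | (exfalso; (try have := la.isLt); (try have := lb.isLt); (try have := la'.isLt);
         (try have := lb'.isLt); omega)
      | (congr 1; exact Fin.ext (by omega))
  · -- lower set
    rw [himg]
    intro c c' hle hc
    simp only [Finset.mem_coe, mem_hookCells] at hc ⊢
    rw [Prod.le_def] at hle
    rcases hc with ⟨u1, u2⟩ | ⟨u1, u2⟩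
    · left; omega
    · right; omega
  · -- rows
    intro m m' h1 h2
    rcases hcov m with rfl | rfl | ⟨la, rfl⟩ | ⟨lb, rfl⟩ <;>
      rcases hcov m' with rfl | rfl | ⟨la', rfl⟩ | ⟨lb', rfl⟩ <;>
      simp only [ht0, hte, hta, htb] at h1 h2 <;>
      simp only [Fin.lt_def] <;>
      first
      | ((try have := la.isLt); (try have := lb.isLt); (try have := la'.isLt);
         (try have := lb'.isLt);
         first
         | omega
         | (exact hapos _)
         | (exact hbpos _)
         | (exact halt _)
         | (exact hblt _)
         | (exact hamono _ _ (by omega))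
         | (exact hbmono _ _ (by omega)))
  · -- columns
    intro m m' h1 h2
    rcases hcov m with rfl | rfl | ⟨la, rfl⟩ | ⟨lb, rfl⟩ <;>
      rcases hcov m' with rfl | rfl | ⟨la', rfl⟩ | ⟨lb', rfl⟩ <;>
      simp only [ht0, hte, hta, htb] at h1 h2 <;>
      simp only [Fin.lt_def] <;>
      first
      | ((try have := la.isLt); (try have := lb.isLt); (try have := la'.isLt);
         (try have := lb'.isLt);
         first
         | omega
         | (exact hapos _)
         | (exact hbpos _)
         | (exact halt _)
         | (exact hblt _)
         | (exact hamono _ _ (by omega))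
         | (exact hbmono _ _ (by omega)))
  · -- image
    exact himg
  · -- residues
    intro m
    rcases hcov m with rfl | rfl | ⟨la, rfl⟩ | ⟨lb, rfl⟩
    · rw [ht0, hi0]; simp [boxRes]
    · rw [hte, boxRes_row, hiv]
    · rw [hta, boxRes_row, hai]
    · rw [htb, boxRes_col, hbi, neg_natCast_zmod (by have := lb.isLt; omega)]

set_option maxHeartbeats 1000000 in
lemma hook_forward (e : ℕ) (he : 2 ≤ e) [NeZero e] (i : Fin e → ZMod e)
    (t : Fin e → ℕ × ℕ) (k : ℕ) (hk1 : 1 ≤ k) (hke : k ≤ e)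
    (hst : IsStandardTableau e t) (him : Finset.image t Finset.univ = hookCells e k)
    (hres : ∀ m : Fin e, boxRes e (t m) = i m) :
    i ⟨0, by omega⟩ = 0 ∧
      (∃ a : Fin ((i ⟨e - 1, by omega⟩).val - 1) → Fin e, StrictMono a ∧
        ∀ l, i (a l) = (((l : ℕ) + 1 : ℕ) : ZMod e)) ∧
      (∃ b : Fin (e - 1 - (i ⟨e - 1, by omega⟩).val) → Fin e, StrictMono b ∧
        ∀ l, i (b l) = ((e - 1 - (l : ℕ) : ℕ) : ZMod e)) := by
  obtain ⟨hinj, hlow, hrow, hcol⟩ := hst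
  have hsurj : ∀ c ∈ hookCells e k, ∃ m, t m = c := by
    intro c hc
    rw [← him] at hc
    simpa using hc
  have htm : ∀ m : Fin e, t m ∈ hookCells e k := by
    intro m
    rw [← him]
    exact Finset.mem_image_of_mem t (Finset.mem_univ m)
  -- t 0 = (0,0)
  have ht0 : t ⟨0, by omega⟩ = (0, 0) := by
    obtain ⟨m0, hm0⟩ := hsurj (0, 0) (mem_hookCells.2 (Or.inl ⟨rfl, by omega⟩))
    have : m0 = ⟨0, by omega⟩ := by
      by_contra hne
      have hne' : t ⟨0, by omega⟩ ≠ (0, 0) := fun h =>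
        hne (hinj (h.trans hm0.symm)).symm
      have hmem := htm ⟨0, by omega⟩
      rw [mem_hookCells] at hmem
      have hlt : m0 < ⟨0, by omega⟩ := by
        rcases hmem with ⟨h1, h2⟩ | ⟨h1, h2⟩
        · refine hrow m0 ⟨0, by omega⟩ (by rw [hm0, h1]) ?_
          rw [hm0]
          rcases Nat.eq_zero_or_pos (t ⟨0, by omega⟩).2 with h0 | h0
          · exact absurd (Prod.ext h1.symm h0.symm).symm hne'
          · exact h0
        · refine hcol m0 ⟨0, by omega⟩ (by rw [hm0, h1]) ?_
          rw [hm0]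
          rcases Nat.eq_zero_or_pos (t ⟨0, by omega⟩).1 with h0 | h0
          · exact absurd (Prod.ext h0.symm h1.symm).symm hne'
          · exact h0
      simp [Fin.lt_def] at hlt
    rw [← this, hm0]
  have hi0 : i ⟨0, by omega⟩ = 0 := by
    rw [← hres, ht0]
    simp [boxRes]
  -- last box
  have hkne : k = e → t ⟨e - 1, by omega⟩ ≠ (e - k, 0) := by
    intro hkeq habs
    rw [hkeq, Nat.sub_self] at habs
    have : (⟨e - 1, by omega⟩ : Fin e) = ⟨0, by omega⟩ := hinj (habs.trans ht0.symm)
    simp only [Fin.mk.injEq] at this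
    omega
  have hlast : t ⟨e - 1, by omega⟩ = (0, k - 1) ∨
      (t ⟨e - 1, by omega⟩ = (e - k, 0) ∧ k < e) := by
    have hmem := htm ⟨e - 1, by omega⟩
    rw [mem_hookCells] at hmem
    rcases hmem with ⟨h1, h2⟩ | ⟨h1, h2⟩
    · rcases Nat.lt_or_ge (t ⟨e - 1, by omega⟩).2 (k - 1) with hj | hj
      · exfalso
        obtain ⟨m1, hm1⟩ := hsurj (0, k - 1) (mem_hookCells.2 (Or.inl ⟨rfl, by omega⟩))
        have := hrow ⟨e - 1, by omega⟩ m1 (by rw [hm1, h1]) (by rw [hm1]; exact hj)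
        rw [Fin.lt_def] at this
        have := m1.isLt
        have hmk : ((⟨e - 1, by omega⟩ : Fin e) : ℕ) = e - 1 := rfl
        omega
      · left
        exact Prod.ext h1 (by omega)
    · rcases Nat.lt_or_ge (t ⟨e - 1, by omega⟩).1 (e - k) with hj | hj
      · exfalso
        obtain ⟨m1, hm1⟩ := hsurj (e - k, 0) (mem_hookCells.2 (Or.inr ⟨rfl, by omega⟩))
        have := hcol ⟨e - 1, by omega⟩ m1 (by rw [hm1, h1]) (by rw [hm1]; exact hj)
        rw [Fin.lt_def] at this
        have := m1.isLt
        have hmk : ((⟨e - 1, by omega⟩ : Fin e) : ℕ) = e - 1 := rfl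
        omega
      · have heq : t ⟨e - 1, by omega⟩ = (e - k, 0) := Prod.ext (by omega) h1
        rcases Nat.lt_or_ge k e with hke' | hke'
        · exact Or.inr ⟨heq, hke'⟩
        · exact absurd heq (hkne (by omega))
  -- value of v
  set v : ℕ := (i ⟨e - 1, by omega⟩).val with hv
  have hkv : k - 1 ≤ v ∧ v ≤ k := by
    rcases hlast with hL | ⟨hL, hL2⟩
    · have : i ⟨e - 1, by omega⟩ = ((k - 1 : ℕ) : ZMod e) := by
        rw [← hres, hL, boxRes_row]
      have hval : v = k - 1 := by
        rw [hv, this, ZMod.val_cast_of_lt (by omega)]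
      omega
    · have : i ⟨e - 1, by omega⟩ = ((k : ℕ) : ZMod e) := by
        rw [← hres, hL, boxRes_col,
          show ((e - k : ℕ) : ZMod e) = ((e - 1 - (k - 1) : ℕ) : ZMod e) by congr 1; omega,
          neg_natCast_zmod (by omega), neg_neg,
          show k - 1 + 1 = k by omega]
      have hval : v = k := by
        rw [hv, this, ZMod.val_cast_of_lt (by omega)]
      omega
  refine ⟨hi0, ?_, ?_⟩
  · -- arm subsequence
    have hex : ∀ l : Fin (v - 1), ∃ m, t m = (0, (l : ℕ) + 1) := by
      intro l
      exact hsurj _ (mem_hookCells.2 (Or.inl ⟨rfl, by have := l.isLt; omega⟩))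
    refine ⟨fun l => (hex l).choose, ?_, ?_⟩
    · intro l l' hll
      exact hrow _ _ (by rw [(hex l).choose_spec, (hex l').choose_spec])
        (by rw [(hex l).choose_spec, (hex l').choose_spec]
            exact Nat.succ_lt_succ (Fin.lt_def.mp hll))
    · intro l
      rw [← hres, (hex l).choose_spec, boxRes_row]
  · -- leg subsequence
    have hex : ∀ l : Fin (e - 1 - v), ∃ m, t m = ((l : ℕ) + 1, 0) := by
      intro l
      exact hsurj _ (mem_hookCells.2 (Or.inr ⟨rfl, by have := l.isLt; omega⟩))
    refine ⟨fun l => (hex l).choose, ?_, ?_⟩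
    · intro l l' hll
      exact hcol _ _ (by rw [(hex l).choose_spec, (hex l').choose_spec])
        (by rw [(hex l).choose_spec, (hex l').choose_spec]
            exact Nat.succ_lt_succ (Fin.lt_def.mp hll))
    · intro l
      rw [← hres, (hex l).choose_spec, boxRes_col,
        neg_natCast_zmod (by have := l.isLt; omega)]

/-- A tuple `i ∈ (ℤ/eℤ)^e` is the residue sequence of a standard tableau of
`e`-hook shape `(k, 1^{e-k})` if and only if `i₁ = 0` and both
`(1, 2, …, i_e - 1)` and `(e-1, e-2, …, i_e + 1)` are subsequences of `i`. -/
theorem hook_residue_sequence_iff (e : ℕ) (he : 2 ≤ e) [NeZero e]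
    (i : Fin e → ZMod e) :
    (∃ (t : Fin e → ℕ × ℕ) (k : ℕ), 1 ≤ k ∧ k ≤ e ∧ IsStandardTableau e t ∧
        Finset.image t Finset.univ = hookCells e k ∧
        ∀ m : Fin e, boxRes e (t m) = i m) ↔
      (i ⟨0, by omega⟩ = 0 ∧
        (∃ a : Fin ((i ⟨e - 1, by omega⟩).val - 1) → Fin e, StrictMono a ∧
          ∀ l, i (a l) = (((l : ℕ) + 1 : ℕ) : ZMod e)) ∧
        (∃ b : Fin (e - 1 - (i ⟨e - 1, by omega⟩).val) → Fin e, StrictMono b ∧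
          ∀ l, i (b l) = ((e - 1 - (l : ℕ) : ℕ) : ZMod e))) := by
  constructor
  · rintro ⟨t, k, hk1, hke, hst, him, hres⟩
    exact hook_forward e he i t k hk1 hke hst him hres
  · rintro ⟨hi0, ⟨a, ha, hai⟩, ⟨b, hb, hbi⟩⟩
    have hve : (i ⟨e - 1, by omega⟩).val < e := ZMod.val_lt _
    rcases Nat.eq_zero_or_pos (i ⟨e - 1, by omega⟩).val with hv0 | hv1
    · exfalso
      have hbval : ∀ l : Fin (e - 1 - (i ⟨e - 1, by omega⟩).val),
          (i (b l)).val = e - 1 - (l : ℕ) := by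
        intro l
        rw [hbi l, ZMod.val_cast_of_lt (by have := l.isLt; omega)]
      have hbne : ∀ l, b l ≠ ⟨0, by omega⟩ ∧ b l ≠ ⟨e - 1, by omega⟩ := by
        intro l
        have h1 := hbval l
        have h2 := l.isLt
        constructor
        · intro h
          rw [h] at h1
          rw [hi0, ZMod.val_zero] at h1
          omega
        · intro h
          rw [h] at h1
          omega
      have hne : (⟨0, by omega⟩ : Fin e) ≠ ⟨e - 1, by omega⟩ := by
        simp only [ne_eq, Fin.mk.injEq]
        omega
      have hsub : Finset.image b Finset.univ ⊆
          Finset.univ \ {(⟨0, by omega⟩ : Fin e), ⟨e - 1, by omega⟩} := by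
        intro x hx
        simp only [Finset.mem_image, Finset.mem_univ, true_and] at hx
        obtain ⟨l, rfl⟩ := hx
        simp only [Finset.mem_sdiff, Finset.mem_univ, Finset.mem_insert,
          Finset.mem_singleton, true_and]
        push_neg
        exact hbne l
      have hc1 := Finset.card_le_card hsub
      rw [Finset.card_image_of_injective _ hb.injective, Finset.card_univ,
        Fintype.card_fin] at hc1
      rw [Finset.card_sdiff_of_subset (by simp), Finset.card_univ, Fintype.card_fin,
        Finset.card_pair hne] at hc1
      omega
    · exact hook_backward e he i (i ⟨e - 1, by omega⟩).val hv1 hve hi0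
        (ZMod.natCast_rightInverse _).symm a ha hai b hb hbi
end

section
/- Let $e \ge 2$ and let $\mathbf{i} \in (\mathbb{Z}/e\mathbb{Z})^e$ be the residue sequence of some standard tableau whose shape is an $e$-hook partition. Then there are exactly two standard tableaux of size $e$ with residue sequence $\mathbf{i}$: one of shape $(i_e+1, 1^{e-i_e-1})$ and degree $1$, and one of shape $(i_e, 1^{e-i_e})$ and degree $0$ (where $i_e$ is identified with its representative in $\{0,\ldots,e-1\}$; in particular the shapes of both tableaux are $e$-hook partitions). -/
/-- `a` is an addable node for the diagram with cell set `S`. -/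
def Addable (S : Finset (ℕ × ℕ)) (a : ℕ × ℕ) : Prop :=
  a ∉ S ∧ IsLowerSet (insert a (↑S : Set (ℕ × ℕ)))

/-- `a` is a removable node of the diagram with cell set `S`. -/
def Removable (S : Finset (ℕ × ℕ)) (a : ℕ × ℕ) : Prop :=
  a ∈ S ∧ IsLowerSet ((↑S : Set (ℕ × ℕ)) \ {a})

open scoped Classical in
/-- `d_a(S)`: the number of addable nodes of residue `res a` strictly below `a`
minus the number of removable nodes of residue `res a` strictly below `a`. -/
noncomputable def dNode (e : ℕ) (S : Finset (ℕ × ℕ)) (a : ℕ × ℕ) : ℤ :=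
  (((((Finset.range (S.card + 1)) ×ˢ (Finset.range (S.card + 1))).filter
      (fun b => Addable S b ∧ boxRes e b = boxRes e a ∧ a.1 < b.1)).card : ℤ)) -
  (((S.filter (fun b => Removable S b ∧ boxRes e b = boxRes e a ∧ a.1 < b.1)).card : ℤ))

/-- The degree of a standard tableau, defined recursively:
`deg(t) = d_{t(n)}(Shape(t)) + deg(t_{≤ n-1})`, with the empty tableau of degree 0. -/
noncomputable def tabDeg (e : ℕ) : (n : ℕ) → (Fin n → ℕ × ℕ) → ℤ
  | 0, _ => 0
  | n + 1, t => dNode e (Finset.image t Finset.univ) (t (Fin.last n)) +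
      tabDeg e n (t ∘ Fin.castSucc)

namespace TH

def hookF (A L : ℕ) : Finset (ℕ × ℕ) :=
  ((Finset.range A).image fun j => (0, j)) ∪ ((Finset.range L).image fun a => (a, 0))

lemma mem_hookF {A L : ℕ} {c : ℕ × ℕ} :
    c ∈ hookF A L ↔ (c.1 = 0 ∧ c.2 < A) ∨ (c.2 = 0 ∧ c.1 < L) := by
  obtain ⟨x, y⟩ := c
  simp only [hookF, Finset.mem_union, Finset.mem_image, Finset.mem_range, Prod.mk.injEq]
  constructor
  · rintro (⟨j, hj, h0, hy⟩ | ⟨a, ha, hx, h0⟩) <;> omega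
  · rintro (⟨h0, hy⟩ | ⟨h0, hx⟩)
    · exact Or.inl ⟨y, by omega⟩
    · exact Or.inr ⟨x, by omega⟩

lemma prodle {a b : ℕ × ℕ} : a ≤ b ↔ a.1 ≤ b.1 ∧ a.2 ≤ b.2 := Prod.le_def

lemma isLowerSet_hookF {A L : ℕ} :
    IsLowerSet (↑(hookF A L) : Set (ℕ × ℕ)) := by
  intro a b hle ha
  simp only [Finset.mem_coe, mem_hookF] at *
  rw [prodle] at hle
  omega

lemma card_hookF {A L : ℕ} (hA : 1 ≤ A) (hL : 1 ≤ L) : (hookF A L).card = A + L - 1 := by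
  have h1 : ((Finset.range A).image fun j => (0, j) : Finset (ℕ×ℕ)).card = A := by
    rw [Finset.card_image_of_injective _ (fun a b h => by simpa using h)]
    exact Finset.card_range A
  have h2 : ((Finset.range L).image fun a => (a, 0) : Finset (ℕ×ℕ)).card = L := by
    rw [Finset.card_image_of_injective _ (fun a b h => by simpa using h)]
    exact Finset.card_range L
  have hint : (((Finset.range A).image fun j => ((0, j) : ℕ×ℕ)) ∩
      ((Finset.range L).image fun a => (a, 0))) = {(0,0)} := by
    ext ⟨x, y⟩
    simp only [Finset.mem_inter, Finset.mem_image, Finset.mem_range, Prod.mk.injEq,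
      Finset.mem_singleton]
    constructor
    · rintro ⟨⟨j, hj, h⟩, ⟨a, ha, h'⟩⟩
      omega
    · rintro ⟨h1, h2⟩
      exact ⟨⟨y, by omega⟩, ⟨x, by omega⟩⟩
  have := Finset.card_union_add_card_inter
    ((Finset.range A).image fun j => ((0, j) : ℕ×ℕ))
    ((Finset.range L).image fun a => (a, 0))
  rw [h1, h2, hint] at this
  simp only [Finset.card_singleton] at this
  unfold hookF
  omega

lemma insert_arm {A L : ℕ} : insert (0, A) (hookF A L) = hookF (A+1) L := by
  ext c
  simp only [Finset.mem_insert, mem_hookF, Prod.ext_iff]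
  omega

lemma insert_leg {A L : ℕ} : insert (L, 0) (hookF A L) = hookF A (L+1) := by
  ext c
  simp only [Finset.mem_insert, mem_hookF, Prod.ext_iff]
  omega



lemma addable_hookF {A L : ℕ} (hA : 1 ≤ A) (hL : 1 ≤ L) {b : ℕ × ℕ} :
    Addable (hookF A L) b ↔ b = (0, A) ∨ b = (L, 0) ∨ (b = (1,1) ∧ 2 ≤ A ∧ 2 ≤ L) := by
  constructor
  · rintro ⟨hnot, hlow⟩
    obtain ⟨x, y⟩ := b
    simp only [mem_hookF] at hnot
    push_neg at hnot
    have hmem : ∀ c : ℕ × ℕ, c ≤ (x, y) → c ≠ (x, y) → c ∈ hookF A L := by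
      intro c hle hne
      have := hlow hle (Set.mem_insert _ _)
      rcases this with h | h
      · exact absurd h hne
      · exact h
    by_cases hx : x = 0
    · subst hx
      have hyA : A ≤ y := hnot.1 rfl
      have hy : y = A := by
        by_contra hne
        have h1 : (0, y - 1) ∈ hookF A L := by
          apply hmem (0, y-1) (by rw [prodle]; constructor <;> simp <;> omega)
          simp only [ne_eq, Prod.mk.injEq]
          omega
        rw [mem_hookF] at h1
        omega
      exact Or.inl (by simp [hy])
    · by_cases hy : y = 0
      · subst hy
        have hxL : L ≤ x := hnot.2 rfl
        have hx' : x = L := by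
          by_contra hne
          have h1 : (x - 1, 0) ∈ hookF A L := by
            apply hmem (x-1, 0) (by rw [prodle]; constructor <;> simp)
            simp only [ne_eq, Prod.mk.injEq]
            omega
          rw [mem_hookF] at h1
          omega
        exact Or.inr (Or.inl (by simp [hx']))
      · -- x ≥ 1, y ≥ 1
        have h11 : (1, 1) ∈ insert ((x,y) : ℕ×ℕ) (↑(hookF A L) : Set (ℕ×ℕ)) :=
          hlow (by rw [prodle]; constructor <;> simp <;> omega) (Set.mem_insert _ _)
        have hb : (x, y) = ((1:ℕ), (1:ℕ)) := by
          rcases h11 with h | h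
          · exact h.symm
          · rw [Finset.mem_coe] at h
            have := mem_hookF.mp h
            omega
        refine Or.inr (Or.inr ⟨hb, ?_, ?_⟩)
        · have h01 : ((0:ℕ), (1:ℕ)) ∈ hookF A L := by
            apply hmem _ (by rw [prodle]; omega)
            simp only [ne_eq, Prod.mk.injEq]; omega
          rw [mem_hookF] at h01; omega
        · have h10 : ((1:ℕ), (0:ℕ)) ∈ hookF A L := by
            apply hmem _ (by rw [prodle]; omega)
            simp only [ne_eq, Prod.mk.injEq]; omega
          rw [mem_hookF] at h10; omega
  · rintro (rfl | rfl | ⟨rfl, hA2, hL2⟩)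
    · refine ⟨by rw [mem_hookF]; omega, ?_⟩
      rw [← Finset.coe_insert, insert_arm]
      exact isLowerSet_hookF
    · refine ⟨by rw [mem_hookF]; omega, ?_⟩
      rw [← Finset.coe_insert, insert_leg]
      exact isLowerSet_hookF
    · refine ⟨by rw [mem_hookF]; omega, ?_⟩
      intro p q hle hp
      rcases hp with h | h
      · subst h
        obtain ⟨q1, q2⟩ := q
        rw [prodle] at hle
        simp only at hle
        rcases Nat.eq_zero_or_pos q1 with h1 | h1
        · right; exact Finset.mem_coe.mpr (mem_hookF.mpr (Or.inl ⟨h1, by omega⟩))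
        · rcases Nat.eq_zero_or_pos q2 with h2 | h2
          · right; exact Finset.mem_coe.mpr (mem_hookF.mpr (Or.inr ⟨h2, by omega⟩))
          · left; show (q1, q2) = (1,1); simp only [Prod.mk.injEq]; omega
      · right; exact isLowerSet_hookF hle h

lemma erase_arm {A L : ℕ} (hA : 2 ≤ A) : (hookF A L).erase (0, A-1) = hookF (A-1) L := by
  ext c
  simp only [Finset.mem_erase, mem_hookF, ne_eq, Prod.ext_iff]
  omega

lemma erase_leg {A L : ℕ} (hL : 2 ≤ L) : (hookF A L).erase (L-1, 0) = hookF A (L-1) := by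
  ext c
  simp only [Finset.mem_erase, mem_hookF, ne_eq, Prod.ext_iff]
  omega

lemma removable_hookF {A L : ℕ} (hA : 1 ≤ A) (hL : 1 ≤ L) {b : ℕ × ℕ} :
    Removable (hookF A L) b ↔
      (b = (0, A-1) ∧ 2 ≤ A) ∨ (b = (L-1, 0) ∧ 2 ≤ L) ∨ (b = (0,0) ∧ A = 1 ∧ L = 1) := by
  constructor
  · rintro ⟨hmem, hlow⟩
    obtain ⟨x, y⟩ := b
    rw [mem_hookF] at hmem
    have key : ∀ c : ℕ × ℕ, c ∈ hookF A L → c ≠ (x,y) → (x,y) ≤ c → False := by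
      intro c hc hne hle
      have : ((x,y) : ℕ×ℕ) ∈ (↑(hookF A L) : Set (ℕ×ℕ)) \ {(x,y)} :=
        hlow hle ⟨hc, by simpa using hne⟩
      simp at this
    rcases hmem with ⟨hx0, hyA⟩ | ⟨hy0, hxL⟩
    · -- arm cell (0, y), y < A
      simp only at hx0 hyA; subst hx0
      by_cases hy : y = A - 1
      · subst hy
        rcases Nat.lt_or_ge 1 A with h | h
        · exact Or.inl ⟨rfl, h⟩
        · -- A = 1, y = 0
          have hA1 : A = 1 := by omega
          rcases Nat.lt_or_ge 1 L with h2 | h2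
          · exfalso
            exact key (1, 0) (mem_hookF.mpr (Or.inr ⟨rfl, by omega⟩))
              (by simp [Prod.ext_iff]) (by rw [prodle]; simp; omega)
          · exact Or.inr (Or.inr ⟨by simp [hA1], hA1, by omega⟩)
      · exfalso
        exact key (0, y+1) (mem_hookF.mpr (Or.inl ⟨rfl, by omega⟩))
          (by simp) (by rw [prodle]; simp)
    · -- leg cell (x, 0), x < L
      simp only at hy0 hxL; subst hy0
      by_cases hx : x = L - 1
      · subst hx
        rcases Nat.lt_or_ge 1 L with h | h
        · exact Or.inr (Or.inl ⟨rfl, h⟩)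
        · have hL1 : L = 1 := by omega
          rcases Nat.lt_or_ge 1 A with h2 | h2
          · exfalso
            exact key (0, 1) (mem_hookF.mpr (Or.inl ⟨rfl, by omega⟩))
              (by simp [Prod.ext_iff]) (by rw [prodle]; simp; omega)
          · exact Or.inr (Or.inr ⟨by simp [hL1], by omega, hL1⟩)
      · exfalso
        exact key (x+1, 0) (mem_hookF.mpr (Or.inr ⟨rfl, by omega⟩))
          (by simp) (by rw [prodle]; simp)
  · rintro (⟨rfl, h2⟩ | ⟨rfl, h2⟩ | ⟨rfl, h1, h2⟩)
    · refine ⟨mem_hookF.mpr (Or.inl ⟨rfl, by omega⟩), ?_⟩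
      rw [← Finset.coe_erase, erase_arm h2]
      exact isLowerSet_hookF
    · refine ⟨mem_hookF.mpr (Or.inr ⟨rfl, by omega⟩), ?_⟩
      rw [← Finset.coe_erase, erase_leg h2]
      exact isLowerSet_hookF
    · refine ⟨mem_hookF.mpr (Or.inl ⟨rfl, by omega⟩), ?_⟩
      subst h1 h2
      intro c d hle hd
      exfalso
      obtain ⟨hd1, hd2⟩ := hd
      rw [Finset.mem_coe, mem_hookF] at hd1
      simp only [Set.mem_singleton_iff] at hd2
      apply hd2
      obtain ⟨d1, d2⟩ := d
      simp only [Prod.ext_iff]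
      omega




lemma res_eq_iff (e x y x' y' : ℕ) :
    boxRes e (x, y) = boxRes e (x', y') ↔ (e:ℤ) ∣ ((y':ℤ) - (x':ℤ) - (y:ℤ) + (x:ℤ)) := by
  unfold boxRes
  rw [ZMod.intCast_eq_intCast_iff, Int.modEq_iff_dvd]
  constructor
  · intro h
    convert h using 1
    push_cast
    ring
  · intro h
    convert h using 1
    push_cast
    ring

lemma dNode_arm (e A L : ℕ) (he : 2 ≤ e) (hA : 1 ≤ A) (hL : 1 ≤ L) (hn : A + L ≤ e + 1) :
    dNode e (hookF A L) (0, A - 1) = if A + L - 1 = e then 1 else 0 := by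
  classical
  unfold dNode
  rw [card_hookF hA hL]
  have hadd : (((Finset.range (A + L - 1 + 1)) ×ˢ (Finset.range (A + L - 1 + 1))).filter
      (fun b => Addable (hookF A L) b ∧ boxRes e b = boxRes e ((0 : ℕ), A - 1) ∧
        ((0 : ℕ), A - 1).1 < b.1))
      = if A + L - 1 = e then {((L : ℕ), (0 : ℕ))} else ∅ := by
    split_ifs with hio
    · ext b
      simp only [Finset.mem_filter, Finset.mem_product, Finset.mem_range, Finset.mem_singleton]
      constructor
      · rintro ⟨⟨hb1, hb2⟩, haddable, hres, hlt⟩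
        rcases (addable_hookF hA hL).mp haddable with rfl | rfl | ⟨rfl, h1, h2⟩
        · simp at hlt
        · rfl
        · rw [res_eq_iff] at hres
          have hx : ((A:ℤ) - 1 - 0 - 1 + 1) = ((A - 1 : ℕ) : ℤ) := by push_cast; omega
          rw [show ((((A-1:ℕ)):ℤ) - ((0:ℕ):ℤ) - ((1:ℕ):ℤ) + ((1:ℕ):ℤ)) = ((A - 1 : ℕ) : ℤ)
            from by push_cast; omega] at hres
          rw [Int.natCast_dvd_natCast] at hres
          have := Nat.eq_zero_of_dvd_of_lt hres (by omega)
          omega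
      · rintro rfl
        refine ⟨⟨by omega, by omega⟩, (addable_hookF hA hL).mpr (Or.inr (Or.inl rfl)), ?_, ?_⟩
        · rw [res_eq_iff]
          rw [show ((((A-1:ℕ)):ℤ) - ((0:ℕ):ℤ) - ((0:ℕ):ℤ) + ((L:ℕ):ℤ)) = ((A - 1 + L : ℕ) : ℤ)
            from by push_cast; omega]
          rw [Int.natCast_dvd_natCast]
          have : A - 1 + L = e := by omega
          rw [this]
        · show 0 < L
          omega
    · rw [Finset.filter_eq_empty_iff]
      rintro b hb ⟨haddable, hres, hlt⟩
      rcases (addable_hookF hA hL).mp haddable with rfl | rfl | ⟨rfl, h1, h2⟩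
      · simp at hlt
      · rw [res_eq_iff] at hres
        rw [show ((((A-1:ℕ)):ℤ) - ((0:ℕ):ℤ) - ((0:ℕ):ℤ) + ((L:ℕ):ℤ)) = ((A - 1 + L : ℕ) : ℤ)
          from by push_cast; omega] at hres
        rw [Int.natCast_dvd_natCast] at hres
        have := Nat.le_of_dvd (by omega) hres
        omega
      · rw [res_eq_iff] at hres
        rw [show ((((A-1:ℕ)):ℤ) - ((0:ℕ):ℤ) - ((1:ℕ):ℤ) + ((1:ℕ):ℤ)) = ((A - 1 : ℕ) : ℤ)
          from by push_cast; omega] at hres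
        rw [Int.natCast_dvd_natCast] at hres
        have := Nat.eq_zero_of_dvd_of_lt hres (by omega)
        omega
  have hrem : ((hookF A L).filter
      (fun b => Removable (hookF A L) b ∧ boxRes e b = boxRes e ((0 : ℕ), A - 1) ∧
        ((0 : ℕ), A - 1).1 < b.1)) = ∅ := by
    rw [Finset.filter_eq_empty_iff]
    rintro b hb ⟨hrmv, hres, hlt⟩
    rcases (removable_hookF hA hL).mp hrmv with ⟨rfl, h2⟩ | ⟨rfl, h2⟩ | ⟨rfl, h1, h2⟩
    · simp at hlt
    · rw [res_eq_iff] at hres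
      rw [show ((((A-1:ℕ)):ℤ) - ((0:ℕ):ℤ) - ((0:ℕ):ℤ) + ((L-1:ℕ):ℤ)) = ((A - 1 + (L - 1) : ℕ) : ℤ)
        from by push_cast; omega] at hres
      rw [Int.natCast_dvd_natCast] at hres
      have := Nat.eq_zero_of_dvd_of_lt hres (by omega)
      omega
    · simp at hlt
  rw [hadd, hrem]
  split_ifs <;> simp

lemma dNode_leg (e A L : ℕ) (he : 2 ≤ e) (hA : 1 ≤ A) (hL : 2 ≤ L) (hn : A + L ≤ e + 1) :
    dNode e (hookF A L) (L - 1, 0) = 0 := by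
  classical
  unfold dNode
  rw [card_hookF hA (by omega)]
  have hadd : (((Finset.range (A + L - 1 + 1)) ×ˢ (Finset.range (A + L - 1 + 1))).filter
      (fun b => Addable (hookF A L) b ∧ boxRes e b = boxRes e (L - 1, (0 : ℕ)) ∧
        (L - 1, (0 : ℕ)).1 < b.1)) = ∅ := by
    rw [Finset.filter_eq_empty_iff]
    rintro b hb ⟨haddable, hres, hlt⟩
    rcases (addable_hookF hA (by omega)).mp haddable with rfl | rfl | ⟨rfl, h1, h2⟩
    · have h3 : L - 1 < 0 := hlt
      omega
    · rw [res_eq_iff] at hres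
      rw [show (((0:ℕ)):ℤ) - ((L-1:ℕ):ℤ) - ((0:ℕ):ℤ) + ((L:ℕ):ℤ) = ((1 : ℕ) : ℤ)
        from by push_cast; omega] at hres
      rw [Int.natCast_dvd_natCast] at hres
      have := Nat.le_of_dvd (by omega) hres
      omega
    · have h3 : L - 1 < 1 := hlt
      omega
  have hrem : ((hookF A L).filter
      (fun b => Removable (hookF A L) b ∧ boxRes e b = boxRes e (L - 1, (0 : ℕ)) ∧
        (L - 1, (0 : ℕ)).1 < b.1)) = ∅ := by
    rw [Finset.filter_eq_empty_iff]
    rintro b hb ⟨hrmv, hres, hlt⟩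
    rcases (removable_hookF hA (by omega)).mp hrmv with ⟨rfl, h2⟩ | ⟨rfl, h2⟩ | ⟨rfl, h1, h2⟩
    · have h3 : L - 1 < 0 := hlt
      omega
    · have h3 : L - 1 < L - 1 := hlt
      omega
    · omega
  rw [hadd, hrem]
  simp

lemma boxRes_arm (e y : ℕ) : boxRes e (0, y) = ((y:ℕ) : ZMod e) := by
  unfold boxRes
  push_cast
  norm_num

lemma boxRes_leg (e x : ℕ) : boxRes e (x, 0) = -((x:ℕ) : ZMod e) := by
  unfold boxRes
  push_cast
  norm_num

lemma natCast_val_self {e : ℕ} [NeZero e] (a : ZMod e) : ((a.val : ℕ) : ZMod e) = a := by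
  rw [ZMod.natCast_val, ZMod.cast_id]

lemma neg_cast_eq {e x : ℕ} [NeZero e] (h2 : x ≤ e) : -((x:ℕ) : ZMod e) = ((e - x : ℕ) : ZMod e) := by
  rw [Nat.cast_sub h2, ZMod.natCast_self]
  ring

lemma val_neg_cast {e x : ℕ} [NeZero e] (h1 : 1 ≤ x) (h2 : x ≤ e) : (-((x:ℕ) : ZMod e)).val = e - x := by
  rw [neg_cast_eq h2, ZMod.val_cast_of_lt (by omega)]

def tabK (e K : ℕ) (i : Fin e → ZMod e) (m : Fin e) : ℕ × ℕ :=
  if (i m).val < K then (0, (i m).val) else (e - (i m).val, 0)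

lemma tabK_res {e K : ℕ} [NeZero e] {i : Fin e → ZMod e} (hK : K ≤ e) (m : Fin e) :
    boxRes e (tabK e K i m) = i m := by
  unfold tabK
  split_ifs with h
  · rw [boxRes_arm, natCast_val_self]
  · rw [boxRes_leg]
    have hv : (i m).val < e := ZMod.val_lt _
    rw [neg_cast_eq (by omega), show e - (e - (i m).val) = (i m).val from by omega,
      natCast_val_self]

lemma tabK_cell_inj {e K : ℕ} [NeZero e] {i : Fin e → ZMod e}
    (hinj : Function.Injective i) (hK : K ≤ e) : Function.Injective (tabK e K i) := by
  intro m m' h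
  apply hinj
  rw [← tabK_res (i := i) hK m, ← tabK_res (i := i) hK m', h]

lemma tabK_image {e K : ℕ} [NeZero e] {i : Fin e → ZMod e}
    (hsurj : Function.Surjective i) (hK1 : 1 ≤ K) (hKe : K ≤ e) :
    Finset.image (tabK e K i) Finset.univ = hookF K (e + 1 - K) := by
  ext c
  simp only [Finset.mem_image, Finset.mem_univ, true_and, mem_hookF]
  constructor
  · rintro ⟨m, rfl⟩
    unfold tabK
    have hv : (i m).val < e := ZMod.val_lt _
    split_ifs with h
    · exact Or.inl ⟨rfl, h⟩
    · exact Or.inr ⟨rfl, by omega⟩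
  · rintro (⟨h0, hc⟩ | ⟨h0, hc⟩)
    · obtain ⟨m, hm⟩ := hsurj ((c.2 : ℕ) : ZMod e)
      refine ⟨m, ?_⟩
      have hval : (i m).val = c.2 := by rw [hm, ZMod.val_cast_of_lt (by omega)]
      unfold tabK
      rw [if_pos (by omega)]
      obtain ⟨c1, c2⟩ := c
      simp only at h0 hval ⊢
      rw [hval, h0]
    · by_cases hc1 : c.1 = 0
      · obtain ⟨m, hm⟩ := hsurj 0
        refine ⟨m, ?_⟩
        have hval : (i m).val = 0 := by rw [hm]; exact ZMod.val_zero ..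
        unfold tabK
        rw [if_pos (by omega)]
        obtain ⟨d1, d2⟩ := c
        simp only at h0 hc1 hval ⊢
        rw [hval, h0, hc1]
      · obtain ⟨m, hm⟩ := hsurj ((e - c.1 : ℕ) : ZMod e)
        refine ⟨m, ?_⟩
        have hval : (i m).val = e - c.1 := by rw [hm, ZMod.val_cast_of_lt (by omega)]
        unfold tabK
        rw [if_neg (by omega)]
        obtain ⟨d1, d2⟩ := c
        simp only at h0 hc1 hval ⊢
        rw [hval, h0, show e - (e - d1) = d1 from by omega]


lemma tabK_arm_eq {e K : ℕ} {i : Fin e → ZMod e} {m : Fin e} (h : (i m).val < K) :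
    tabK e K i m = (0, (i m).val) := if_pos h

lemma tabK_leg_eq {e K : ℕ} {i : Fin e → ZMod e} {m : Fin e} (h : ¬ (i m).val < K) :
    tabK e K i m = (e - (i m).val, 0) := if_neg h

lemma tabK_standard {e K : ℕ} [NeZero e] {i : Fin e → ZMod e} (he : 2 ≤ e)
    (hinj : Function.Injective i) (hsurj : Function.Surjective i)
    (hiz : i ⟨0, by omega⟩ = 0)
    (hK1 : 1 ≤ K) (hKe : K ≤ e)
    (harm : ∀ m m' : Fin e, (i m).val < (i m').val → (i m').val < K → m < m')
    (hleg : ∀ m m' : Fin e, K ≤ (i m').val → (i m').val < (i m).val → m < m') :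
    IsStandardTableau e (tabK e K i) := by
  refine ⟨tabK_cell_inj hinj hKe, ?_, ?_, ?_⟩
  · rw [tabK_image hsurj hK1 hKe]
    exact isLowerSet_hookF
  · intro m m' h1 h2
    have hvm : (i m).val < e := ZMod.val_lt _
    have hvm' : (i m').val < e := ZMod.val_lt _
    by_cases hm : (i m).val < K <;> by_cases hm' : (i m').val < K
    · rw [tabK_arm_eq hm, tabK_arm_eq hm'] at h1 h2
      exact harm m m' h2 hm'
    · rw [tabK_arm_eq hm, tabK_leg_eq hm'] at h1 h2
      have : (i m).val < 0 := h2
      omega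
    · rw [tabK_leg_eq hm, tabK_arm_eq hm'] at h1 h2
      have : e - (i m).val = 0 := h1
      omega
    · rw [tabK_leg_eq hm, tabK_leg_eq hm'] at h1 h2
      have : (0:ℕ) < 0 := h2
      omega
  · intro m m' h1 h2
    have hvm : (i m).val < e := ZMod.val_lt _
    have hvm' : (i m').val < e := ZMod.val_lt _
    by_cases hm : (i m).val < K <;> by_cases hm' : (i m').val < K
    · rw [tabK_arm_eq hm, tabK_arm_eq hm'] at h1 h2
      have : (0:ℕ) < 0 := h2
      omega
    · rw [tabK_arm_eq hm, tabK_leg_eq hm'] at h1 h2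
      have hv0 : (i m).val = 0 := h1
      rw [Fin.lt_def]
      have hm0 : (m : ℕ) = 0 := by
        by_contra hne
        have : m ≠ ⟨0, by omega⟩ := by
          intro h
          rw [h] at hne
          exact hne rfl
        have : i m ≠ i ⟨0, by omega⟩ := fun h => this (hinj h)
        rw [hiz] at this
        exact this ((ZMod.val_eq_zero _).mp hv0)
      have hm'0 : (m' : ℕ) ≠ 0 := by
        intro h
        have hmm : m' = ⟨0, by omega⟩ := Fin.ext h
        rw [hmm, hiz] at hm'
        simp [ZMod.val_zero] at hm'
        omega
      omega
    · rw [tabK_leg_eq hm, tabK_arm_eq hm'] at h1 h2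
      have : e - (i m).val < 0 := h2
      omega
    · rw [tabK_leg_eq hm, tabK_leg_eq hm'] at h1 h2
      have h2' : e - (i m).val < e - (i m').val := h2
      exact hleg m m' (by omega) (by omega)

lemma std_zero {e : ℕ} (h0 : 0 < e) (t : Fin e → ℕ × ℕ) (hst : IsStandardTableau e t) :
    t ⟨0, h0⟩ = (0, 0) := by
  obtain ⟨hinj, hlow, hrow, hcol⟩ := hst
  have hself : t ⟨0,h0⟩ ∈ Finset.image t Finset.univ :=
    Finset.mem_image_of_mem t (Finset.mem_univ _)
  have hmem : ((0,0) : ℕ×ℕ) ∈ Finset.image t Finset.univ := by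
    exact Finset.mem_coe.mp (hlow (b := ((0,0) : ℕ×ℕ))
      (by rw [prodle]; exact ⟨Nat.zero_le _, Nat.zero_le _⟩) (Finset.mem_coe.mpr hself))
  obtain ⟨q, _, hq⟩ := Finset.mem_image.mp hmem
  have hc1 : (t ⟨0,h0⟩).1 = 0 := by
    by_contra hne
    have h1 : ((0 : ℕ), (t ⟨0,h0⟩).2) ∈ Finset.image t Finset.univ := by
      exact Finset.mem_coe.mp (hlow (b := ((0:ℕ), (t ⟨0,h0⟩).2))
        (by rw [prodle]; exact ⟨Nat.zero_le _, le_refl _⟩) (Finset.mem_coe.mpr hself))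
    obtain ⟨p, _, hp⟩ := Finset.mem_image.mp h1
    have := hcol p ⟨0,h0⟩ (by rw [hp]) (by rw [hp]; omega)
    rw [Fin.lt_def] at this
    exact absurd this (Nat.not_lt_zero _)
  have hc2 : (t ⟨0,h0⟩).2 = 0 := by
    by_contra hne
    have := hrow q ⟨0,h0⟩ (by rw [hq]; exact hc1.symm) (by rw [hq]; omega)
    rw [Fin.lt_def] at this
    exact absurd this (Nat.not_lt_zero _)
  rw [Prod.ext_iff]
  exact ⟨hc1, hc2⟩

lemma image_fin_succ {α : Type*} [DecidableEq α] (n : ℕ) (f : Fin (n+1) → α) :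
    Finset.image f Finset.univ =
      insert (f (Fin.last n)) (Finset.image (f ∘ Fin.castSucc) Finset.univ) := by
  ext x
  simp only [Finset.mem_image, Finset.mem_insert, Finset.mem_univ, true_and, Function.comp]
  constructor
  · rintro ⟨m, rfl⟩
    rcases Fin.eq_castSucc_or_eq_last m with ⟨j, rfl⟩ | rfl
    · right; exact ⟨j, rfl⟩
    · left; rfl
  · rintro (rfl | ⟨j, rfl⟩)
    · exact ⟨Fin.last n, rfl⟩
    · exact ⟨Fin.castSucc j, rfl⟩


def armv (e K n : ℕ) (i : Fin e → ZMod e) : ℕ :=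
  (Finset.univ.filter (fun m : Fin e => (m : ℕ) < n ∧ (i m).val < K)).card

section Counting

variable {e K : ℕ} [NeZero e] {i : Fin e → ZMod e}

lemma countArm (hinj : Function.Injective i) (hsurj : Function.Surjective i)
    (harm : ∀ m m' : Fin e, (i m).val < (i m').val → (i m').val < K → m < m')
    (n : ℕ) (hn : n < e) (hv : (i ⟨n, hn⟩).val < K) :
    armv e K n i = (i ⟨n, hn⟩).val := by
  have hnn : ((⟨n, hn⟩ : Fin e) : ℕ) = n := rfl
  set v := (i ⟨n, hn⟩).val with hvdef
  have hve : v < e := ZMod.val_lt _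
  have himg : (Finset.univ.filter (fun m : Fin e => (m : ℕ) < n ∧ (i m).val < K)).image
      (fun m => (i m).val) = Finset.range v := by
    ext w
    simp only [Finset.mem_image, Finset.mem_filter, Finset.mem_univ, true_and, Finset.mem_range]
    constructor
    · rintro ⟨m, ⟨hmn, hmK⟩, rfl⟩
      rcases Nat.lt_trichotomy (i m).val v with h | h | h
      · exact h
      · exfalso
        have : m = ⟨n, hn⟩ := hinj (ZMod.val_injective e h)
        rw [this] at hmn
        exact absurd hmn (by omega)
      · exfalso
        have := harm ⟨n, hn⟩ m h hmK
        rw [Fin.lt_def] at this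
        exact absurd hmn (by omega)
    · intro hw
      obtain ⟨m, hm⟩ := hsurj ((w : ℕ) : ZMod e)
      have hval : (i m).val = w := by rw [hm, ZMod.val_cast_of_lt (by omega)]
      refine ⟨m, ⟨?_, by omega⟩, hval⟩
      have := harm m ⟨n, hn⟩ (by omega) hv
      rw [Fin.lt_def] at this
      exact this
  have hcard := Finset.card_image_of_injOn
    (s := Finset.univ.filter (fun m : Fin e => (m : ℕ) < n ∧ (i m).val < K))
    (f := fun m => (i m).val)
    (fun m _ m' _ h => hinj (ZMod.val_injective e h))
  rw [himg, Finset.card_range] at hcard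
  rw [armv, ← hcard]

lemma countLeg (hinj : Function.Injective i) (hsurj : Function.Surjective i)
    (hleg : ∀ m m' : Fin e, K ≤ (i m').val → (i m').val < (i m).val → m < m')
    (n : ℕ) (hn : n < e) (hv : K ≤ (i ⟨n, hn⟩).val) :
    (Finset.univ.filter (fun m : Fin e => (m : ℕ) < n ∧ K ≤ (i m).val)).card
      = e - 1 - (i ⟨n, hn⟩).val := by
  have hnn : ((⟨n, hn⟩ : Fin e) : ℕ) = n := rfl
  set v := (i ⟨n, hn⟩).val with hvdef
  have hve : v < e := ZMod.val_lt _
  have himg : (Finset.univ.filter (fun m : Fin e => (m : ℕ) < n ∧ K ≤ (i m).val)).image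
      (fun m => (i m).val) = Finset.Ico (v + 1) e := by
    ext w
    simp only [Finset.mem_image, Finset.mem_filter, Finset.mem_univ, true_and, Finset.mem_Ico]
    constructor
    · rintro ⟨m, ⟨hmn, hmK⟩, rfl⟩
      rcases Nat.lt_trichotomy (i m).val v with h | h | h
      · exfalso
        have := hleg ⟨n, hn⟩ m hmK h
        rw [Fin.lt_def] at this
        exact absurd hmn (by omega)
      · exfalso
        have : m = ⟨n, hn⟩ := hinj (ZMod.val_injective e h)
        rw [this] at hmn
        exact absurd hmn (by omega)
      · exact ⟨by omega, ZMod.val_lt _⟩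
    · intro hw
      obtain ⟨m, hm⟩ := hsurj ((w : ℕ) : ZMod e)
      have hval : (i m).val = w := by rw [hm, ZMod.val_cast_of_lt (by omega)]
      refine ⟨m, ⟨?_, by omega⟩, hval⟩
      have := hleg m ⟨n, hn⟩ hv (by omega)
      rw [Fin.lt_def] at this
      exact this
  have hcard := Finset.card_image_of_injOn
    (s := Finset.univ.filter (fun m : Fin e => (m : ℕ) < n ∧ K ≤ (i m).val))
    (f := fun m => (i m).val)
    (fun m _ m' _ h => hinj (ZMod.val_injective e h))
  rw [himg, Nat.card_Ico] at hcard
  omega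

lemma count_total (n : ℕ) (hn : n ≤ e) :
    armv e K n i
      + (Finset.univ.filter (fun m : Fin e => (m : ℕ) < n ∧ K ≤ (i m).val)).card = n := by
  rw [armv]
  have hdisj : Disjoint
      (Finset.univ.filter (fun m : Fin e => (m : ℕ) < n ∧ (i m).val < K))
      (Finset.univ.filter (fun m : Fin e => (m : ℕ) < n ∧ K ≤ (i m).val)) := by
    rw [Finset.disjoint_filter]
    intro m _ h1 h2
    omega
  rw [← Finset.card_union_of_disjoint hdisj]
  have hun : (Finset.univ.filter (fun m : Fin e => (m : ℕ) < n ∧ (i m).val < K)) ∪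
      (Finset.univ.filter (fun m : Fin e => (m : ℕ) < n ∧ K ≤ (i m).val))
      = Finset.univ.filter (fun m : Fin e => (m : ℕ) < n) := by
    ext m
    simp only [Finset.mem_union, Finset.mem_filter, Finset.mem_univ, true_and]
    omega
  rw [hun]
  have himg : (Finset.univ.filter (fun m : Fin e => (m : ℕ) < n)).image (fun m : Fin e => (m : ℕ))
      = Finset.range n := by
    ext w
    simp only [Finset.mem_image, Finset.mem_filter, Finset.mem_univ, true_and, Finset.mem_range]
    constructor
    · rintro ⟨m, hm, rfl⟩; exact hm
    · intro hw; exact ⟨⟨w, by omega⟩, hw, rfl⟩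
  have hcard := Finset.card_image_of_injOn
    (s := Finset.univ.filter (fun m : Fin e => (m : ℕ) < n))
    (f := fun m : Fin e => (m : ℕ))
    (fun m _ m' _ h => Fin.ext h)
  rw [himg, Finset.card_range] at hcard
  omega

lemma armv_succ_arm (n : ℕ) (hn : n < e) (hv : (i ⟨n, hn⟩).val < K) :
    armv e K (n + 1) i = armv e K n i + 1 := by
  have hnn : ((⟨n, hn⟩ : Fin e) : ℕ) = n := rfl
  rw [armv, armv]
  have : (Finset.univ.filter (fun m : Fin e => (m : ℕ) < n + 1 ∧ (i m).val < K))
      = insert ⟨n, hn⟩ (Finset.univ.filter (fun m : Fin e => (m : ℕ) < n ∧ (i m).val < K)) := by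
    ext m
    simp only [Finset.mem_insert, Finset.mem_filter, Finset.mem_univ, true_and]
    constructor
    · rintro ⟨h1, h2⟩
      rcases Nat.lt_or_ge (m : ℕ) n with h | h
      · exact Or.inr ⟨h, h2⟩
      · exact Or.inl (Fin.ext (by omega))
    · rintro (rfl | ⟨h1, h2⟩)
      · exact ⟨by omega, hv⟩
      · exact ⟨by omega, h2⟩
  rw [this, Finset.card_insert_of_notMem (by simp)]

lemma armv_succ_leg (n : ℕ) (hn : n < e) (hv : ¬ (i ⟨n, hn⟩).val < K) :
    armv e K (n + 1) i = armv e K n i := by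
  have hnn : ((⟨n, hn⟩ : Fin e) : ℕ) = n := rfl
  rw [armv, armv]
  congr 1
  ext m
  simp only [Finset.mem_filter, Finset.mem_univ, true_and]
  constructor
  · rintro ⟨h1, h2⟩
    rcases Nat.lt_or_ge (m : ℕ) n with h | h
    · exact ⟨h, h2⟩
    · exfalso
      have : m = ⟨n, hn⟩ := Fin.ext (by omega)
      rw [this] at h2
      exact hv h2
  · rintro ⟨h1, h2⟩
    exact ⟨by omega, h2⟩

end Counting

lemma tabK_deg_aux {e K : ℕ} [NeZero e] {i : Fin e → ZMod e} (he : 2 ≤ e)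
    (hinj : Function.Injective i) (hsurj : Function.Surjective i)
    (hiz : i ⟨0, by omega⟩ = 0)
    (hK1 : 1 ≤ K) (hKe : K ≤ e)
    (harm : ∀ m m' : Fin e, (i m).val < (i m').val → (i m').val < K → m < m')
    (hleg : ∀ m m' : Fin e, K ≤ (i m').val → (i m').val < (i m).val → m < m') :
    ∀ n, ∀ (_ : 1 ≤ n) (hne : n ≤ e),
      Finset.image (fun m : Fin n => tabK e K i (Fin.castLE hne m)) Finset.univ
        = hookF (armv e K n i) (n + 1 - armv e K n i)
      ∧ 1 ≤ armv e K n i ∧ armv e K n i ≤ n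
      ∧ tabDeg e n (fun m : Fin n => tabK e K i (Fin.castLE hne m))
          = if n = e ∧ (i ⟨e - 1, by omega⟩).val < K then 1 else 0 := by
  intro n
  induction n with
  | zero => exact fun h0 => absurd h0 (by omega)
  | succ n IH =>
    intro h1 hne
    have hn_lt : n < e := by omega
    set f : Fin (n+1) → ℕ×ℕ := (fun m : Fin (n+1) => tabK e K i (Fin.castLE hne m)) with hf
    have hflast : f (Fin.last n) = tabK e K i ⟨n, hn_lt⟩ := rfl
    by_cases hn0 : n = 0
    · subst hn0
      have hv0 : (i ⟨0, hn_lt⟩).val = 0 := by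
        have hh : (⟨0, hn_lt⟩ : Fin e) = ⟨0, by omega⟩ := rfl
        rw [hh, hiz, ZMod.val_zero]
      have hcell : tabK e K i ⟨0, hn_lt⟩ = ((0:ℕ), (0:ℕ)) := by
        rw [tabK_arm_eq (by omega), hv0]
      have himg1 : Finset.image f Finset.univ = {((0:ℕ),(0:ℕ))} := by
        ext c
        simp only [Finset.mem_image, Finset.mem_univ, true_and, Finset.mem_singleton]
        constructor
        · rintro ⟨m, rfl⟩
          rcases m with ⟨mv, hmv⟩
          have hm0 : mv = 0 := by omega
          subst hm0
          exact hcell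
        · rintro rfl
          exact ⟨0, hcell⟩
      have harmv0 : armv e K 0 i = 0 := by
        rw [armv]
        simp
      have hv0' : (i ⟨0, hn_lt⟩).val < K := by omega
      have harmv1 : armv e K (0+1) i = 1 := by
        rw [armv_succ_arm 0 hn_lt hv0', harmv0]
      have h00 : ({((0:ℕ),(0:ℕ))} : Finset (ℕ×ℕ)) = hookF 1 1 := by
        ext c
        rw [mem_hookF, Finset.mem_singleton, Prod.ext_iff]
        omega
      refine ⟨?_, by omega, by omega, ?_⟩
      · rw [himg1, harmv1, h00]
      · show dNode e (Finset.image f Finset.univ) (f (Fin.last 0)) +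
          tabDeg e 0 (f ∘ Fin.castSucc) = _
        rw [himg1, h00]
        rw [show f (Fin.last 0) = ((0:ℕ),(0:ℕ)) from hcell]
        rw [show ((0:ℕ),(0:ℕ)) = ((0:ℕ), 1-1) from rfl]
        rw [dNode_arm e 1 1 he (by omega) (by omega) (by omega)]
        rw [show tabDeg e 0 (f ∘ Fin.castSucc) = 0 from rfl]
        rw [if_neg (by omega : ¬ (1 + 1 - 1 = e))]
        rw [if_neg (fun h => absurd h.1 (by omega))]
        norm_num
    · have hn1 : 1 ≤ n := by omega
      have hnee : n ≤ e := by omega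
      obtain ⟨Himg, Ha1, Han, Hdeg⟩ := IH hn1 hnee
      have hfc : (f ∘ Fin.castSucc) = (fun m : Fin n => tabK e K i (Fin.castLE hnee m)) := rfl
      have himgsplit : Finset.image f Finset.univ
          = insert (tabK e K i ⟨n, hn_lt⟩) (hookF (armv e K n i) (n + 1 - armv e K n i)) := by
        rw [image_fin_succ, hflast, hfc, Himg]
      set v := (i ⟨n, hn_lt⟩).val with hvdef
      have hve : v < e := ZMod.val_lt _
      by_cases hv : v < K
      · have hAv : armv e K n i = v := countArm hinj hsurj harm n hn_lt hv
        have hS : armv e K (n+1) i = v + 1 := by rw [armv_succ_arm n hn_lt hv, hAv]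
        have hcell : tabK e K i ⟨n, hn_lt⟩ = ((0:ℕ), v) := tabK_arm_eq hv
        have himg : Finset.image f Finset.univ = hookF (v+1) (n+1-v) := by
          rw [himgsplit, hcell, hAv, insert_arm]
        have hvn : v ≤ n := by omega
        refine ⟨?_, by omega, by omega, ?_⟩
        · rw [himg, hS, show n + 1 + 1 - (v+1) = n + 1 - v from by omega]
        · show dNode e (Finset.image f Finset.univ) (f (Fin.last n)) +
            tabDeg e n (f ∘ Fin.castSucc) = _
          rw [himg, hflast, hcell, hfc, Hdeg]
          rw [if_neg (fun h => absurd h.1 (by omega : ¬ n = e))]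
          rw [show ((0:ℕ), v) = ((0:ℕ), (v+1) - 1) from by simp]
          rw [dNode_arm e (v+1) (n+1-v) he (by omega) (by omega) (by omega)]
          rw [show (v+1) + (n+1-v) - 1 = n + 1 from by omega]
          by_cases hlast : n + 1 = e
          · rw [if_pos hlast, if_pos ⟨hlast, by
              rw [show (⟨e-1, by omega⟩ : Fin e) = ⟨n, hn_lt⟩ from Fin.ext (show e - 1 = n from by omega)]
              exact hv⟩]
            norm_num
          · rw [if_neg hlast, if_neg (fun h => hlast h.1)]
            norm_num
      · have hKv : K ≤ v := by omega
        have hLc : (Finset.univ.filter (fun m : Fin e => (m:ℕ) < n ∧ K ≤ (i m).val)).card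
            = e - 1 - v := countLeg hinj hsurj hleg n hn_lt hKv
        have htot := count_total (e := e) (K := K) (i := i) n hnee
        have hAv : armv e K n i + (e - 1 - v) = n := by rw [← hLc]; exact htot
        have hS : armv e K (n+1) i = armv e K n i := armv_succ_leg n hn_lt hv
        have hcell : tabK e K i ⟨n, hn_lt⟩ = ((e - v : ℕ), (0:ℕ)) := tabK_leg_eq hv
        have hveq : e - v = n + 1 - armv e K n i := by omega
        have himg : Finset.image f Finset.univ
            = hookF (armv e K n i) (n + 2 - armv e K n i) := by
          rw [himgsplit, hcell,
            show ((e - v : ℕ), (0:ℕ)) = ((n + 1 - armv e K n i : ℕ), (0:ℕ)) from by rw [hveq]]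
          rw [insert_leg, show n + 1 - armv e K n i + 1 = n + 2 - armv e K n i from by omega]
        refine ⟨?_, by omega, by omega, ?_⟩
        · rw [himg, hS]
        · show dNode e (Finset.image f Finset.univ) (f (Fin.last n)) +
            tabDeg e n (f ∘ Fin.castSucc) = _
          rw [himg, hflast, hcell, hfc, Hdeg]
          rw [if_neg (fun h => absurd h.1 (by omega : ¬ n = e))]
          rw [show ((e - v : ℕ), (0:ℕ)) = (((n + 2 - armv e K n i) - 1 : ℕ), (0:ℕ)) from by
            rw [hveq, show n + 1 - armv e K n i = n + 2 - armv e K n i - 1 from by omega]]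
          rw [dNode_leg e (armv e K n i) (n + 2 - armv e K n i) he (by omega) (by omega)
            (by omega)]
          rw [if_neg (by
            rintro ⟨ha, hb⟩
            rw [show (⟨e-1, by omega⟩ : Fin e) = ⟨n, hn_lt⟩ from Fin.ext (show e - 1 = n from by omega)] at hb
            omega)]
          norm_num


lemma nat_eq_of_dvd_sub {e a b : ℕ} (ha : a < e) (hb : b < e) (h : (e:ℤ) ∣ (a:ℤ) - b) :
    a = b := by
  have h0 : ((a:ℤ) - b) = 0 := Int.eq_zero_of_dvd_of_natAbs_lt_natAbs h (by omega)
  omega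

lemma std_unique {e : ℕ} [NeZero e] (he : 2 ≤ e) {i : Fin e → ZMod e}
    (hinj : Function.Injective i) (hiz : i ⟨0, by omega⟩ = 0)
    (hvE1 : 1 ≤ (i ⟨e - 1, by omega⟩).val)
    (t : Fin e → ℕ × ℕ) (hst : IsStandardTableau e t)
    (hres : ∀ m, boxRes e (t m) = i m) :
    t = tabK e ((i ⟨e - 1, by omega⟩).val + 1) i ∨ t = tabK e ((i ⟨e - 1, by omega⟩).val) i := by
  have ht0 : t ⟨0, by omega⟩ = (0, 0) := std_zero (by omega) t hst
  obtain ⟨htinj, hlow, hrow, hcol⟩ := hst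
  set mE : Fin e := ⟨e - 1, by omega⟩ with hmE
  have hmEv : (mE : ℕ) = e - 1 := rfl
  set vE := (i mE).val with hvE
  have hvEe : vE < e := ZMod.val_lt _
  have hmem : ∀ (c : ℕ × ℕ) (m : Fin e), c ≤ t m → ∃ p, t p = c := by
    intro c m hle
    have h1 : t m ∈ Finset.image t Finset.univ := Finset.mem_image_of_mem _ (Finset.mem_univ _)
    have h2 := hlow hle (Finset.mem_coe.mpr h1)
    obtain ⟨p, _, hp⟩ := Finset.mem_image.mp (Finset.mem_coe.mp h2)
    exact ⟨p, hp⟩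
  have hdich : ∀ m : Fin e, t m = (0, (i m).val) ∨
      (t m = (e - (i m).val, 0) ∧ 1 ≤ (i m).val) := by
    intro m
    rcases hxy : t m with ⟨x, y⟩
    by_cases hx : x = 0
    · subst hx
      left
      have hy : y < e := by
        by_contra hy
        push_neg at hy
        obtain ⟨p, hp⟩ := hmem (0, y - e) m (by rw [hxy, prodle]; exact ⟨le_refl _, by omega⟩)
        have hip : i p = i m := by
          rw [← hres p, ← hres m, hp, hxy, res_eq_iff]
          exact ⟨1, by push_cast [Nat.cast_sub hy]; omega⟩
        have := hinj hip
        rw [this, hxy] at hp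
        rw [Prod.mk.injEq] at hp
        omega
      have him : i m = ((y : ℕ) : ZMod e) := by rw [← hres m, hxy, boxRes_arm]
      rw [him]
      rw [ZMod.val_cast_of_lt hy]
    · by_cases hy : y = 0
      · subst hy
        right
        have hx1 : 1 ≤ x := by omega
        have hxe : x < e := by
          by_contra hxe
          push_neg at hxe
          obtain ⟨p, hp⟩ := hmem (x - e, 0) m (by rw [hxy, prodle]; exact ⟨by omega, le_refl _⟩)
          have hip : i p = i m := by
            rw [← hres p, ← hres m, hp, hxy, res_eq_iff]
            exact ⟨-1, by push_cast [Nat.cast_sub hxe]; omega⟩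
          have := hinj hip
          rw [this, hxy] at hp
          rw [Prod.mk.injEq] at hp
          omega
        have him : i m = -((x : ℕ) : ZMod e) := by rw [← hres m, hxy, boxRes_leg]
        have hval : (i m).val = e - x := by rw [him, val_neg_cast hx1 (by omega)]
        rw [hval]
        exact ⟨by rw [Prod.mk.injEq]; omega, by omega⟩
      · exfalso
        obtain ⟨p, hp⟩ := hmem (1, 1) m (by rw [hxy, prodle]; exact ⟨by omega, by omega⟩)
        have hip : i p = 0 := by
          rw [← hres p, hp]
          unfold boxRes
          norm_num
        have : p = ⟨0, by omega⟩ := hinj (by rw [hip, hiz])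
        rw [this, ht0] at hp
        simp at hp
  have hvmlt : ∀ m : Fin e, (i m).val < e := fun m => ZMod.val_lt _
  rcases hdich mE with hE | ⟨hE, _⟩
  · left
    funext m
    rcases hdich m with h | ⟨h, h1⟩
    · rw [h, tabK_arm_eq (show (i m).val < vE + 1 by
        by_contra hgt
        push_neg at hgt
        have := hrow mE m (by rw [hE, h]) (by rw [hE, h]; show vE < (i m).val; omega)
        rw [Fin.lt_def, hmEv] at this
        have := m.isLt
        omega)]
    · have hge : vE + 1 ≤ (i m).val := by
        rcases Nat.lt_trichotomy (i m).val vE with hc | hc | hc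
        · exfalso
          obtain ⟨p, hp⟩ := hmem (0, (i m).val) mE (by rw [hE, prodle]; exact ⟨le_refl _, by omega⟩)
          have hip : i p = i m := by
            rw [← hres p, hp, boxRes_arm, natCast_val_self]
          have := hinj hip
          rw [this, h] at hp
          rw [Prod.mk.injEq] at hp
          omega
        · exfalso
          have : m = mE := hinj (ZMod.val_injective e (by rw [← hvE, hc]))
          rw [this, hE] at h
          rw [Prod.mk.injEq] at h
          omega
        · omega
      rw [h, tabK_leg_eq (by omega)]
  · right
    funext m
    rcases hdich m with h | ⟨h, h1⟩
    · have hlt : (i m).val < vE := by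
        rcases Nat.lt_trichotomy (i m).val vE with hc | hc | hc
        · exact hc
        · exfalso
          have : m = mE := hinj (ZMod.val_injective e (by rw [← hvE, hc]))
          rw [this, hE] at h
          rw [Prod.mk.injEq] at h
          omega
        · exfalso
          obtain ⟨p, hp⟩ := hmem (0, vE) m (by rw [h, prodle]; exact ⟨le_refl _, by omega⟩)
          have hip : i p = i mE := by
            rw [← hres p, hp, boxRes_arm, hvE, natCast_val_self]
          have := hinj hip
          rw [this, hE] at hp
          rw [Prod.mk.injEq] at hp
          omega
      rw [h, tabK_arm_eq hlt]
    · have hge : vE ≤ (i m).val := by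
        by_contra hlt
        push_neg at hlt
        have := hcol mE m (by rw [hE, h]) (by
          rw [hE, h]
          show e - vE < e - (i m).val
          omega)
        rw [Fin.lt_def, hmEv] at this
        have := m.isLt
        omega
      rw [h, tabK_leg_eq (by omega)]


theorem two_hook_tableaux_with_residue_sequence (e : ℕ) (he : 2 ≤ e) [NeZero e]
    (i : Fin e → ZMod e)
    (hi : ∃ (t : Fin e → ℕ × ℕ) (k : ℕ), 1 ≤ k ∧ k ≤ e ∧ IsStandardTableau e t ∧
      Finset.image t Finset.univ = hookCells e k ∧
      ∀ m : Fin e, boxRes e (t m) = i m) :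
    ∃ t₁ t₂ : Fin e → ℕ × ℕ,
      IsStandardTableau e t₁ ∧
      Finset.image t₁ Finset.univ = hookCells e ((i ⟨e - 1, Nat.sub_lt (by omega) Nat.one_pos⟩).val + 1) ∧
      (∀ m : Fin e, boxRes e (t₁ m) = i m) ∧ tabDeg e e t₁ = 1 ∧
      IsStandardTableau e t₂ ∧
      Finset.image t₂ Finset.univ = hookCells e ((i ⟨e - 1, Nat.sub_lt (by omega) Nat.one_pos⟩).val) ∧
      (∀ m : Fin e, boxRes e (t₂ m) = i m) ∧ tabDeg e e t₂ = 0 ∧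
      t₁ ≠ t₂ ∧
      ∀ t : Fin e → ℕ × ℕ, IsStandardTableau e t →
        (∀ m : Fin e, boxRes e (t m) = i m) → t = t₁ ∨ t = t₂ := by
  obtain ⟨t, k, hk1, hke, hst, himgt, hres⟩ := hi
  have htinj := hst.1
  have hlow := hst.2.1
  have hrow := hst.2.2.1
  have hcol := hst.2.2.2
  have hmemt : ∀ m, t m ∈ hookF k (e + 1 - k) := by
    intro m
    have h := Finset.mem_image_of_mem t (Finset.mem_univ m)
    rw [himgt] at h
    exact h
  have hinj : Function.Injective i := by
    intro m m' hii
    apply htinj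
    have hR : boxRes e (t m) = boxRes e (t m') := by rw [hres m, hres m', hii]
    have h1 := hmemt m
    have h2 := hmemt m'
    rcases hxy : t m with ⟨x, y⟩
    rcases hxy' : t m' with ⟨x', y'⟩
    rw [hxy, mem_hookF] at h1
    rw [hxy', mem_hookF] at h2
    rw [hxy, hxy', res_eq_iff] at hR
    rcases h1 with ⟨hx0, hyk⟩ | ⟨hy0, hxk⟩
    · subst hx0
      rcases h2 with ⟨hx0', hyk'⟩ | ⟨hy0', hxk'⟩
      · subst hx0'
        have : (e:ℤ) ∣ (y':ℤ) - y := by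
          rw [show (y':ℤ) - y = (y':ℤ) - 0 - y + 0 from by ring]
          exact hR
        have := nat_eq_of_dvd_sub (by omega) (by omega) this
        rw [Prod.mk.injEq]
        omega
      · subst hy0'
        have hdvd : (e:ℤ) ∣ ((x' + y : ℕ) : ℤ) := by
          rw [show ((x' + y : ℕ) : ℤ) = -((0:ℤ) - x' - y + 0) from by push_cast; ring]
          exact dvd_neg.mpr hR
        rw [Int.natCast_dvd_natCast] at hdvd
        have := Nat.eq_zero_of_dvd_of_lt hdvd (by omega)
        rw [Prod.mk.injEq]
        omega
    · subst hy0
      rcases h2 with ⟨hx0', hyk'⟩ | ⟨hy0', hxk'⟩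
      · subst hx0'
        have hdvd : (e:ℤ) ∣ ((y' + x : ℕ) : ℤ) := by
          rw [show ((y' + x : ℕ) : ℤ) = (y':ℤ) - 0 - 0 + x from by push_cast; ring]
          exact hR
        rw [Int.natCast_dvd_natCast] at hdvd
        have := Nat.eq_zero_of_dvd_of_lt hdvd (by omega)
        rw [Prod.mk.injEq]
        omega
      · subst hy0'
        have : (e:ℤ) ∣ (x:ℤ) - x' := by
          rw [show (x:ℤ) - x' = (0:ℤ) - x' - 0 + x from by ring]
          exact hR
        have := nat_eq_of_dvd_sub (by omega) (by omega) this
        rw [Prod.mk.injEq]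
        omega
  have hcard : Fintype.card (Fin e) = Fintype.card (ZMod e) := by
    rw [Fintype.card_fin, ZMod.card]
  have hsurj : Function.Surjective i :=
    ((Fintype.bijective_iff_injective_and_card i).mpr ⟨hinj, hcard⟩).surjective
  have hiz : i ⟨0, by omega⟩ = 0 := by
    rw [← hres ⟨0, by omega⟩, std_zero (by omega) t hst]
    unfold boxRes
    norm_num
  set mE : Fin e := ⟨e - 1, by omega⟩ with hmE
  have hmEv : (mE : ℕ) = e - 1 := rfl
  have hvEe : (i mE).val < e := ZMod.val_lt _
  have hvE1 : 1 ≤ (i mE).val := by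
    by_contra hc
    push_neg at hc
    have h0 : (i mE).val = 0 := by omega
    have hz : i mE = 0 := (ZMod.val_eq_zero _).mp h0
    have hfe : mE = ⟨0, by omega⟩ := hinj (by rw [hz, hiz])
    have := congrArg Fin.val hfe
    rw [hmEv] at this
    simp at this
    omega
  have htab : ∀ m, t m = tabK e k i m := by
    intro m
    rcases hxy : t m with ⟨x, y⟩
    have h1 := hmemt m
    rw [hxy, mem_hookF] at h1
    by_cases hx : x = 0
    · subst hx
      have hyk : y < k := by rcases h1 with ⟨_, hh⟩ | ⟨hh, _⟩ <;> omega
      have him : i m = (y : ZMod e) := by rw [← hres m, hxy, boxRes_arm]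
      have hval : (i m).val = y := by rw [him, ZMod.val_cast_of_lt (by omega)]
      rw [tabK_arm_eq (by omega), hval]
    · have hy0 : y = 0 ∧ x < e + 1 - k := by
        rcases h1 with ⟨hh, _⟩ | hh
        · exact absurd hh hx
        · exact hh
      obtain ⟨rfl, hxk⟩ := hy0
      have hx1 : 1 ≤ x := by omega
      have him : i m = -(x : ZMod e) := by rw [← hres m, hxy, boxRes_leg]
      have hval : (i m).val = e - x := by rw [him, val_neg_cast hx1 (by omega)]
      rw [tabK_leg_eq (by omega), hval, Prod.mk.injEq]
      omega
  have harmK : ∀ m m' : Fin e, (i m).val < (i m').val → (i m').val < k → m < m' := by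
    intro m m' h1 h2
    have hm := htab m
    have hm' := htab m'
    rw [tabK_arm_eq (by omega : (i m).val < k)] at hm
    rw [tabK_arm_eq h2] at hm'
    exact hrow m m' (by rw [hm, hm']) (by rw [hm, hm']; exact h1)
  have hlegK : ∀ m m' : Fin e, k ≤ (i m').val → (i m').val < (i m).val → m < m' := by
    intro m m' h1 h2
    have hm := htab m
    have hm' := htab m'
    rw [tabK_leg_eq (by omega)] at hm
    rw [tabK_leg_eq (by omega)] at hm'
    refine hcol m m' (by rw [hm, hm']) ?_
    rw [hm, hm']
    show e - (i m).val < e - (i m').val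
    have hb := ZMod.val_lt (i m)
    omega
  have hup : (i mE).val ≤ k := by
    by_contra hc
    push_neg at hc
    obtain ⟨m', hm'⟩ := hsurj (((i mE).val - 1 : ℕ) : ZMod e)
    have hval : (i m').val = (i mE).val - 1 := by rw [hm', ZMod.val_cast_of_lt (by omega)]
    have hlt := hlegK mE m' (by omega) (by omega)
    rw [Fin.lt_def, hmEv] at hlt
    have h2 := m'.isLt
    omega
  have hlo : k - 1 ≤ (i mE).val := by
    by_contra hc
    push_neg at hc
    obtain ⟨m', hm'⟩ := hsurj (((i mE).val + 1 : ℕ) : ZMod e)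
    have hval : (i m').val = (i mE).val + 1 := by rw [hm', ZMod.val_cast_of_lt (by omega)]
    have hlt := harmK mE m' (by omega) (by omega)
    rw [Fin.lt_def, hmEv] at hlt
    have h2 := m'.isLt
    omega
  have harmK' : ∀ K : ℕ, K ≤ (i mE).val + 1 →
      ∀ m m' : Fin e, (i m).val < (i m').val → (i m').val < K → m < m' := by
    intro K hK m m' h1 h2
    rcases Nat.lt_or_ge (i m').val k with hc | hc
    · exact harmK m m' h1 hc
    · have heq : (i m').val = (i mE).val := by omega
      have hm'E : m' = mE := hinj (ZMod.val_injective e heq)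
      rw [hm'E, Fin.lt_def, hmEv]
      have h4 := m.isLt
      have h5 : (m : ℕ) ≠ e - 1 := by
        intro hmm
        have hfin : m = mE := Fin.ext (by rw [hmm, hmEv])
        rw [hfin] at h1
        omega
      omega
  have hlegK' : ∀ K : ℕ, (i mE).val ≤ K →
      ∀ m m' : Fin e, K ≤ (i m').val → (i m').val < (i m).val → m < m' := by
    intro K hK m m' h1 h2
    rcases Nat.lt_or_ge (i m').val k with hc | hc
    · have heq : (i m').val = (i mE).val := by omega
      have hm'E : m' = mE := hinj (ZMod.val_injective e heq)
      rw [hm'E, Fin.lt_def, hmEv]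
      have h4 := m.isLt
      have h5 : (m : ℕ) ≠ e - 1 := by
        intro hmm
        have hfin : m = mE := Fin.ext (by rw [hmm, hmEv])
        rw [hfin] at h2
        omega
      omega
    · exact hlegK m m' hc h2
  refine ⟨tabK e ((i mE).val + 1) i, tabK e ((i mE).val) i, ?_, ?_, ?_, ?_, ?_, ?_, ?_, ?_, ?_, ?_⟩
  · exact tabK_standard he hinj hsurj hiz (Nat.succ_le_succ (Nat.zero_le _)) (ZMod.val_lt _)
      (harmK' _ (le_refl _)) (hlegK' _ (Nat.le_succ _))
  · exact tabK_image hsurj (Nat.succ_le_succ (Nat.zero_le _)) (ZMod.val_lt _)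
  · intro m
    exact tabK_res (ZMod.val_lt _) m
  · have hdeg := (tabK_deg_aux (K := (i mE).val + 1) he hinj hsurj hiz
      (Nat.succ_le_succ (Nat.zero_le _)) (ZMod.val_lt _)
      (harmK' _ (le_refl _)) (hlegK' _ (Nat.le_succ _)) e (by omega) (le_refl e)).2.2.2
    have hfun : (fun m : Fin e => tabK e ((i mE).val + 1) i (Fin.castLE (le_refl e) m))
        = tabK e ((i mE).val + 1) i := funext (fun m => rfl)
    rw [hfun] at hdeg
    rw [if_pos ⟨rfl, Nat.lt_succ_self _⟩] at hdeg
    exact hdeg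
  · exact tabK_standard he hinj hsurj hiz hvE1 (le_of_lt (ZMod.val_lt _))
      (harmK' _ (Nat.le_succ _)) (hlegK' _ (le_refl _))
  · exact tabK_image hsurj hvE1 (le_of_lt (ZMod.val_lt _))
  · intro m
    exact tabK_res (le_of_lt (ZMod.val_lt _)) m
  · have hdeg := (tabK_deg_aux (K := (i mE).val) he hinj hsurj hiz hvE1
      (le_of_lt (ZMod.val_lt _))
      (harmK' _ (Nat.le_succ _)) (hlegK' _ (le_refl _)) e (by omega) (le_refl e)).2.2.2
    have hfun : (fun m : Fin e => tabK e ((i mE).val) i (Fin.castLE (le_refl e) m))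
        = tabK e ((i mE).val) i := funext (fun m => rfl)
    rw [hfun] at hdeg
    rw [if_neg (fun h => absurd h.2 (Nat.lt_irrefl _))] at hdeg
    exact hdeg
  · intro hcontra
    have h1 := congrFun hcontra mE
    rw [tabK_arm_eq (Nat.lt_succ_self _), tabK_leg_eq (Nat.lt_irrefl _)] at h1
    rw [Prod.mk.injEq] at h1
    omega
  · intro t' hst' hres'
    exact std_unique he hinj hiz hvE1 t' hst' hres'

end TH

/-- If `i` is the residue sequence of a standard tableau of `e`-hook shape, then
there are exactly two standard tableaux of size `e` with residue sequence `i`: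
one of shape `(i_e + 1, 1^{e - i_e - 1})` and degree `1`, and one of shape
`(i_e, 1^{e - i_e})` and degree `0`. -/
theorem two_hook_tableaux_with_residue_sequence (e : ℕ) (he : 2 ≤ e) [NeZero e]
    (i : Fin e → ZMod e)
    (hi : ∃ (t : Fin e → ℕ × ℕ) (k : ℕ), 1 ≤ k ∧ k ≤ e ∧ IsStandardTableau e t ∧
      Finset.image t Finset.univ = hookCells e k ∧
      ∀ m : Fin e, boxRes e (t m) = i m) :
    ∃ t₁ t₂ : Fin e → ℕ × ℕ,
      IsStandardTableau e t₁ ∧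
      Finset.image t₁ Finset.univ = hookCells e ((i ⟨e - 1, by omega⟩).val + 1) ∧
      (∀ m : Fin e, boxRes e (t₁ m) = i m) ∧ tabDeg e e t₁ = 1 ∧
      IsStandardTableau e t₂ ∧
      Finset.image t₂ Finset.univ = hookCells e ((i ⟨e - 1, by omega⟩).val) ∧
      (∀ m : Fin e, boxRes e (t₂ m) = i m) ∧ tabDeg e e t₂ = 0 ∧
      t₁ ≠ t₂ ∧
      ∀ t : Fin e → ℕ × ℕ, IsStandardTableau e t →
        (∀ m : Fin e, boxRes e (t m) = i m) → t = t₁ ∨ t = t₂ := by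
  exact TH.two_hook_tableaux_with_residue_sequence e he i hi
end

section
/- Let $A$ be a finite-dimensional graded algebra over a field $F$, and let $B$ be a unital graded subalgebra of $A$ that is isomorphic, as a graded algebra, to the endomorphism algebra $\mathrm{END}(V)$ of a finite-dimensional graded vector space $V$. Let $C = C_A(B)$ be the centralizer of $B$ in $A$. Then the map $B \otimes_F C \to A$, $b \otimes c \mapsto bc$, is an isomorphism of graded algebras. -/
open scoped TensorProduct

/-- The grading on the endomorphism algebra `END(V)` of a graded vector space `V`:
an endomorphism has degree `n` iff it maps each homogeneous piece `V_m`
into `V_{n+m}`. -/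
def endGrade (F V : Type*) [Field F] [AddCommGroup V] [Module F V]
    (ℬ : ℤ → Submodule F V) (n : ℤ) : Submodule F (Module.End F V) where
  carrier := {g | ∀ (m : ℤ), ∀ v ∈ ℬ m, g v ∈ ℬ (n + m)}
  add_mem' := by
    intro g h hg hh m v hv
    simpa using Submodule.add_mem _ (hg m v hv) (hh m v hv)
  zero_mem' := by
    intro m v hv
    simp only [Set.mem_setOf_eq, LinearMap.zero_apply] at *
    exact Submodule.zero_mem (ℬ (n + m))
  smul_mem' := by
    intro c g hg m v hv
    simpa using Submodule.smul_mem _ c (hg m v hv)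


set_option maxHeartbeats 1000000 in
set_option synthInstance.maxHeartbeats 400000 in
theorem centralizer_lift_bijective (F A : Type*) [Field F] [Ring A] [Algebra F A]
    (n : ℕ) (B : Subalgebra F A) (Φ : B ≃ₐ[F] Matrix (Fin n) (Fin n) F) :
    Function.Bijective
      (Algebra.TensorProduct.lift B.val (Subalgebra.centralizer F (B : Set A)).val
        (fun b c => (c.2 b b.2 : (b : A) * (c : A) = (c : A) * (b : A)))) := by
  classical
  set C := Subalgebra.centralizer F (B : Set A) with hCdef
  set L : B ⊗[F] C →ₐ[F] A := Algebra.TensorProduct.lift B.val C.val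
      (fun b c => (c.2 b b.2 : (b : A) * (c : A) = (c : A) * (b : A))) with hLdef
  -- matrix units
  set E : Fin n → Fin n → B := fun i j => Φ.symm (Matrix.single i j 1) with hEdef
  have hmul : ∀ i j k l : Fin n, (E i j) * (E k l) = if j = k then E i l else 0 := by
    intro i j k l
    by_cases h : j = k
    · subst h
      rw [if_pos rfl, hEdef]
      rw [← map_mul, Matrix.single_mul_single_same, one_mul]
    · rw [if_neg h, hEdef]
      rw [← map_mul, Matrix.single_mul_single_of_ne (h := h), map_zero]
  have hmulA : ∀ i j k l : Fin n,
      (E i j : A) * (E k l : A) = if j = k then (E i l : A) else 0 := by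
    intro i j k l
    have h := congrArg (B.val) (hmul i j k l)
    simpa only [map_mul, apply_ite B.val, map_zero, Subalgebra.coe_val] using h
  have hsum1 : (∑ i, E i i) = 1 := by
    have h1 : (∑ i : Fin n, Matrix.single i i (1 : F)) = 1 := by
      ext a b
      simp [Matrix.sum_apply, Matrix.single, Matrix.one_apply, ite_and, eq_comm]
    have h2 : (∑ i, E i i) = Φ.symm (∑ i, Matrix.single i i 1) := by
      rw [map_sum]
    rw [h2, h1, map_one]
  have hsum1A : (∑ i, (E i i : A)) = 1 := by
    have h := congrArg (B.val) hsum1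
    simpa only [map_sum, map_one, Subalgebra.coe_val] using h
  have hspan : ∀ b : B, b = ∑ i, ∑ j, (Φ b) i j • E i j := by
    intro b
    conv_lhs => rw [← Φ.symm_apply_apply b, Matrix.matrix_eq_sum_single (Φ b)]
    rw [map_sum]
    refine Finset.sum_congr rfl fun i _ => ?_
    rw [map_sum]
    refine Finset.sum_congr rfl fun j _ => ?_
    rw [show Matrix.single i j ((Φ b) i j)
        = (Φ b) i j • Matrix.single i j (1 : F) from by
          rw [Matrix.smul_single, smul_eq_mul, mul_one], map_smul]
  have hspanA : ∀ b : B, (b : A) = ∑ i, ∑ j, (Φ b) i j • (E i j : A) := by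
    intro b
    have h := congrArg (B.val) (hspan b)
    simpa only [map_sum, map_smul, Subalgebra.coe_val] using h
  -- the centralizer components
  set f : A → Fin n → Fin n → A := fun a i j => ∑ k, (E k i : A) * a * (E j k : A) with hfdef
  have hleft : ∀ (a : A) (i j p q : Fin n),
      (E p q : A) * f a i j = (E p i : A) * a * (E j q : A) := by
    intro a i j p q
    rw [hfdef]
    simp only [Finset.mul_sum]
    have hterm : ∀ k, (E p q : A) * ((E k i : A) * a * (E j k : A)) =
        if q = k then (E p i : A) * a * (E j k : A) else 0 := by
      intro k
      rw [← mul_assoc, ← mul_assoc, hmulA p q k i, ite_mul, ite_mul, zero_mul, zero_mul]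
    rw [Finset.sum_congr rfl fun k _ => hterm k, Finset.sum_ite_eq]
    simp
  have hright : ∀ (a : A) (i j p q : Fin n),
      f a i j * (E p q : A) = (E p i : A) * a * (E j q : A) := by
    intro a i j p q
    rw [hfdef]
    simp only [Finset.sum_mul]
    have hterm : ∀ k, (E k i : A) * a * (E j k : A) * (E p q : A) =
        if k = p then (E k i : A) * a * (E j q : A) else 0 := by
      intro k
      rw [mul_assoc ((E k i : A) * a), hmulA j k p q, mul_ite, mul_zero]
    rw [Finset.sum_congr rfl fun k _ => hterm k, Finset.sum_ite_eq',
      if_pos (Finset.mem_univ p)]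
  have hcommE : ∀ (a : A) (i j p q : Fin n),
      (E p q : A) * f a i j = f a i j * (E p q : A) := by
    intro a i j p q
    rw [hleft, hright]
  have hmem : ∀ (a : A) (i j : Fin n), f a i j ∈ C := by
    intro a i j
    rw [hCdef, Subalgebra.mem_centralizer_iff]
    intro m hm
    have hb : m = ∑ p, ∑ q, (Φ ⟨m, hm⟩) p q • (E p q : A) := hspanA ⟨m, hm⟩
    rw [hb, Finset.sum_mul, Finset.mul_sum]
    refine Finset.sum_congr rfl fun p _ => ?_
    rw [Finset.sum_mul, Finset.mul_sum]
    refine Finset.sum_congr rfl fun q _ => ?_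
    rw [smul_mul_assoc, mul_smul_comm, hcommE]
  set fC : A → Fin n → Fin n → C := fun a i j => ⟨f a i j, hmem a i j⟩ with hfCdef
  have fC_add : ∀ (a a' : A) (i j : Fin n), fC (a + a') i j = fC a i j + fC a' i j := by
    intro a a' i j
    apply Subtype.ext
    show f (a + a') i j = f a i j + f a' i j
    rw [hfdef]
    simp only [← Finset.sum_add_distrib]
    exact Finset.sum_congr rfl fun k _ => by rw [mul_add, add_mul]
  have fC_smul : ∀ (s : F) (a : A) (i j : Fin n), fC (s • a) i j = s • fC a i j := by
    intro s a i j
    apply Subtype.ext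
    show f (s • a) i j = s • f a i j
    rw [hfdef]
    simp only [Finset.smul_sum]
    exact Finset.sum_congr rfl fun k _ => by rw [mul_smul_comm, smul_mul_assoc]
  set g : A →ₗ[F] B ⊗[F] C :=
    { toFun := fun a => ∑ i, ∑ j, (E i j) ⊗ₜ[F] (fC a i j)
      map_add' := by
        intro a a'
        show (∑ i, ∑ j, (E i j) ⊗ₜ[F] fC (a + a') i j)
            = (∑ i, ∑ j, (E i j) ⊗ₜ[F] fC a i j) + ∑ i, ∑ j, (E i j) ⊗ₜ[F] fC a' i j
        rw [← Finset.sum_add_distrib]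
        refine Finset.sum_congr rfl fun i _ => ?_
        rw [← Finset.sum_add_distrib]
        refine Finset.sum_congr rfl fun j _ => ?_
        rw [fC_add, TensorProduct.tmul_add]
      map_smul' := by
        intro s a
        show (∑ i, ∑ j, (E i j) ⊗ₜ[F] fC (s • a) i j)
            = (RingHom.id F) s • ∑ i, ∑ j, (E i j) ⊗ₜ[F] fC a i j
        rw [RingHom.id_apply, Finset.smul_sum]
        refine Finset.sum_congr rfl fun i _ => ?_
        rw [Finset.smul_sum]
        refine Finset.sum_congr rfl fun j _ => ?_
        rw [fC_smul, TensorProduct.tmul_smul] } with hgdef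
  have hg_apply : ∀ a : A, g a = ∑ i, ∑ j, (E i j) ⊗ₜ[F] (fC a i j) := fun a => rfl
  have hLg : ∀ a : A, L (g a) = a := by
    intro a
    rw [hg_apply, map_sum]
    have h1 : ∀ i : Fin n, L (∑ j, (E i j) ⊗ₜ[F] fC a i j)
        = ∑ j, (E i i : A) * a * (E j j : A) := by
      intro i
      rw [map_sum]
      refine Finset.sum_congr rfl fun j _ => ?_
      rw [hLdef]; erw [Algebra.TensorProduct.lift_tmul]
      show (E i j : A) * f a i j = _
      rw [hleft]
    rw [Finset.sum_congr rfl fun i _ => h1 i]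
    calc (∑ i, ∑ j, (E i i : A) * a * (E j j : A))
        = ∑ i, (E i i : A) * a := by
          refine Finset.sum_congr rfl fun i _ => ?_
          rw [← Finset.mul_sum, hsum1A, mul_one]
      _ = a := by rw [← Finset.sum_mul, hsum1A, one_mul]
  have hg_tensor : ∀ (p q : Fin n) (c : C), g ((E p q : A) * (c : A)) = (E p q) ⊗ₜ[F] c := by
    intro p q c
    have hf : ∀ i j, f ((E p q : A) * (c : A)) i j = if i = p ∧ q = j then (c : A) else 0 := by
      intro i j
      have hterm : ∀ k, (E k i : A) * ((E p q : A) * (c : A)) * (E j k : A)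
          = if i = p ∧ q = j then (E k k : A) * (c : A) else 0 := by
        intro k
        have hc : (c : A) * (E j k : A) = (E j k : A) * (c : A) := (c.2 _ (E j k).2).symm
        rw [← mul_assoc ((E k i : A)) ((E p q : A)) ((c : A)),
          mul_assoc ((E k i : A) * (E p q : A)) ((c : A)) ((E j k : A)), hc,
          ← mul_assoc, hmulA k i p q, ite_mul, zero_mul, ite_mul, zero_mul, hmulA k q j k]
        by_cases h1 : i = p <;> by_cases h2 : q = j <;> simp [h1, h2]
      rw [hfdef]
      show (∑ k, (E k i : A) * ((E p q : A) * (c : A)) * (E j k : A)) = _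
      rw [Finset.sum_congr rfl fun k _ => hterm k]
      by_cases hP : i = p ∧ q = j
      · simp only [if_pos hP, ← Finset.sum_mul, hsum1A, one_mul]
      · simp only [if_neg hP, Finset.sum_const_zero]
    have hfc : ∀ i j, fC ((E p q : A) * (c : A)) i j = if i = p ∧ q = j then c else 0 := by
      intro i j
      apply Subtype.ext
      show f ((E p q : A) * (c : A)) i j = _
      rw [hf i j]
      split_ifs
      · rfl
      · simp
    rw [hg_apply]
    have hsummand : ∀ i j, (E i j) ⊗ₜ[F] fC ((E p q : A) * (c : A)) i j
        = if i = p ∧ q = j then (E i j) ⊗ₜ[F] c else 0 := by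
      intro i j
      rw [hfc i j]
      by_cases h : i = p ∧ q = j
      · rw [if_pos h, if_pos h]
      · rw [if_neg h, if_neg h, TensorProduct.tmul_zero]
    rw [Finset.sum_congr rfl fun i _ => Finset.sum_congr rfl fun j _ => hsummand i j,
      Finset.sum_eq_single p
        (fun i _ hi => Finset.sum_eq_zero fun j _ => if_neg fun h => hi h.1)
        (fun h => absurd (Finset.mem_univ p) h),
      Finset.sum_eq_single q (fun j _ hj => if_neg fun h => hj h.2.symm)
        (fun h => absurd (Finset.mem_univ q) h),
      if_pos ⟨rfl, rfl⟩]
  have hgL_tensor : ∀ (b : B) (c : C), g ((b : A) * (c : A)) = b ⊗ₜ[F] c := by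
    intro b c
    conv_lhs => rw [hspanA b]
    rw [Finset.sum_mul, map_sum]
    rw [Finset.sum_congr rfl fun p _ => by rw [Finset.sum_mul, map_sum]]
    have h1 : ∀ (p q : Fin n), g (((Φ b) p q • (E p q : A)) * (c : A))
        = (Φ b) p q • ((E p q) ⊗ₜ[F] c) := by
      intro p q
      rw [smul_mul_assoc, map_smul, hg_tensor]
    rw [Finset.sum_congr rfl fun p _ => Finset.sum_congr rfl fun q _ => h1 p q]
    conv_rhs => rw [hspan b]
    rw [TensorProduct.sum_tmul]
    refine Finset.sum_congr rfl fun p _ => ?_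
    rw [TensorProduct.sum_tmul]
    refine Finset.sum_congr rfl fun q _ => ?_
    rw [TensorProduct.smul_tmul']
  have hgL : ∀ x : B ⊗[F] C, g (L x) = x := by
    intro x
    induction x using TensorProduct.induction_on with
    | zero => rw [map_zero, map_zero]
    | tmul b c =>
      rw [hLdef]; erw [Algebra.TensorProduct.lift_tmul]
      exact hgL_tensor b c
    | add x y hx hy => rw [map_add, map_add, hx, hy]
  exact ⟨Function.LeftInverse.injective hgL, fun a => ⟨g a, hLg a⟩⟩

/-- Let `A` be a finite-dimensional graded algebra over a field `F`, and `B` a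
unital graded subalgebra isomorphic, as a graded algebra, to `END(V)` for a
finite-dimensional graded vector space `V`.  Then multiplication induces an
isomorphism of graded algebras `B ⊗ C_A(B) ≅ A`. -/
theorem graded_subalgebra_tensor_centralizer (F A V : Type*) [Field F] [Ring A]
    [Algebra F A] [FiniteDimensional F A] [AddCommGroup V] [Module F V]
    [FiniteDimensional F V]
    (𝒜 : ℤ → Submodule F A) [GradedAlgebra 𝒜]
    (ℬ : ℤ → Submodule F V) [DirectSum.Decomposition ℬ]
    (B : Subalgebra F A)
    (hBgraded : ∀ b ∈ B, ∀ n : ℤ, (DirectSum.decompose 𝒜 b n : A) ∈ B)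
    (φ : B ≃ₐ[F] Module.End F V)
    (hφ : ∀ (b : B) (n : ℤ), (b : A) ∈ 𝒜 n ↔ φ b ∈ endGrade F V ℬ n) :
    Function.Bijective
      (Algebra.TensorProduct.lift B.val (Subalgebra.centralizer F (B : Set A)).val
        (fun b c => (c.2 b b.2 : (b : A) * (c : A) = (c : A) * (b : A)))) ∧
      (∀ (n m : ℤ) (b : B) (c : Subalgebra.centralizer F (B : Set A)),
        (b : A) ∈ 𝒜 n → (c : A) ∈ 𝒜 m → (b : A) * (c : A) ∈ 𝒜 (n + m)) := by
  refine ⟨?_, fun n m b c hb hc => SetLike.mul_mem_graded hb hc⟩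
  exact centralizer_lift_bijective F A (Module.finrank F V) B
    (φ.trans (algEquivMatrix (Module.finBasis F V)))
end

section
/- Let $A$ be a finite-dimensional graded algebra over a field $F$, $B$ a unital graded subalgebra of $A$ isomorphic as graded algebra to $\mathrm{END}(V)$ for a finite-dimensional graded vector space $V$, $C = C_A(B)$, and $\varepsilon$ a homogeneous primitive idempotent of $B$. Then the map $C \to \varepsilon A \varepsilon$, $c \mapsto \varepsilon c$, is an isomorphism of graded algebras. -/
lemma rank_one_of_primitive {F V : Type*} [Field F] [AddCommGroup V] [Module F V]
    (p : Module.End F V) (hp : IsIdempotentElem p) (hp0 : p ≠ 0)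
    (hprim : ∀ e₁ e₂ : Module.End F V, IsIdempotentElem e₁ → IsIdempotentElem e₂ →
      e₁ * e₂ = 0 → e₂ * e₁ = 0 → p = e₁ + e₂ → e₁ = 0 ∨ e₂ = 0) :
    ∃ (w₀ : V) (f : V →ₗ[F] F), w₀ ≠ 0 ∧ f w₀ = 1 ∧ p w₀ = w₀ ∧
      ∀ x, p x = f (p x) • w₀ := by
  -- find w₀
  have hx : ∃ x, p x ≠ 0 := by
    by_contra h
    push_neg at h
    exact hp0 (LinearMap.ext fun x => h x)
  obtain ⟨x, hx⟩ := hx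
  set w₀ := p x with hw₀def
  have hpw₀ : p w₀ = w₀ := by
    have := congrArg (fun q : Module.End F V => q x) hp
    simpa [Module.End.mul_apply] using this
  -- dual functional
  have hf : ∃ f : Module.Dual F V, f w₀ ≠ 0 := by
    by_contra h
    push_neg at h
    exact hx ((Module.forall_dual_apply_eq_zero_iff F w₀).mp h)
  obtain ⟨f₀, hf₀⟩ := hf
  set f : V →ₗ[F] F := (f₀ w₀)⁻¹ • f₀ with hfdef
  have hfw₀ : f w₀ = 1 := by
    simp [hfdef, inv_mul_cancel₀ hf₀]
  -- the splitting idempotents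
  set e₁ : Module.End F V := LinearMap.smulRight (f ∘ₗ p) w₀ with he₁def
  have he₁app : ∀ y, e₁ y = f (p y) • w₀ := fun y => rfl
  have he₁w₀ : e₁ w₀ = w₀ := by rw [he₁app, hpw₀, hfw₀, one_smul]
  have he₁ne : e₁ ≠ 0 := by
    intro h
    apply hx
    rw [← hw₀def] at *
    have := he₁w₀
    rw [h] at this
    simpa using this.symm
  have he₁p : e₁ * p = e₁ := by
    ext y
    have : p (p y) = p y := by
      have := congrArg (fun q : Module.End F V => q y) hp
      simpa [Module.End.mul_apply] using this
    simp [Module.End.mul_apply, he₁app, this]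
  have hpe₁ : p * e₁ = e₁ := by
    ext y
    simp [Module.End.mul_apply, he₁app, hpw₀]
  have he₁idem : IsIdempotentElem e₁ := by
    unfold IsIdempotentElem
    ext y
    simp [Module.End.mul_apply, he₁app, hpw₀, hfw₀, smul_smul]
  have he₂idem : IsIdempotentElem (p - e₁) := by
    unfold IsIdempotentElem
    rw [sub_mul, mul_sub, mul_sub, hp.eq, hpe₁, he₁p, he₁idem.eq]
    abel
  have h12 : e₁ * (p - e₁) = 0 := by rw [mul_sub, he₁p, he₁idem.eq, sub_self]
  have h21 : (p - e₁) * e₁ = 0 := by rw [sub_mul, hpe₁, he₁idem.eq, sub_self]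
  have hsum : p = e₁ + (p - e₁) := by abel
  rcases hprim e₁ (p - e₁) he₁idem he₂idem h12 h21 hsum with h | h
  · exact absurd h he₁ne
  · have hpe : p = e₁ := by
      have := sub_eq_zero.mp h
      exact this
    refine ⟨w₀, f, ?_, hfw₀, hpw₀, ?_⟩
    · intro h0; apply hx; rw [← hw₀def] at *; exact h0
    · intro y
      conv_lhs => rw [hpe]
      exact he₁app y

lemma endV_units {F V : Type*} [Field F] [AddCommGroup V] [Module F V]
    [FiniteDimensional F V]
    (p : Module.End F V) (w₀ : V) (f : V →ₗ[F] F) (hfw₀ : f w₀ = 1)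
    (hpw₀ : p w₀ = w₀) (hkey : ∀ x, p x = f (p x) • w₀) :
    ∃ (n : ℕ) (g h : Fin n → Module.End F V),
      (∑ i, g i * p * h i) = 1 ∧
      (∀ i j, p * h i * (g j * p) = (if i = j then (1:F) else 0) • p) ∧
      (∀ G : Module.End F V, p * G * p = f (p (G w₀)) • p) := by
  set n := Module.finrank F V with hn
  set bV : Module.Basis (Fin n) F V := Module.finBasis F V with hbV
  refine ⟨n, fun i => f.smulRight (bV i), fun i => (bV.coord i).smulRight w₀,
    ?_, ?_, ?_⟩
  · ext x
    rw [LinearMap.sum_apply]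
    have : ∀ i : Fin n,
        (f.smulRight (bV i) * p * (bV.coord i).smulRight w₀) x
          = bV.repr x i • bV i := by
      intro i
      simp [Module.End.mul_apply, hpw₀, hfw₀, Module.Basis.coord_apply, smul_smul]
    rw [Finset.sum_congr rfl fun i _ => this i]
    simpa using bV.sum_repr x
  · intro i j
    ext x
    have h1 : p x = f (p x) • w₀ := hkey x
    simp only [Module.End.mul_apply, LinearMap.smul_apply, LinearMap.smulRight_apply,
      Module.Basis.coord_apply]
    rw [h1]
    simp [hfw₀, hpw₀, Module.Basis.repr_self_apply, smul_smul]
    by_cases hij : i = j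
    · simp [hij, mul_comm]
    · simp only [hij, if_false]
      have hji : j ≠ i := fun h => hij h.symm
      rw [Finsupp.single_apply, if_neg hji, zero_smul]
  · intro G
    ext x
    have h1 : p x = f (p x) • w₀ := hkey x
    simp only [Module.End.mul_apply, LinearMap.smul_apply]
    rw [h1]
    simp only [map_smul, smul_eq_mul]
    rw [hkey (G w₀)]
    simp [smul_smul, mul_comm, hfw₀]


/-- Let `A` be a finite-dimensional graded algebra over a field `F`, `B` a unital
graded subalgebra isomorphic as a graded algebra to `END(V)` for a
finite-dimensional graded vector space `V`, `C = C_A(B)` the centralizer, and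
`ε` a homogeneous primitive idempotent of `B`.  Then `c ↦ ε c` is an isomorphism
of graded algebras from `C` onto the idempotent truncation `ε A ε`. -/
theorem centralizer_iso_idempotent_truncation (F A V : Type*) [Field F] [Ring A]
    [Algebra F A] [FiniteDimensional F A] [AddCommGroup V] [Module F V]
    [FiniteDimensional F V]
    (𝒜 : ℤ → Submodule F A) [GradedAlgebra 𝒜]
    (ℬ : ℤ → Submodule F V) [DirectSum.Decomposition ℬ]
    (B : Subalgebra F A)
    (hBgraded : ∀ b ∈ B, ∀ n : ℤ, (DirectSum.decompose 𝒜 b n : A) ∈ B)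
    (φ : B ≃ₐ[F] Module.End F V)
    (hφ : ∀ (b : B) (n : ℤ), (b : A) ∈ 𝒜 n ↔ φ b ∈ endGrade F V ℬ n)
    (ε : B) (hεhom : ∃ n : ℤ, (ε : A) ∈ 𝒜 n)
    (hidem : IsIdempotentElem ε) (hne : ε ≠ 0)
    (hprim : ∀ e₁ e₂ : B, IsIdempotentElem e₁ → IsIdempotentElem e₂ →
      e₁ * e₂ = 0 → e₂ * e₁ = 0 → ε = e₁ + e₂ → e₁ = 0 ∨ e₂ = 0) :
    Function.Injective
        (fun c : Subalgebra.centralizer F (B : Set A) => (ε : A) * (c : A)) ∧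
      Set.range (fun c : Subalgebra.centralizer F (B : Set A) =>
          (ε : A) * (c : A)) =
        {x : A | ∃ a : A, x = (ε : A) * a * (ε : A)} ∧
      (∀ c c' : Subalgebra.centralizer F (B : Set A),
        (ε : A) * ((c : A) * (c' : A)) =
          ((ε : A) * (c : A)) * ((ε : A) * (c' : A))) ∧
      (∀ (c : Subalgebra.centralizer F (B : Set A)) (n : ℤ),
        (c : A) ∈ 𝒜 n → (ε : A) * (c : A) ∈ 𝒜 n) := by
  classical
  -- notation
  set E : A := (ε : A) with hEdef
  have hE0 : E ≠ 0 := by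
    intro h
    exact hne (Subtype.ext h)
  have hEE : E * E = E := by
    have := congrArg (Subtype.val) hidem.eq
    simpa using this
  have hEB : E ∈ B := ε.2
  -- transport to End V
  set p : Module.End F V := φ ε with hpdef
  have hpidem : IsIdempotentElem p := by
    unfold IsIdempotentElem
    rw [hpdef, ← map_mul, hidem.eq]
  have hp0 : p ≠ 0 := by
    intro h
    apply hne
    have : φ ε = φ 0 := by rw [← hpdef, h, map_zero]
    exact φ.injective this
  have hprimp : ∀ e₁ e₂ : Module.End F V, IsIdempotentElem e₁ →
      IsIdempotentElem e₂ → e₁ * e₂ = 0 → e₂ * e₁ = 0 → p = e₁ + e₂ →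
      e₁ = 0 ∨ e₂ = 0 := by
    intro e₁ e₂ h1 h2 h12 h21 hsum
    have k1 : IsIdempotentElem (φ.symm e₁) := by
      unfold IsIdempotentElem; rw [← map_mul, h1.eq]
    have k2 : IsIdempotentElem (φ.symm e₂) := by
      unfold IsIdempotentElem; rw [← map_mul, h2.eq]
    have k12 : φ.symm e₁ * φ.symm e₂ = 0 := by rw [← map_mul, h12, map_zero]
    have k21 : φ.symm e₂ * φ.symm e₁ = 0 := by rw [← map_mul, h21, map_zero]
    have ksum : ε = φ.symm e₁ + φ.symm e₂ := by
      have : φ.symm p = φ.symm (e₁ + e₂) := congrArg _ hsum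
      rw [hpdef, φ.symm_apply_apply, map_add] at this
      exact this
    rcases hprim _ _ k1 k2 k12 k21 ksum with h | h
    · left
      have : φ.symm e₁ = φ.symm 0 := by rw [h, map_zero]
      exact φ.symm.injective this
    · right
      have : φ.symm e₂ = φ.symm 0 := by rw [h, map_zero]
      exact φ.symm.injective this
  obtain ⟨w₀, f, hw₀, hfw₀, hpw₀, hkey⟩ :=
    rank_one_of_primitive p hpidem hp0 hprimp
  obtain ⟨n, g, h, R1V, R2V, R3V⟩ := endV_units p w₀ f hfw₀ hpw₀ hkey
  -- pull back to B and to A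
  set U : Fin n → A := fun i => ((φ.symm (g i) : B) : A) with hUdef
  set Vl : Fin n → A := fun i => ((φ.symm (h i) : B) : A) with hVdef
  have hUB : ∀ i, U i ∈ B := fun i => (φ.symm (g i)).2
  have hVB : ∀ i, Vl i ∈ B := fun i => (φ.symm (h i)).2
  have R1A : (∑ i, U i * E * Vl i) = (1 : A) := by
    have : (∑ i, φ.symm (g i) * ε * φ.symm (h i)) = (1 : B) := by
      apply φ.injective
      rw [map_sum, map_one, ← R1V]
      apply Finset.sum_congr rfl
      intro i _
      rw [map_mul, map_mul, φ.apply_symm_apply, φ.apply_symm_apply, ← hpdef]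
    have := congrArg (Subtype.val) this
    simpa using this
  have R2A : ∀ i j, E * (Vl i * (U j * E)) =
      if i = j then E else 0 := by
    intro i j
    have : ε * φ.symm (h i) * (φ.symm (g j) * ε) =
        if i = j then ε else 0 := by
      apply φ.injective
      rw [map_mul, map_mul, map_mul, φ.apply_symm_apply,
        φ.apply_symm_apply, ← hpdef, R2V, apply_ite φ]
      split_ifs <;> simp [hpdef]
    have := congrArg (Subtype.val) this
    simpa [mul_assoc, apply_ite] using this
  have R3A : ∀ b : B, ε * b * ε = f (p (φ b w₀)) • ε := by
    intro b
    apply φ.injective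
    rw [map_smul, map_mul, map_mul, ← hpdef, R3V]
  have R3A' : ∀ b ∈ B, ∃ lam : F, E * (b * E) = lam • E := by
    intro b hb
    refine ⟨f (p (φ ⟨b, hb⟩ w₀)), ?_⟩
    have := congrArg (Subtype.val) (R3A ⟨b, hb⟩)
    simpa [mul_assoc] using this
  -- centralizer commuting facts
  have hcomm : ∀ (c : Subalgebra.centralizer F (B : Set A)), ∀ b ∈ B,
      b * (c : A) = (c : A) * b := by
    intro c b hb
    exact (Subalgebra.mem_centralizer_iff F).mp c.2 b hb
  -- key reconstruction identity
  have hrecon : ∀ (c : Subalgebra.centralizer F (B : Set A)),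
      (c : A) = ∑ i, U i * ((E * c) * Vl i) := by
    intro c
    calc (c : A) = (∑ i, U i * E * Vl i) * c := by rw [R1A, one_mul]
    _ = ∑ i, U i * E * Vl i * (c : A) := by rw [Finset.sum_mul]
    _ = ∑ i, U i * ((E * c) * Vl i) := by
        apply Finset.sum_congr rfl
        intro i _
        have hvc : Vl i * (c : A) = (c : A) * Vl i := hcomm c _ (hVB i)
        simp only [mul_assoc]
        rw [hvc]
  refine ⟨?_, ?_, ?_, ?_⟩
  · -- injectivity
    intro c c' hcc
    simp only at hcc
    apply Subtype.ext
    rw [hrecon c, hrecon c', hcc]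
  · -- range
    ext x
    constructor
    · rintro ⟨c, rfl⟩
      refine ⟨c, ?_⟩
      simp only
      rw [mul_assoc, ← hcomm c E hEB, ← mul_assoc, hEE]
    · rintro ⟨a, rfl⟩
      set X : A := E * a * E with hXdef
      set cA : A := ∑ i, U i * (X * Vl i) with hcAdef
      have hXl : ∀ j k, E * (Vl j * (U k * X)) = if j = k then X else 0 := by
        intro j k
        have e : E * (Vl j * (U k * X)) = (E * (Vl j * (U k * E))) * (a * E) := by
          rw [hXdef]; simp only [mul_assoc]
        rw [e, R2A]
        split_ifs
        · rw [hXdef]; simp only [mul_assoc]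
        · rw [zero_mul]
      have hXr : ∀ k i, X * (Vl k * (U i * E)) = if k = i then X else 0 := by
        intro k i
        have e : X * (Vl k * (U i * E)) = E * a * (E * (Vl k * (U i * E))) := by
          rw [hXdef]; simp only [mul_assoc]
        rw [e, R2A]
        split_ifs
        · rw [hXdef]
        · rw [mul_zero]
      -- centralizer membership
      have hcA_mem : cA ∈ Subalgebra.centralizer F (B : Set A) := by
        rw [Subalgebra.mem_centralizer_iff]
        intro b hb
        have hβ : ∀ i j, ∃ lam : F, E * (Vl i * (b * (U j * E))) = lam • E := by
          intro i j
          obtain ⟨lam, hl⟩ := R3A' (Vl i * (b * U j))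
            (mul_mem (hVB i) (mul_mem hb (hUB j)))
          exact ⟨lam, by simpa [mul_assoc] using hl⟩
        choose β hβ using hβ
        have hbexp : b = ∑ i, ∑ j, β i j • (U i * (E * Vl j)) := by
          calc b = (∑ i, U i * E * Vl i) * b * (∑ j, U j * E * Vl j) := by
                rw [R1A, one_mul, mul_one]
          _ = ∑ i, ∑ j, (U i * E * Vl i) * b * (U j * E * Vl j) := by
                rw [Finset.sum_mul, Finset.sum_mul]
                exact Finset.sum_congr rfl fun i _ => by rw [Finset.mul_sum]
          _ = ∑ i, ∑ j, β i j • (U i * (E * Vl j)) := by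
                refine Finset.sum_congr rfl fun i _ => ?_
                refine Finset.sum_congr rfl fun j _ => ?_
                have e : (U i * E * Vl i) * b * (U j * E * Vl j)
                    = U i * (E * (Vl i * (b * (U j * E))) * Vl j) := by
                  simp only [mul_assoc]
                rw [e, hβ, smul_mul_assoc, mul_smul_comm]
        have hbc : b * cA = ∑ i, ∑ j, β i j • (U i * (X * Vl j)) := by
          conv_lhs => rw [hbexp, hcAdef]
          rw [Finset.sum_mul]
          refine Finset.sum_congr rfl fun i _ => ?_
          rw [Finset.sum_mul]
          refine Finset.sum_congr rfl fun j _ => ?_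
          rw [Finset.mul_sum]
          have e : ∀ k, (β i j • (U i * (E * Vl j))) * (U k * (X * Vl k))
              = β i j • (U i * ((if j = k then X else 0) * Vl k)) := by
            intro k
            rw [← hXl j k]
            simp only [smul_mul_assoc, mul_assoc]
          rw [Finset.sum_congr rfl fun k _ => e k]
          have e2 : ∀ k, β i j • (U i * ((if j = k then X else 0) * Vl k))
              = if j = k then β i j • (U i * (X * Vl k)) else 0 := by
            intro k
            split_ifs <;> simp
          rw [Finset.sum_congr rfl fun k _ => e2 k, Finset.sum_ite_eq]
          simp
        have hcb : cA * b = ∑ i, ∑ j, β i j • (U i * (X * Vl j)) := by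
          conv_lhs => rw [hbexp, hcAdef]
          rw [Finset.sum_mul]
          have e0 : ∀ k, (U k * (X * Vl k)) * (∑ i, ∑ j, β i j • (U i * (E * Vl j)))
              = ∑ j, β k j • (U k * (X * Vl j)) := by
            intro k
            rw [Finset.mul_sum]
            have e1 : ∀ i, (U k * (X * Vl k)) * (∑ j, β i j • (U i * (E * Vl j)))
                = ∑ j, β i j • (U k * ((if k = i then X else 0) * Vl j)) := by
              intro i
              rw [Finset.mul_sum]
              refine Finset.sum_congr rfl fun j _ => ?_
              rw [← hXr k i]
              simp only [mul_smul_comm, mul_assoc]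
            rw [Finset.sum_congr rfl fun i _ => e1 i]
            have e2 : ∀ i, (∑ j, β i j • (U k * ((if k = i then X else 0) * Vl j)))
                = if k = i then ∑ j, β i j • (U k * (X * Vl j)) else 0 := by
              intro i
              split_ifs <;> simp
            rw [Finset.sum_congr rfl fun i _ => e2 i, Finset.sum_ite_eq]
            simp
          rw [Finset.sum_congr rfl fun k _ => e0 k]
        rw [hbc, hcb]
      -- scalars
      choose lam hlam using fun i => R3A' (U i) (hUB i)
      choose mu hmu using fun i => R3A' (Vl i) (hVB i)
      have hsum1 : (∑ i, lam i * mu i) = 1 := by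
        have hE1 : E = ∑ i, (lam i * mu i) • E := by
          calc E = E * (1 * E) := by rw [one_mul, hEE]
          _ = ∑ i, (E * (U i * E)) * (Vl i * E) := by
                rw [← R1A, Finset.sum_mul, Finset.mul_sum]
                exact Finset.sum_congr rfl fun i _ => by simp only [mul_assoc]
          _ = ∑ i, (lam i * mu i) • E := by
                refine Finset.sum_congr rfl fun i _ => ?_
                rw [hlam, smul_mul_assoc, hmu, smul_smul]
        have : ((∑ i, lam i * mu i) - 1) • E = 0 := by
          rw [sub_smul, one_smul, Finset.sum_smul, ← hE1, sub_self]
        rcases smul_eq_zero.mp this with h' | h'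
        · exact sub_eq_zero.mp h'
        · exact absurd h' hE0
      refine ⟨⟨cA, hcA_mem⟩, ?_⟩
      simp only
      have hcomm' : E * cA = (E * cA) * E := by
        have h1 : E * cA = cA * E :=
          (Subalgebra.mem_centralizer_iff F).mp hcA_mem E hEB
        rw [h1, mul_assoc, hEE]
      calc E * cA = (E * cA) * E := hcomm'
      _ = ∑ i, (lam i * mu i) • X := by
            rw [hcAdef, Finset.mul_sum, Finset.sum_mul]
            refine Finset.sum_congr rfl fun i _ => ?_
            have e : (E * (U i * (X * Vl i))) * E
                = (E * (U i * E)) * (a * (E * (Vl i * E))) := by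
              rw [hXdef]; simp only [mul_assoc]
            rw [e, hlam, hmu, smul_mul_assoc, mul_smul_comm, mul_smul_comm,
              smul_smul, hXdef]
            simp only [mul_assoc]
      _ = E * a * E := by
            rw [← Finset.sum_smul, hsum1, one_smul, hXdef]
  · -- multiplicativity
    intro c c'
    have h1 : (c : A) * (E * (c' : A)) = E * ((c : A) * (c' : A)) := by
      rw [← mul_assoc, ← hcomm c E hEB, mul_assoc]
    calc E * ((c : A) * (c' : A))
        = E * (E * ((c : A) * (c' : A))) := by conv_lhs => rw [← hEE, mul_assoc]
      _ = E * ((c : A) * (E * (c' : A))) := by rw [h1]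
      _ = (E * (c : A)) * (E * (c' : A)) := by rw [← mul_assoc]
  · -- grading
    have hε0 : E ∈ 𝒜 0 := by
      obtain ⟨m, hm⟩ := hεhom
      have h2m : E ∈ 𝒜 (m + m) := by
        rw [← hEE]
        exact SetLike.mul_mem_graded hm hm
      by_cases hm0 : m = 0
      · rwa [hm0] at hm
      · exfalso
        apply hE0
        have e1 : (DirectSum.decompose 𝒜 E m : A) = E :=
          DirectSum.decompose_of_mem_same 𝒜 hm
        have e2 : (DirectSum.decompose 𝒜 E m : A) = 0 :=
          DirectSum.decompose_of_mem_ne 𝒜 h2m (by omega)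
        rw [← e1, e2]
    intro c m hc
    have := SetLike.mul_mem_graded hε0 hc
    simpa using this
end

section
/- For every integer $m \ge 0$, the sum over all partitions $\mu$ of $m$ of the square of the number of standard Young tableaux of shape $\mu$ equals $m!$. -/
/-- The multiset of row lengths of a finite set of cells. -/
def rowLensMultiset (S : Finset (ℕ × ℕ)) : Multiset ℕ :=
  (S.image Prod.fst).val.map fun a => (S.filter (fun c => c.1 = a)).card

namespace SYT

open Finset

/-- length of row `i` -/
def row (S : Finset (ℕ × ℕ)) (i : ℕ) : ℕ := (S.filter (fun c => c.1 = i)).card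

lemma mem_row_iff {S : Finset (ℕ × ℕ)} (hS : IsLowerSet (S : Set (ℕ × ℕ))) (i j : ℕ) :
    (i, j) ∈ S ↔ j < row S i := by
  have hlow : ∀ j' j'' : ℕ, j' ≤ j'' → (i, j'') ∈ S → (i, j') ∈ S := by
    intro j' j'' h hm
    exact hS (show ((i, j') : ℕ × ℕ) ≤ (i, j'') from ⟨le_refl i, h⟩) hm
  set T : Finset ℕ := (S.filter (fun c => c.1 = i)).image Prod.snd with hT
  have hTmem : ∀ j', j' ∈ T ↔ (i, j') ∈ S := by
    intro j'
    simp only [hT, mem_image, mem_filter]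
    constructor
    · rintro ⟨⟨a, b⟩, ⟨hab, rfl⟩, rfl⟩
      simpa using hab
    · intro h; exact ⟨(i, j'), ⟨h, rfl⟩, rfl⟩
  have hTcard : T.card = row S i := by
    rw [hT, row]
    apply Finset.card_image_of_injOn
    rintro ⟨a, b⟩ ha ⟨a', b'⟩ ha' (h : b = b')
    simp only [mem_coe, mem_filter] at ha ha'
    simp [Prod.ext_iff, ha.2, ha'.2, h]
  rw [← hTmem, ← hTcard]
  constructor
  · intro hj
    by_contra hlt
    push_neg at hlt
    -- T ⊆ range j would give card ≤ j; instead: j ∈ T, downward closed ⇒ range (j+1) ⊆ T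
    have : Finset.range (j + 1) ⊆ T := by
      intro x hx
      rw [Finset.mem_range, Nat.lt_succ_iff] at hx
      rw [hTmem]
      exact hlow x j hx ((hTmem j).1 hj)
    have := Finset.card_le_card this
    simp at this
    omega
  · intro hj
    by_contra hmem
    have hsub : T ⊆ Finset.range j := by
      intro x hx
      rw [Finset.mem_range]
      by_contra hge
      push_neg at hge
      exact hmem ((hTmem j).2 (hlow j x hge ((hTmem x).1 hx)))
    have := Finset.card_le_card hsub
    simp at this
    omega

lemma row_antitone {S : Finset (ℕ × ℕ)} (hS : IsLowerSet (S : Set (ℕ × ℕ))) :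
    Antitone (row S) := by
  intro i i' h
  by_contra hlt
  push_neg at hlt
  have : (i', row S i) ∈ S := (mem_row_iff hS _ _).2 hlt
  have : (i, row S i) ∈ S := hS (show ((i, row S i) : ℕ × ℕ) ≤ (i', row S i) from ⟨h, le_refl _⟩) this
  rw [mem_row_iff hS] at this
  omega

lemma eq_of_row_eq {S S' : Finset (ℕ × ℕ)} (hS : IsLowerSet (S : Set (ℕ × ℕ)))
    (hS' : IsLowerSet (S' : Set (ℕ × ℕ))) (h : ∀ i, row S i = row S' i) : S = S' := by
  ext ⟨i, j⟩
  rw [mem_row_iff hS, mem_row_iff hS', h]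

lemma subset_box {S : Finset (ℕ × ℕ)} (hS : IsLowerSet (S : Set (ℕ × ℕ))) :
    S ⊆ Finset.range S.card ×ˢ Finset.range S.card := by
  rintro ⟨i, j⟩ hij
  have hcol : (Finset.range (i + 1)).image (fun a => (a, j)) ⊆ S := by
    intro c hc
    simp only [mem_image, Finset.mem_range, Nat.lt_succ_iff] at hc
    obtain ⟨a, ha, rfl⟩ := hc
    exact hS (show ((a, j) : ℕ × ℕ) ≤ (i, j) from ⟨ha, le_refl _⟩) hij
  have hrow : (Finset.range (j + 1)).image (fun b => (i, b)) ⊆ S := by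
    intro c hc
    simp only [mem_image, Finset.mem_range, Nat.lt_succ_iff] at hc
    obtain ⟨b, hb, rfl⟩ := hc
    exact hS (show ((i, b) : ℕ × ℕ) ≤ (i, j) from ⟨le_refl _, hb⟩) hij
  have h1 : i + 1 ≤ S.card := by
    have := Finset.card_le_card hcol
    rwa [Finset.card_image_of_injective _ (fun a b (h : (a, j) = (b, j)) => by
      simpa using congrArg Prod.fst h), Finset.card_range] at this
  have h2 : j + 1 ≤ S.card := by
    have := Finset.card_le_card hrow
    rwa [Finset.card_image_of_injective _ (fun a b (h : (i, a) = (i, b)) => by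
      simpa using congrArg Prod.snd h), Finset.card_range] at this
  simp only [Finset.mem_product, Finset.mem_range]
  omega

attribute [local instance] Classical.propDecidable

/-- addable cells -/
noncomputable def add (S : Finset (ℕ × ℕ)) : Finset (ℕ × ℕ) :=
  (Finset.range (S.card + 1) ×ˢ Finset.range (S.card + 1)).filter
    (fun c => c ∉ S ∧ IsLowerSet (↑(insert c S) : Set (ℕ × ℕ)))

/-- removable cells -/
noncomputable def rem (S : Finset (ℕ × ℕ)) : Finset (ℕ × ℕ) :=
  S.filter (fun c => IsLowerSet (↑(S.erase c) : Set (ℕ × ℕ)))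

lemma mem_rem {S : Finset (ℕ × ℕ)} {c : ℕ × ℕ} :
    c ∈ rem S ↔ c ∈ S ∧ IsLowerSet (↑(S.erase c) : Set (ℕ × ℕ)) := by
  simp [rem]

lemma mem_add {S : Finset (ℕ × ℕ)} {c : ℕ × ℕ} :
    c ∈ add S ↔ c ∉ S ∧ IsLowerSet (↑(insert c S) : Set (ℕ × ℕ)) := by
  simp only [add, Finset.mem_filter, and_iff_right_iff_imp]
  rintro ⟨hc, hl⟩
  have hbox := subset_box hl (Finset.mem_insert_self c S)
  rw [Finset.card_insert_of_notMem hc] at hbox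
  exact hbox

lemma rem_iff {S : Finset (ℕ × ℕ)} (hS : IsLowerSet (S : Set (ℕ × ℕ))) {i j : ℕ} :
    (i, j) ∈ rem S ↔ 0 < row S i ∧ j = row S i - 1 ∧ row S (i + 1) < row S i := by
  rw [mem_rem]
  constructor
  · rintro ⟨hmem, herase⟩
    have hj : j < row S i := (mem_row_iff hS _ _).1 hmem
    have hnext : ¬ (i, j + 1) ∈ S := by
      intro h
      have h1 : (i, j + 1) ∈ S.erase (i, j) := by
        rw [Finset.mem_erase]; exact ⟨by simp, h⟩
      have h2 : (i, j) ∈ S.erase (i, j) :=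
        herase (show ((i, j) : ℕ × ℕ) ≤ (i, j + 1) from ⟨le_refl _, by omega⟩) h1
      simp at h2
    rw [mem_row_iff hS] at hnext
    have hbelow : ¬ (i + 1, j) ∈ S := by
      intro h
      have h1 : (i + 1, j) ∈ S.erase (i, j) := by
        rw [Finset.mem_erase]; exact ⟨by simp, h⟩
      have h2 : (i, j) ∈ S.erase (i, j) :=
        herase (show ((i, j) : ℕ × ℕ) ≤ (i + 1, j) from ⟨by omega, le_refl _⟩) h1
      simp at h2
    rw [mem_row_iff hS] at hbelow
    omega
  · rintro ⟨hpos, rfl, hlt⟩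
    have hmem : (i, row S i - 1) ∈ S := (mem_row_iff hS _ _).2 (by omega)
    refine ⟨hmem, ?_⟩
    intro c' c hle hc'
    simp only [Finset.coe_erase, Set.mem_diff, Set.mem_singleton_iff, Finset.mem_coe] at hc' ⊢
    obtain ⟨hcS, hcne⟩ := hc'
    refine ⟨hS hle hcS, ?_⟩
    rintro rfl
    obtain ⟨a, b⟩ := c'
    rw [Prod.mk_le_mk] at hle
    obtain ⟨ha, hb⟩ := hle
    have hbrow : b < row S a := (mem_row_iff hS _ _).1 hcS
    rcases Nat.lt_or_ge i a with h | h
    · have := row_antitone hS (show i + 1 ≤ a by omega)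
      omega
    · have : a = i := by omega
      subst this
      exact hcne (by have : b = row S a - 1 := by omega
                     rw [this])

lemma add_iff {S : Finset (ℕ × ℕ)} (hS : IsLowerSet (S : Set (ℕ × ℕ))) {i j : ℕ} :
    (i, j) ∈ add S ↔ j = row S i ∧ (i = 0 ∨ row S i < row S (i - 1)) := by
  rw [mem_add]
  constructor
  · rintro ⟨hnot, hins⟩
    have h1 : j < row (insert (i, j) S) i := by
      rw [← mem_row_iff hins]; exact Finset.mem_insert_self _ _
    have hrins : row (insert (i, j) S) i = row S i + 1 := by
      unfold row
      rw [Finset.filter_insert, if_pos rfl, Finset.card_insert_of_notMem (by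
        simp only [Finset.mem_filter]; tauto)]
    have hge : ¬ j < row S i := by
      rw [← mem_row_iff hS]; exact hnot
    have hj : j = row S i := by omega
    refine ⟨hj, ?_⟩
    rcases Nat.eq_zero_or_pos i with h0 | hpos
    · left; exact h0
    · right
      have hup : (i - 1, j) ∈ insert (i, j) S :=
        hins (show ((i - 1, j) : ℕ × ℕ) ≤ (i, j) from ⟨by omega, le_refl _⟩)
          (Finset.mem_insert_self _ _)
      rw [Finset.mem_insert] at hup
      rcases hup with h | h
      · exfalso; have := congrArg Prod.fst h; simp at this; omega
      · rw [mem_row_iff hS] at h; omega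
  · rintro ⟨rfl, hcond⟩
    have hnot : (i, row S i) ∉ S := by rw [mem_row_iff hS]; omega
    refine ⟨hnot, ?_⟩
    intro c' c hle hc
    simp only [Finset.coe_insert, Set.mem_insert_iff, Finset.mem_coe] at hc ⊢
    obtain ⟨a, b⟩ := c
    rcases hc with hc | hc
    · subst hc
      rw [Prod.mk_le_mk] at hle
      obtain ⟨ha, hb⟩ := hle
      rcases Nat.lt_or_ge a i with hai | hai
      · right
        rw [mem_row_iff hS]
        rcases hcond with h0 | h0
        · omega
        · have h1 := row_antitone hS (show a ≤ i - 1 by omega)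
          omega
      · have haa : a = i := by omega
        rcases Nat.lt_or_ge b (row S i) with hb' | hb'
        · right; rw [mem_row_iff hS, haa]; exact hb'
        · left
          have hbb : b = row S i := by omega
          rw [haa, hbb]
    · right; exact hS hle hc

lemma add_eq {S : Finset (ℕ × ℕ)} (hS : IsLowerSet (S : Set (ℕ × ℕ))) :
    add S = insert (0, row S 0) ((rem S).image (fun c => (c.1 + 1, row S (c.1 + 1)))) := by
  ext ⟨i, j⟩
  rw [add_iff hS, Finset.mem_insert]
  constructor
  · rintro ⟨rfl, hcond⟩
    rcases hcond with rfl | hlt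
    · left; rfl
    · right
      rw [Finset.mem_image]
      have hi : 0 < i := by
        by_contra h
        push_neg at h
        interval_cases i
        simp at hlt
      refine ⟨(i - 1, row S (i - 1) - 1), ?_, ?_⟩
      · rw [rem_iff hS]
        refine ⟨by omega, rfl, ?_⟩
        have : i - 1 + 1 = i := by omega
        rw [this]; omega
      · simp only [Prod.mk.injEq]
        constructor <;> [omega; (congr 1; omega)]
  · rintro (h | h)
    · have h1 := congrArg Prod.fst h
      have h2 := congrArg Prod.snd h
      simp only at h1 h2
      subst h1
      exact ⟨h2, Or.inl rfl⟩
    · rw [Finset.mem_image] at h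
      obtain ⟨⟨a, b⟩, hab, heq⟩ := h
      rw [rem_iff hS] at hab
      obtain ⟨hpos, -, hlt⟩ := hab
      simp only [Prod.mk.injEq] at heq
      obtain ⟨h1, h2⟩ := heq
      subst h1
      refine ⟨h2.symm, Or.inr ?_⟩
      simpa using hlt

lemma card_add {S : Finset (ℕ × ℕ)} (hS : IsLowerSet (S : Set (ℕ × ℕ))) :
    (add S).card = (rem S).card + 1 := by
  rw [add_eq hS, Finset.card_insert_of_notMem, Finset.card_image_of_injOn]
  · rintro ⟨a, b⟩ ha ⟨a', b'⟩ ha' heq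
    simp only [Finset.mem_coe] at ha ha'
    rw [rem_iff hS] at ha ha'
    have h1 := congrArg Prod.fst heq
    simp only at h1
    have : a = a' := by omega
    subst this
    simp only [Prod.mk.injEq, true_and]
    omega
  · rw [Finset.mem_image]
    rintro ⟨⟨a, b⟩, _, heq⟩
    have := congrArg Prod.fst heq
    simp at this

lemma zero_mem_add {S : Finset (ℕ × ℕ)} (hS : IsLowerSet (S : Set (ℕ × ℕ))) :
    ((0 : ℕ), row S 0) ∈ add S := by
  rw [add_iff hS]; exact ⟨rfl, Or.inl rfl⟩

/-! ### Standard tableaux -/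

lemma std_le_of_le {n : ℕ} {t : Fin n → ℕ × ℕ} (h : IsStandardTableau n t)
    {k k' : Fin n} (hle : t k ≤ t k') : k ≤ k' := by
  obtain ⟨hinj, hlow, hrow, hcol⟩ := h
  obtain ⟨h1, h2⟩ := hle
  rcases eq_or_ne (t k) (t k') with heq | hne
  · exact le_of_eq (hinj heq)
  rcases eq_or_ne (t k).1 (t k').1 with ha | ha
  · have hb : (t k).2 < (t k').2 := by
      rcases lt_or_eq_of_le h2 with h | h
      · exact h
      · exact absurd (Prod.ext ha h) hne
    exact le_of_lt (hrow k k' ha hb)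
  · have ha' : (t k).1 < (t k').1 := lt_of_le_of_ne h1 ha
    rcases eq_or_ne (t k).2 (t k').2 with hb | hb
    · exact le_of_lt (hcol k k' hb ha')
    · have hb' : (t k).2 < (t k').2 := lt_of_le_of_ne h2 hb
      -- intermediate cell ((t k).1, (t k').2)
      have hmid : ((t k).1, (t k').2) ∈ Finset.image t Finset.univ := by
        apply hlow (show (((t k).1, (t k').2) : ℕ × ℕ) ≤ t k' from ⟨le_of_lt ha', le_refl _⟩)
        exact Finset.mem_image_of_mem t (Finset.mem_univ k')
      rw [Finset.mem_image] at hmid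
      obtain ⟨j, -, hj⟩ := hmid
      have hj1 : (t j).1 = (t k).1 := by rw [hj]
      have hj2 : (t j).2 = (t k').2 := by rw [hj]
      have hkj : k < j := hrow k j hj1.symm (by rw [hj2]; exact hb')
      have hjk' : j < k' := hcol j k' hj2 (by rw [hj1]; exact ha')
      exact le_of_lt (lt_trans hkj hjk')

lemma image_succ_eq {n : ℕ} (t : Fin (n + 1) → ℕ × ℕ) :
    Finset.image t Finset.univ =
      insert (t (Fin.last n)) (Finset.image (t ∘ Fin.castSucc) Finset.univ) := by
  ext x
  simp only [Finset.mem_image, Finset.mem_insert, Finset.mem_univ, true_and,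
    Function.comp_apply]
  constructor
  · rintro ⟨k, rfl⟩
    rcases Fin.eq_castSucc_or_eq_last k with ⟨k', rfl⟩ | rfl
    · exact Or.inr ⟨k', rfl⟩
    · exact Or.inl rfl
  · rintro (rfl | ⟨k, rfl⟩)
    · exact ⟨Fin.last n, rfl⟩
    · exact ⟨Fin.castSucc k, rfl⟩

lemma restrict_props {n : ℕ} {t : Fin (n + 1) → ℕ × ℕ} (h : IsStandardTableau (n + 1) t) :
    IsStandardTableau n (t ∘ Fin.castSucc) ∧
    Finset.image (t ∘ Fin.castSucc) Finset.univ =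
      (Finset.image t Finset.univ).erase (t (Fin.last n)) ∧
    t (Fin.last n) ∈ rem (Finset.image t Finset.univ) := by
  obtain ⟨hinj, hlow, hrow, hcol⟩ := h
  have hnotmem : t (Fin.last n) ∉ Finset.image (t ∘ Fin.castSucc) Finset.univ := by
    rw [Finset.mem_image]
    rintro ⟨k, -, hk⟩
    have := hinj hk
    exact absurd (this ▸ Fin.castSucc_lt_last k) (lt_irrefl _)
  have herase : Finset.image (t ∘ Fin.castSucc) Finset.univ =
      (Finset.image t Finset.univ).erase (t (Fin.last n)) := by
    rw [image_succ_eq t, Finset.erase_insert hnotmem]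
  have hlow' : IsLowerSet (↑(Finset.image (t ∘ Fin.castSucc) Finset.univ) : Set (ℕ × ℕ)) := by
    intro e d hde he
    simp only [Finset.coe_image, Finset.coe_univ, Set.image_univ, Set.mem_range] at he ⊢
    obtain ⟨k, hk⟩ := he
    have hdmem : d ∈ Finset.image t Finset.univ := by
      apply hlow (show d ≤ t (Fin.castSucc k) from hde.trans_eq hk.symm)
      exact Finset.mem_image_of_mem t (Finset.mem_univ _)
    rw [Finset.mem_image] at hdmem
    obtain ⟨j, -, hj⟩ := hdmem
    have hjne : j ≠ Fin.last n := by
      rintro rfl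
      have h1 : t (Fin.last n) ≤ t (Fin.castSucc k) := hj.le.trans (hde.trans_eq hk.symm)
      have := std_le_of_le ⟨hinj, hlow, hrow, hcol⟩ h1
      exact absurd (lt_of_le_of_lt this (Fin.castSucc_lt_last k)) (lt_irrefl _)
    obtain ⟨j', rfl⟩ : ∃ j', j = Fin.castSucc j' := ⟨j.castPred hjne, by simp⟩
    exact ⟨j', hj⟩
  refine ⟨⟨?_, hlow', ?_, ?_⟩, herase, ?_⟩
  · exact fun a b hab => Fin.castSucc_injective n (hinj hab)
  · intro k k' h1 h2
    exact Fin.castSucc_lt_castSucc_iff.1 (hrow _ _ h1 h2)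
  · intro k k' h1 h2
    exact Fin.castSucc_lt_castSucc_iff.1 (hcol _ _ h1 h2)
  · rw [mem_rem]
    refine ⟨Finset.mem_image_of_mem t (Finset.mem_univ _), ?_⟩
    rw [← herase]
    exact hlow'

lemma snoc_props {n : ℕ} {t' : Fin n → ℕ × ℕ} {S : Finset (ℕ × ℕ)} {c : ℕ × ℕ}
    (hS : IsLowerSet (S : Set (ℕ × ℕ))) (h' : IsStandardTableau n t')
    (himg : Finset.image t' Finset.univ = S.erase c) (hc : c ∈ rem S) :
    IsStandardTableau (n + 1) (Fin.snoc t' c) ∧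
    Finset.image (Fin.snoc t' c) Finset.univ = S := by
  rw [mem_rem] at hc
  obtain ⟨hcS, hlowe⟩ := hc
  have hmem' : ∀ k, t' k ∈ S.erase c := by
    intro k
    rw [← himg]
    exact Finset.mem_image_of_mem t' (Finset.mem_univ k)
  have himage : Finset.image (Fin.snoc t' c : Fin (n + 1) → ℕ × ℕ) Finset.univ = S := by
    rw [image_succ_eq]
    have h1 : (Fin.snoc t' c : Fin (n + 1) → ℕ × ℕ) (Fin.last n) = c := by simp
    have h2 : (Fin.snoc t' c : Fin (n + 1) → ℕ × ℕ) ∘ Fin.castSucc = t' := by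
      funext k
      simp
    rw [h1, h2, himg, Finset.insert_erase hcS]
  -- key maximality facts about c
  have hmaxrow : ∀ k, (t' k).1 = c.1 → ¬ c.2 < (t' k).2 := by
    intro k h1 h2
    have : c ∈ S.erase c := by
      apply hlowe (show c ≤ t' k from ⟨le_of_eq h1.symm, le_of_lt h2⟩)
      exact hmem' k
    simp at this
  have hmaxcol : ∀ k, (t' k).2 = c.2 → ¬ c.1 < (t' k).1 := by
    intro k h1 h2
    have : c ∈ S.erase c := by
      apply hlowe (show c ≤ t' k from ⟨le_of_lt h2, le_of_eq h1.symm⟩)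
      exact hmem' k
    simp at this
  obtain ⟨hinj', hlow', hrow', hcol'⟩ := h'
  have hval : ∀ k : Fin n, (Fin.snoc t' c : Fin (n + 1) → ℕ × ℕ) (Fin.castSucc k) = t' k := by
    intro k; simp
  have hlast : (Fin.snoc t' c : Fin (n + 1) → ℕ × ℕ) (Fin.last n) = c := by simp
  refine ⟨⟨?_, ?_, ?_, ?_⟩, himage⟩
  · -- injective
    intro a b hab
    rcases Fin.eq_castSucc_or_eq_last a with ⟨a', rfl⟩ | rfl <;>
      rcases Fin.eq_castSucc_or_eq_last b with ⟨b', rfl⟩ | rfl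
    · rw [hval, hval] at hab
      exact congrArg Fin.castSucc (hinj' hab)
    · rw [hval, hlast] at hab
      exact absurd (hab ▸ hmem' a') (by simp)
    · rw [hval, hlast] at hab
      exact absurd (hab.symm ▸ hmem' b') (by simp)
    · rfl
  · rw [himage]; exact hS
  · intro k k' h1 h2
    rcases Fin.eq_castSucc_or_eq_last k with ⟨a, rfl⟩ | rfl <;>
      rcases Fin.eq_castSucc_or_eq_last k' with ⟨b, rfl⟩ | rfl
    · rw [hval] at h1 h2
      rw [hval] at h1 h2
      exact Fin.castSucc_lt_castSucc_iff.2 (hrow' _ _ h1 h2)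
    · exact Fin.castSucc_lt_last a
    · rw [hlast] at h1 h2
      rw [hval] at h1 h2
      exact absurd h2 (hmaxrow b h1.symm)
    · exact absurd h2 (lt_irrefl _)
  · intro k k' h1 h2
    rcases Fin.eq_castSucc_or_eq_last k with ⟨a, rfl⟩ | rfl <;>
      rcases Fin.eq_castSucc_or_eq_last k' with ⟨b, rfl⟩ | rfl
    · rw [hval] at h1 h2
      rw [hval] at h1 h2
      exact Fin.castSucc_lt_castSucc_iff.2 (hcol' _ _ h1 h2)
    · exact Fin.castSucc_lt_last a
    · rw [hlast] at h1 h2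
      rw [hval] at h1 h2
      exact absurd h2 (hmaxcol b h1.symm)
    · exact absurd h2 (lt_irrefl _)

/-! ### Counting tableaux -/

/-- The finset of standard tableaux with image `S`. -/
noncomputable def SYTfin (n : ℕ) (S : Finset (ℕ × ℕ)) : Finset (Fin n → ℕ × ℕ) :=
  ((Finset.univ : Finset (Fin n → {c // c ∈ S})).image
    (fun g k => ((g k : ℕ × ℕ)))).filter
    (fun t => IsStandardTableau n t ∧ Finset.image t Finset.univ = S)

lemma mem_SYTfin {n : ℕ} {S : Finset (ℕ × ℕ)} {t : Fin n → ℕ × ℕ} :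
    t ∈ SYTfin n S ↔ IsStandardTableau n t ∧ Finset.image t Finset.univ = S := by
  rw [SYTfin, Finset.mem_filter, and_iff_right_iff_imp]
  rintro ⟨hstd, himg⟩
  rw [Finset.mem_image]
  have hmem : ∀ k, t k ∈ S := by
    intro k
    rw [← himg]
    exact Finset.mem_image_of_mem t (Finset.mem_univ k)
  exact ⟨fun k => ⟨t k, hmem k⟩, Finset.mem_univ _, rfl⟩

/-- The number of standard Young tableaux of shape `S`. -/
noncomputable def f (n : ℕ) (S : Finset (ℕ × ℕ)) : ℕ := (SYTfin n S).card

lemma f_zero : f 0 ∅ = 1 := by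
  have : SYTfin 0 ∅ = {fun k : Fin 0 => k.elim0} := by
    ext t
    rw [mem_SYTfin, Finset.mem_singleton]
    constructor
    · intro _
      funext k
      exact k.elim0
    · rintro rfl
      refine ⟨⟨fun a => a.elim0, ?_, fun a => a.elim0, fun a => a.elim0⟩, ?_⟩
      · convert isLowerSet_empty
        simp
      · simp
  rw [f, this, Finset.card_singleton]

lemma f_succ {n : ℕ} {S : Finset (ℕ × ℕ)} (hS : IsLowerSet (S : Set (ℕ × ℕ))) :
    f (n + 1) S = ∑ c ∈ rem S, f n (S.erase c) := by
  classical
  rw [f, Finset.card_eq_sum_card_fiberwise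
    (f := fun t => t (Fin.last n)) (t := rem S) (fun t ht => by
      rw [Finset.mem_coe, mem_SYTfin] at ht
      have := (restrict_props ht.1).2.2
      rwa [ht.2] at this)]
  apply Finset.sum_congr rfl
  intro c hc
  rw [f]
  apply Finset.card_bij' (i := fun t _ => t ∘ Fin.castSucc)
    (j := fun t' _ => Fin.snoc t' c)
  · intro t ht
    rw [Finset.mem_filter, mem_SYTfin] at ht
    obtain ⟨⟨hstd, himg⟩, hlastc⟩ := ht
    rw [mem_SYTfin]
    obtain ⟨hstd', herase, -⟩ := restrict_props hstd
    exact ⟨hstd', by rw [herase, himg, hlastc]⟩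
  · intro t' ht'
    rw [mem_SYTfin] at ht'
    obtain ⟨hstd', himg'⟩ := ht'
    obtain ⟨hstd, himg⟩ := snoc_props hS hstd' himg' hc
    rw [Finset.mem_filter, mem_SYTfin]
    exact ⟨⟨hstd, himg⟩, by simp⟩
  · intro t ht
    rw [Finset.mem_filter] at ht
    rw [← ht.2]
    exact Fin.snoc_init_self t
  · intro t' _
    funext k
    simp

/-! ### Diagrams of size `n` -/

/-- The finset of Young diagrams with `n` cells. -/
noncomputable def D (n : ℕ) : Finset (Finset (ℕ × ℕ)) :=
  ((Finset.range n ×ˢ Finset.range n).powerset).filter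
    (fun S => S.card = n ∧ IsLowerSet (S : Set (ℕ × ℕ)))

lemma mem_D {n : ℕ} {S : Finset (ℕ × ℕ)} :
    S ∈ D n ↔ S.card = n ∧ IsLowerSet (S : Set (ℕ × ℕ)) := by
  rw [D, Finset.mem_filter, Finset.mem_powerset, and_iff_right_iff_imp]
  rintro ⟨hcard, hlow⟩
  have := subset_box hlow
  rwa [hcard] at this

lemma swap_mem {S : Finset (ℕ × ℕ)} (hS : IsLowerSet (S : Set (ℕ × ℕ))) {c c' : ℕ × ℕ} :
    (c ∈ add S ∧ c' ∈ (rem (insert c S)).erase c) ↔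
    (c' ∈ rem S ∧ c ∈ (add (S.erase c')).erase c') := by
  classical
  rw [Finset.mem_erase, Finset.mem_erase, mem_add, mem_rem, mem_rem, mem_add]
  constructor
  · rintro ⟨⟨hcS, hins⟩, hne, hc'mem, hlow2⟩
    have hne' : c ≠ c' := fun h => hne h.symm
    have hc'S : c' ∈ S := by
      rcases Finset.mem_insert.1 hc'mem with h | h
      · exact absurd h hne
      · exact h
    have hkey : (insert c S).erase c' = insert c (S.erase c') :=
      Finset.erase_insert_of_ne hne'
    have h1 : IsLowerSet (↑(insert c (S.erase c')) : Set (ℕ × ℕ)) := by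
      rw [← hkey]; exact hlow2
    have h2 : (↑(S.erase c') : Set (ℕ × ℕ)) =
        ↑(insert c (S.erase c')) ∩ ↑S := by
      ext x
      simp only [Finset.coe_erase, Set.mem_diff, Set.mem_singleton_iff, Finset.mem_coe,
        Set.mem_inter_iff, Finset.coe_insert, Set.mem_insert_iff]
      constructor
      · rintro ⟨hxS, hxne⟩
        exact ⟨Or.inr ⟨hxS, hxne⟩, hxS⟩
      · rintro ⟨hx, hxS⟩
        rcases hx with rfl | hx
        · exact absurd hxS hcS
        · exact hx
    refine ⟨⟨hc'S, by rw [h2]; exact h1.inter hS⟩, hne', ?_, h1⟩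
    intro hmem
    exact hcS (Finset.mem_of_mem_erase hmem)
  · rintro ⟨⟨hc'S, hrel⟩, hne', hcE, hlow1⟩
    have hcS : c ∉ S := by
      intro h
      exact hcE (Finset.mem_erase.2 ⟨hne', h⟩)
    have hkey : (insert c S).erase c' = insert c (S.erase c') :=
      Finset.erase_insert_of_ne hne'
    have hunion : (↑(insert c S) : Set (ℕ × ℕ)) =
        ↑(insert c (S.erase c')) ∪ ↑S := by
      ext x
      simp only [Finset.coe_insert, Set.mem_insert_iff, Finset.mem_coe, Set.mem_union,
        Finset.coe_erase, Set.mem_diff, Set.mem_singleton_iff]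
      constructor
      · rintro (rfl | hx)
        · exact Or.inl (Or.inl rfl)
        · exact Or.inr hx
      · rintro ((rfl | ⟨hx, -⟩) | hx)
        · exact Or.inl rfl
        · exact Or.inr hx
        · exact Or.inr hx
    refine ⟨⟨hcS, by rw [hunion]; exact hlow1.union hS⟩, fun h => hne' h.symm,
      Finset.mem_insert_of_mem hc'S, by rw [hkey]; exact hlow1⟩

lemma sum_swap_aux {S : Finset (ℕ × ℕ)} (hS : IsLowerSet (S : Set (ℕ × ℕ)))
    (g : ℕ × ℕ → ℕ × ℕ → ℕ) :
    ∑ c ∈ add S, ∑ c' ∈ (rem (insert c S)).erase c, g c c' =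
    ∑ c' ∈ rem S, ∑ c ∈ (add (S.erase c')).erase c', g c c' := by
  rw [Finset.sum_sigma', Finset.sum_sigma']
  refine Finset.sum_nbij' (fun p => ⟨p.2, p.1⟩) (fun p => ⟨p.2, p.1⟩) ?_ ?_ ?_ ?_ ?_
  · rintro ⟨c, c'⟩ hp
    rw [Finset.mem_sigma] at hp ⊢
    exact (swap_mem hS).1 ⟨hp.1, hp.2⟩
  · rintro ⟨c', c⟩ hp
    rw [Finset.mem_sigma] at hp ⊢
    exact (swap_mem hS).2 ⟨hp.1, hp.2⟩
  · rintro ⟨c, c'⟩ _; rfl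
  · rintro ⟨c', c⟩ _; rfl
  · rintro ⟨c, c'⟩ _; rfl

lemma down_up : ∀ n : ℕ, ∀ S : Finset (ℕ × ℕ), S.card = n → IsLowerSet (S : Set (ℕ × ℕ)) →
    ∑ c ∈ add S, f (n + 1) (insert c S) = (n + 1) * f n S := by
  intro n
  induction n with
  | zero =>
    intro S hcard hS
    have hempty : S = ∅ := Finset.card_eq_zero.1 hcard
    subst hempty
    have hrem : rem (∅ : Finset (ℕ × ℕ)) = ∅ := by simp [rem]
    have hlowemp : IsLowerSet ((∅ : Finset (ℕ × ℕ)) : Set (ℕ × ℕ)) := by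
      rw [Finset.coe_empty]; exact isLowerSet_empty
    have hadd : add (∅ : Finset (ℕ × ℕ)) = {((0 : ℕ), (0 : ℕ))} := by
      have hc := card_add hlowemp
      rw [hrem, Finset.card_empty] at hc
      obtain ⟨a, ha⟩ := Finset.card_eq_one.1 hc
      have hmem := zero_mem_add hlowemp
      have hrow0 : row (∅ : Finset (ℕ × ℕ)) 0 = 0 := by simp [row]
      rw [hrow0] at hmem
      rw [ha] at hmem ⊢
      rw [Finset.mem_singleton] at hmem
      rw [← hmem]
    rw [hadd, Finset.sum_singleton, f_zero, mul_one]
    have hlowins : IsLowerSet ((insert ((0 : ℕ), (0 : ℕ)) (∅ : Finset (ℕ × ℕ)) : Finset (ℕ × ℕ)) : Set (ℕ × ℕ)) := by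
      have := (mem_add (S := (∅ : Finset (ℕ × ℕ))) (c := ((0 : ℕ), (0 : ℕ)))).1
      rw [hadd] at this
      exact (this (Finset.mem_singleton_self _)).2
    rw [f_succ hlowins]
    have hrem1 : rem (insert ((0 : ℕ), (0 : ℕ)) (∅ : Finset (ℕ × ℕ))) =
        {((0 : ℕ), (0 : ℕ))} := by
      apply Finset.ext
      intro c
      rw [mem_rem, Finset.mem_singleton]
      constructor
      · rintro ⟨h, -⟩
        simpa using h
      · rintro rfl
        refine ⟨by simp, ?_⟩
        rw [Finset.erase_insert (by simp), Finset.coe_empty]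
        exact isLowerSet_empty
    rw [hrem1, Finset.sum_singleton, Finset.erase_insert (by simp), f_zero]
  | succ k ih =>
    intro S hcard hS
    set F := f (k + 1) S with hF
    have hrec : ∀ c ∈ add S, f (k + 1 + 1) (insert c S) =
        F + ∑ c' ∈ (rem (insert c S)).erase c, f (k + 1) (insert c (S.erase c')) := by
      intro c hc
      rw [mem_add] at hc
      rw [f_succ hc.2]
      have hcrem : c ∈ rem (insert c S) := by
        rw [mem_rem]
        refine ⟨Finset.mem_insert_self _ _, ?_⟩
        rw [Finset.erase_insert hc.1]
        exact hS
      rw [← Finset.add_sum_erase _ _ hcrem, Finset.erase_insert hc.1]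
      congr 1
      apply Finset.sum_congr rfl
      intro c' hc'
      rw [Finset.mem_erase] at hc'
      rw [Finset.erase_insert_of_ne (fun h => hc'.1 h.symm)]
    have h1 : ∑ c ∈ add S, f (k + 1 + 1) (insert c S) =
        ((rem S).card + 1) * F +
          ∑ c' ∈ rem S, ∑ c ∈ (add (S.erase c')).erase c',
            f (k + 1) (insert c (S.erase c')) := by
      rw [Finset.sum_congr rfl hrec, Finset.sum_add_distrib, Finset.sum_const, smul_eq_mul,
        card_add hS, sum_swap_aux hS]
    have h2 : (rem S).card * F +
        ∑ c' ∈ rem S, ∑ c ∈ (add (S.erase c')).erase c', f (k + 1) (insert c (S.erase c')) =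
        (k + 1) * F := by
      have hsum : ∀ c' ∈ rem S,
          F + ∑ c ∈ (add (S.erase c')).erase c', f (k + 1) (insert c (S.erase c')) =
          (k + 1) * f k (S.erase c') := by
        intro c' hc'
        rw [mem_rem] at hc'
        have hc'add : c' ∈ add (S.erase c') := by
          rw [mem_add]
          refine ⟨Finset.notMem_erase _ _, ?_⟩
          rw [Finset.insert_erase hc'.1]
          exact hS
        have hsplit : f (k + 1) (insert c' (S.erase c')) +
            ∑ c ∈ (add (S.erase c')).erase c', f (k + 1) (insert c (S.erase c')) =
            ∑ c ∈ add (S.erase c'), f (k + 1) (insert c (S.erase c')) :=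
          by exact Finset.add_sum_erase _ (fun c => f (k + 1) (insert c (S.erase c'))) hc'add
        rw [Finset.insert_erase hc'.1, ← hF] at hsplit
        rw [hsplit]
        exact ih (S.erase c') (by rw [Finset.card_erase_of_mem hc'.1, hcard]; omega) hc'.2
      calc (rem S).card * F +
          ∑ c' ∈ rem S, ∑ c ∈ (add (S.erase c')).erase c', f (k + 1) (insert c (S.erase c')) =
          ∑ c' ∈ rem S, (F + ∑ c ∈ (add (S.erase c')).erase c',
            f (k + 1) (insert c (S.erase c'))) := by
            rw [Finset.sum_add_distrib, Finset.sum_const, smul_eq_mul]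
        _ = ∑ c' ∈ rem S, (k + 1) * f k (S.erase c') := Finset.sum_congr rfl hsum
        _ = (k + 1) * ∑ c' ∈ rem S, f k (S.erase c') := by rw [Finset.mul_sum]
        _ = (k + 1) * F := by rw [hF, f_succ hS]
    have key : (∑ c ∈ add S, f (k + 1 + 1) (insert c S)) + (rem S).card * F =
        (k + 1 + 1) * F + (rem S).card * F := by
      calc (∑ c ∈ add S, f (k + 1 + 1) (insert c S)) + (rem S).card * F =
          ((rem S).card + 1) * F + ((rem S).card * F +
            ∑ c' ∈ rem S, ∑ c ∈ (add (S.erase c')).erase c',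
              f (k + 1) (insert c (S.erase c'))) := by rw [h1]; ring
        _ = ((rem S).card + 1) * F + (k + 1) * F := by rw [h2]
        _ = (k + 1 + 1) * F + (rem S).card * F := by ring
    exact Nat.add_right_cancel key

lemma sum_pairs (n : ℕ) (g : Finset (ℕ × ℕ) → ℕ × ℕ → ℕ) :
    ∑ T ∈ D (n + 1), ∑ c ∈ rem T, g T c =
    ∑ S ∈ D n, ∑ c ∈ add S, g (insert c S) c := by
  rw [Finset.sum_sigma', Finset.sum_sigma']
  refine Finset.sum_nbij' (fun p => ⟨p.1.erase p.2, p.2⟩) (fun p => ⟨insert p.2 p.1, p.2⟩)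
    ?_ ?_ ?_ ?_ ?_
  · rintro ⟨T, c⟩ hp
    rw [Finset.mem_sigma] at hp ⊢
    obtain ⟨hT, hc⟩ := hp
    rw [mem_D] at hT
    rw [mem_rem] at hc
    constructor
    · rw [mem_D, Finset.card_erase_of_mem hc.1, hT.1]
      exact ⟨rfl, hc.2⟩
    · rw [mem_add]
      refine ⟨Finset.notMem_erase _ _, ?_⟩
      rw [Finset.insert_erase hc.1]
      exact hT.2
  · rintro ⟨S, c⟩ hp
    rw [Finset.mem_sigma] at hp ⊢
    obtain ⟨hS, hc⟩ := hp
    rw [mem_D] at hS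
    rw [mem_add] at hc
    constructor
    · rw [mem_D, Finset.card_insert_of_notMem hc.1, hS.1]
      exact ⟨rfl, hc.2⟩
    · rw [mem_rem]
      refine ⟨Finset.mem_insert_self _ _, ?_⟩
      rw [Finset.erase_insert hc.1]
      exact hS.2
  · rintro ⟨T, c⟩ hp
    rw [Finset.mem_sigma] at hp
    have hc := (mem_rem.1 hp.2).1
    simp only
    congr 1
    exact Finset.insert_erase hc
  · rintro ⟨S, c⟩ hp
    rw [Finset.mem_sigma] at hp
    have hc := (mem_add.1 hp.2).1
    simp only
    congr 1
    exact Finset.erase_insert hc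
  · rintro ⟨T, c⟩ hp
    rw [Finset.mem_sigma] at hp
    have hc := (mem_rem.1 hp.2).1
    simp only
    rw [Finset.insert_erase hc]

lemma main_sum : ∀ n : ℕ, ∑ S ∈ D n, f n S ^ 2 = n.factorial := by
  intro n
  induction n with
  | zero =>
    have hD0 : D 0 = {∅} := by
      apply Finset.ext
      intro S
      rw [mem_D, Finset.mem_singleton]
      constructor
      · rintro ⟨h, -⟩
        exact Finset.card_eq_zero.1 h
      · rintro rfl
        refine ⟨Finset.card_empty, ?_⟩
        rw [Finset.coe_empty]
        exact isLowerSet_empty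
    rw [hD0, Finset.sum_singleton, f_zero]
    rfl
  | succ k ih =>
    have step : ∑ T ∈ D (k + 1), f (k + 1) T ^ 2 =
        ∑ S ∈ D k, (k + 1) * f k S ^ 2 := by
      calc ∑ T ∈ D (k + 1), f (k + 1) T ^ 2 =
          ∑ T ∈ D (k + 1), ∑ c ∈ rem T, f k (T.erase c) * f (k + 1) T := by
            apply Finset.sum_congr rfl
            intro T hT
            rw [mem_D] at hT
            rw [pow_two]
            nth_rewrite 1 [f_succ hT.2]
            rw [Finset.sum_mul]
        _ = ∑ S ∈ D k, ∑ c ∈ add S, f k ((insert c S).erase c) * f (k + 1) (insert c S) :=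
            sum_pairs k (fun T c => f k (T.erase c) * f (k + 1) T)
        _ = ∑ S ∈ D k, (k + 1) * f k S ^ 2 := by
            apply Finset.sum_congr rfl
            intro S hS
            rw [mem_D] at hS
            have herase : ∀ c ∈ add S, f k ((insert c S).erase c) * f (k + 1) (insert c S) =
                f k S * f (k + 1) (insert c S) := by
              intro c hc
              rw [Finset.erase_insert (mem_add.1 hc).1]
            rw [Finset.sum_congr rfl herase, ← Finset.mul_sum,
              down_up k S hS.1 hS.2]
            ring
    rw [step, ← Finset.mul_sum, ih, Nat.factorial_succ]

/-! ### Partitions and diagrams -/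

lemma image_fst_eq_range {S : Finset (ℕ × ℕ)} (hS : IsLowerSet (S : Set (ℕ × ℕ))) :
    S.image Prod.fst = Finset.range ((S.image Prod.fst).card) := by
  set T := S.image Prod.fst with hT
  have hlow : ∀ a b : ℕ, a ≤ b → b ∈ T → a ∈ T := by
    intro a b hab hb
    rw [hT, Finset.mem_image] at hb ⊢
    obtain ⟨⟨b', j⟩, hmem, hfst⟩ := hb
    simp only at hfst
    subst hfst
    refine ⟨(a, j), hS (show ((a, j) : ℕ × ℕ) ≤ (b', j) from ⟨hab, le_refl _⟩) hmem, rfl⟩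
  apply Finset.ext
  intro j
  rw [Finset.mem_range]
  constructor
  · intro hj
    by_contra hlt
    push_neg at hlt
    have hsub : Finset.range (j + 1) ⊆ T := by
      intro x hx
      rw [Finset.mem_range, Nat.lt_succ_iff] at hx
      exact hlow x j hx hj
    have := Finset.card_le_card hsub
    simp at this
    omega
  · intro hj
    by_contra hmem
    have hsub : T ⊆ Finset.range j := by
      intro x hx
      rw [Finset.mem_range]
      by_contra hge
      push_neg at hge
      exact hmem (hlow j x hge hx)
    have := Finset.card_le_card hsub
    simp at this
    omega

lemma mem_image_fst {S : Finset (ℕ × ℕ)} (hS : IsLowerSet (S : Set (ℕ × ℕ))) {a : ℕ} :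
    a ∈ S.image Prod.fst ↔ 0 < row S a := by
  rw [Finset.mem_image]
  constructor
  · rintro ⟨⟨a', b⟩, hmem, hfst⟩
    simp only at hfst
    subst hfst
    have := (mem_row_iff hS a' b).1 hmem
    omega
  · intro h
    exact ⟨(a, 0), (mem_row_iff hS a 0).2 h, rfl⟩

lemma rowLensMultiset_eq {S : Finset (ℕ × ℕ)} (hS : IsLowerSet (S : Set (ℕ × ℕ))) :
    rowLensMultiset S =
      ((List.range ((S.image Prod.fst).card)).map (row S) : List ℕ) := by
  rw [rowLensMultiset]
  have h1 : (S.image Prod.fst).val =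
      (Finset.range ((S.image Prod.fst).card)).val := by
    rw [← image_fst_eq_range hS]
  rw [h1]
  rfl

lemma rowLens_list_sorted {S : Finset (ℕ × ℕ)} (hS : IsLowerSet (S : Set (ℕ × ℕ))) (K : ℕ) :
    List.Pairwise (· ≥ ·) ((List.range K).map (row S)) := by
  rw [List.pairwise_map]
  apply List.Pairwise.imp_of_mem (R := (· < ·))
  · intro a b _ _ hab
    exact row_antitone hS (le_of_lt hab)
  · exact List.pairwise_lt_range (n := K)

lemma eq_of_rowLensMultiset_eq {S S' : Finset (ℕ × ℕ)} (hS : IsLowerSet (S : Set (ℕ × ℕ)))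
    (hS' : IsLowerSet (S' : Set (ℕ × ℕ)))
    (h : rowLensMultiset S = rowLensMultiset S') : S = S' := by
  set K := (S.image Prod.fst).card with hK
  set K' := (S'.image Prod.fst).card with hK'
  have hmult : ((List.range K).map (row S) : Multiset ℕ) =
      ((List.range K').map (row S') : Multiset ℕ) := by
    rw [← rowLensMultiset_eq hS, ← rowLensMultiset_eq hS', h]
  have hKK : K = K' := by
    have := congrArg Multiset.card hmult
    simpa using this
  clear_value K K'
  subst hKK
  have hlist : (List.range K).map (row S) = (List.range K).map (row S') := by
    exact List.Perm.eq_of_pairwise' (rowLens_list_sorted hS K) (rowLens_list_sorted hS' K)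
      (Multiset.coe_eq_coe.1 hmult)
  have hrow : ∀ i, row S i = row S' i := by
    intro i
    rcases Nat.lt_or_ge i K with hi | hi
    · have h1 := List.getElem_of_eq hlist
        (show i < ((List.range K).map (row S)).length by simpa using hi)
      simpa using h1
    · have h1 : row S i = 0 := by
        by_contra hpos
        have : i ∈ S.image Prod.fst := (mem_image_fst hS).2 (by omega)
        rw [image_fst_eq_range hS, Finset.mem_range, ← hK] at this
        omega
      have h2 : row S' i = 0 := by
        by_contra hpos
        have : i ∈ S'.image Prod.fst := (mem_image_fst hS').2 (by omega)
        rw [image_fst_eq_range hS', Finset.mem_range, ← hK'] at this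
        omega
      rw [h1, h2]
  exact eq_of_row_eq hS hS' hrow

lemma card_eq_sum_rowLens (S : Finset (ℕ × ℕ)) : S.card = (rowLensMultiset S).sum := by
  rw [Finset.card_eq_sum_card_image Prod.fst S]
  rfl

lemma rowLensMultiset_pos {S : Finset (ℕ × ℕ)} {x : ℕ} (hx : x ∈ rowLensMultiset S) :
    0 < x := by
  rw [rowLensMultiset, Multiset.mem_map] at hx
  obtain ⟨a, ha, rfl⟩ := hx
  have ha' : a ∈ S.image Prod.fst := ha
  rw [Finset.mem_image] at ha'
  obtain ⟨c, hc, hfst⟩ := ha'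
  apply Finset.card_pos.2
  exact ⟨c, Finset.mem_filter.2 ⟨hc, hfst⟩⟩

/-- The Young diagram of a partition. -/
noncomputable def P {m : ℕ} (μ : Nat.Partition m) : Finset (ℕ × ℕ) :=
  (YoungDiagram.ofRowLens (Multiset.sort μ.parts (· ≥ ·))
    (Multiset.pairwise_sort _ _).sortedGE).cells

lemma P_lower {m : ℕ} (μ : Nat.Partition m) : IsLowerSet ((P μ : Finset (ℕ × ℕ)) : Set (ℕ × ℕ)) :=
  (YoungDiagram.ofRowLens (Multiset.sort μ.parts (· ≥ ·)) (Multiset.pairwise_sort _ _).sortedGE).isLowerSet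

lemma mem_P {m : ℕ} (μ : Nat.Partition m) (c : ℕ × ℕ) :
    c ∈ P μ ↔ ∃ h : c.1 < (Multiset.sort μ.parts (· ≥ ·)).length,
      c.2 < (Multiset.sort μ.parts (· ≥ ·))[c.1] := by
  rw [P, YoungDiagram.mem_cells, YoungDiagram.mem_ofRowLens]

lemma row_P {m : ℕ} (μ : Nat.Partition m) (i : ℕ) :
    row (P μ) i = if h : i < (Multiset.sort μ.parts (· ≥ ·)).length
      then (Multiset.sort μ.parts (· ≥ ·))[i] else 0 := by
  set w := Multiset.sort μ.parts (· ≥ ·) with hw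
  have hiff : ∀ j, j < row (P μ) i ↔ ∃ h : i < w.length, j < w[i] := by
    intro j
    rw [← mem_row_iff (P_lower μ) i j, mem_P]
  split_ifs with hi
  · apply Nat.le_antisymm
    · apply Nat.not_lt.1
      intro hc
      obtain ⟨hh, habs⟩ := (hiff w[i]).1 hc
      exact absurd habs (lt_irrefl _)
    · rcases Nat.eq_zero_or_pos w[i] with h0 | h0
      · rw [h0]
        exact Nat.zero_le _
      · have h2 : w[i] - 1 < row (P μ) i :=
          (hiff (w[i] - 1)).2 ⟨hi, Nat.sub_lt h0 Nat.one_pos⟩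
        exact Nat.le_of_pred_lt h2
  · by_contra hpos
    obtain ⟨habs, -⟩ := (hiff 0).1 (by omega)
    exact hi habs

lemma rowLensMultiset_P {m : ℕ} (μ : Nat.Partition m) :
    rowLensMultiset (P μ) = μ.parts := by
  set w := Multiset.sort μ.parts (· ≥ ·) with hw
  have hwpos : ∀ i (h : i < w.length), 0 < w[i] := by
    intro i h
    apply μ.parts_pos
    rw [← Multiset.mem_sort (r := (· ≥ ·))]
    exact List.getElem_mem h
  have himg : (P μ).image Prod.fst = Finset.range w.length := by
    apply Finset.ext
    intro a
    rw [mem_image_fst (P_lower μ), Finset.mem_range, row_P]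
    split_ifs with h
    · exact ⟨fun _ => h, fun _ => hwpos a h⟩
    · exact ⟨fun habs => absurd habs (lt_irrefl 0), fun habs => absurd habs h⟩
  have hK : ((P μ).image Prod.fst).card = w.length := by
    rw [himg, Finset.card_range]
  rw [rowLensMultiset_eq (P_lower μ), hK]
  have hlist : (List.range w.length).map (row (P μ)) = w := by
    apply List.ext_getElem
    · simp
    · intro i h1 h2
      simp only [List.getElem_map, List.getElem_range]
      rw [row_P]
      exact dif_pos h2
  rw [hlist, hw, Multiset.sort_eq]

lemma card_P {m : ℕ} (μ : Nat.Partition m) : (P μ).card = m := by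
  rw [card_eq_sum_rowLens, rowLensMultiset_P]
  exact μ.parts_sum

lemma P_mem_D {m : ℕ} (μ : Nat.Partition m) : P μ ∈ D m :=
  mem_D.2 ⟨card_P μ, P_lower μ⟩

lemma P_surj {m : ℕ} {S : Finset (ℕ × ℕ)} (hS : S ∈ D m) : ∃ μ : Nat.Partition m, P μ = S := by
  rw [mem_D] at hS
  refine ⟨⟨rowLensMultiset S, fun {x} hx => rowLensMultiset_pos hx, ?_⟩, ?_⟩
  · rw [← card_eq_sum_rowLens, hS.1]
  · apply eq_of_rowLensMultiset_eq (P_lower _) hS.2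
    rw [rowLensMultiset_P]

end SYT

/-- For every `m ≥ 0`, the sum over all partitions `μ` of `m` of the square of
the number of standard Young tableaux of shape `μ` equals `m!`. -/
theorem sum_squares_card_std_tableaux (m : ℕ) :
    ∑ μ : Nat.Partition m,
      (Nat.card {t : Fin m → ℕ × ℕ // IsStandardTableau m t ∧
        rowLensMultiset (Finset.image t Finset.univ) = μ.parts}) ^ 2 =
      m.factorial := by
  classical
  have hsummand : ∀ μ : Nat.Partition m,
      Nat.card {t : Fin m → ℕ × ℕ // IsStandardTableau m t ∧
        rowLensMultiset (Finset.image t Finset.univ) = μ.parts} = SYT.f m (SYT.P μ) := by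
    intro μ
    rw [SYT.f, ← Nat.card_eq_finsetCard]
    apply Nat.card_congr
    apply Equiv.subtypeEquivRight
    intro t
    rw [SYT.mem_SYTfin]
    constructor
    · rintro ⟨hstd, hrows⟩
      refine ⟨hstd, ?_⟩
      apply SYT.eq_of_rowLensMultiset_eq hstd.2.1 (SYT.P_lower μ)
      rw [hrows, SYT.rowLensMultiset_P]
    · rintro ⟨hstd, himg⟩
      exact ⟨hstd, by rw [himg, SYT.rowLensMultiset_P]⟩
  calc ∑ μ : Nat.Partition m,
      (Nat.card {t : Fin m → ℕ × ℕ // IsStandardTableau m t ∧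
        rowLensMultiset (Finset.image t Finset.univ) = μ.parts}) ^ 2 =
      ∑ μ : Nat.Partition m, SYT.f m (SYT.P μ) ^ 2 := by
        apply Finset.sum_congr rfl
        intro μ _
        rw [hsummand]
    _ = ∑ S ∈ SYT.D m, SYT.f m S ^ 2 := by
        apply Finset.sum_nbij (i := fun μ => SYT.P μ)
        · intro μ _
          exact SYT.P_mem_D μ
        · intro μ _ ν _ h
          apply Nat.Partition.ext
          have h' : SYT.P μ = SYT.P ν := h
          have h1 := SYT.rowLensMultiset_P μ
          have h2 := SYT.rowLensMultiset_P ν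
          rw [← h1, ← h2, h']
        · intro S hS
          obtain ⟨μ, hμ⟩ := SYT.P_surj (Finset.mem_coe.1 hS)
          exact ⟨μ, Finset.mem_coe.2 (Finset.mem_univ μ), hμ⟩
        · intro μ _
          rfl
    _ = m.factorial := SYT.main_sum m
end

section
/- Let $e \ge 2$, let $\xi$ be an element of a field $F$ with $1 + \xi + \cdots + \xi^{e-1} = 0$ and $e$ minimal with this property. For $i \in \mathbb{Z}/e\mathbb{Z}$, define constants $Q_i^{(0)} \in F$ as follows. If $\xi = 1$ (so $e = \mathrm{char}\, F$ is prime): $Q_0^{(0)} = 1$; $Q_i^{(0)} = 1 - i^{-1}$ for $i \notin \{0, 1, -1\}$; $Q_{-1}^{(0)} = 2$ and $Q_1^{(0)} = 1$ if $e \ne 2$; $Q_1^{(0)} = 1$ if $e = 2$. If $\xi \ne 1$: $Q_0^{(0)} = 1 - \xi$; $Q_i^{(0)} = \xi(\xi^{i-1}-1)/(\xi^i - 1)$ for $i \notin \{0,1,-1\}$; $Q_{-1}^{(0)} = \xi(\xi^{-2}-1)/(\xi^{-1}-1)^2$ and $Q_1^{(0)} = 1$ if $e \ne 2$; $Q_1^{(0)}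 = 1/(\xi - 1)$ if $e = 2$. Then $Q_0^{(0)} Q_1^{(0)} \cdots Q_{e-1}^{(0)} = -1$. -/
section helpers

variable {F : Type*} [Field F]

private lemma prod_zmod_eq (e : ℕ) [NeZero e] {M : Type*} [CommMonoid M] (f : ZMod e → M) :
    ∏ i : ZMod e, f i = ∏ k ∈ Finset.range e, f (k : ZMod e) := by
  refine Finset.prod_nbij' (i := fun i => i.val) (j := fun k => (k : ZMod e))
    ?_ ?_ ?_ ?_ ?_
  · intro i _; exact Finset.mem_range.mpr (ZMod.val_lt i)
  · intro k hk; exact Finset.mem_univ _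
  · intro i _; simp [ZMod.natCast_zmod_val]
  · intro k hk; exact ZMod.val_natCast_of_lt (Finset.mem_range.mp hk)
  · intro i _; simp [ZMod.natCast_zmod_val]

private lemma zmod_cast_inj (e k j : ℕ) [NeZero e] (hk : k < e) (hj : j < e) :
    ((k : ZMod e) = (j : ZMod e)) ↔ k = j := by
  constructor
  · intro h
    have := congrArg ZMod.val h
    rwa [ZMod.val_natCast_of_lt hk, ZMod.val_natCast_of_lt hj] at this
  · rintro rfl; rfl

private lemma zmod_ne (e k j : ℕ) [NeZero e] (hk : k < e) (hj : j < e) (h : k ≠ j) :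
    (k : ZMod e) ≠ (j : ZMod e) :=
  fun hh => h ((zmod_cast_inj e k j hk hj).mp hh)

private lemma zmod_neg_one (e : ℕ) [NeZero e] (he : 1 ≤ e) :
    ((e - 1 : ℕ) : ZMod e) = -1 := by
  rw [Nat.cast_sub he, ZMod.natCast_self, Nat.cast_one, zero_sub]

-- telescoping for ξ = 1
private lemma tele1 (n : ℕ) (hne : ∀ k : ℕ, 0 < k → k < n + 2 → (k : F) ≠ 0) :
    ∏ k ∈ Finset.range n, (1 - (((k + 2 : ℕ) : F))⁻¹) = (((n + 1 : ℕ) : F))⁻¹ := by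
  induction n with
  | zero => simp
  | succ m ih =>
    have h' : ∀ k : ℕ, 0 < k → k < m + 2 → (k : F) ≠ 0 := fun k hk hk' =>
      hne k hk (by omega)
    have hm1 : ((m + 1 : ℕ) : F) ≠ 0 := hne (m + 1) (by omega) (by omega)
    have hm2 : ((m + 2 : ℕ) : F) ≠ 0 := hne (m + 2) (by omega) (by omega)
    rw [Finset.prod_range_succ, ih h']
    have key : (1 : F) - (((m + 2 : ℕ) : F))⁻¹ = ((m + 1 : ℕ) : F) / ((m + 2 : ℕ) : F) := by
      rw [eq_div_iff hm2, sub_mul, inv_mul_cancel₀ hm2, one_mul]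
      push_cast
      ring
    rw [key, div_eq_mul_inv, ← mul_assoc, inv_mul_cancel₀ hm1, one_mul,
      show m + 1 + 1 = m + 2 from rfl]

-- telescoping for ξ ≠ 1
private lemma tele2 (ξ : F) (n : ℕ) (hord : ∀ k : ℕ, 0 < k → k < n + 2 → ξ ^ k ≠ 1) :
    ∏ k ∈ Finset.range n, (ξ * (ξ ^ (k + 1) - 1) / (ξ ^ (k + 2) - 1))
      = ξ ^ n * (ξ - 1) / (ξ ^ (n + 1) - 1) := by
  induction n with
  | zero =>
    have h1 : ξ ≠ 1 := by simpa using hord 1 (by omega) (by omega)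
    simp [sub_ne_zero.mpr h1, div_self]
  | succ m ih =>
    have h' : ∀ k : ℕ, 0 < k → k < m + 2 → ξ ^ k ≠ 1 := fun k hk hk' =>
      hord k hk (by omega)
    have hm1 : ξ ^ (m + 1) - 1 ≠ 0 := sub_ne_zero.mpr (hord (m + 1) (by omega) (by omega))
    have hm2 : ξ ^ (m + 2) - 1 ≠ 0 := sub_ne_zero.mpr (hord (m + 2) (by omega) (by omega))
    rw [Finset.prod_range_succ, ih h']
    field_simp
    ring

end helpers

open scoped Classical in
/-- The constant coefficients `Q_i^{(0)}` of the power series `Q_i` appearing in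
the Brundan–Kleshchev isomorphism. -/
noncomputable def Qconst (e : ℕ) [NeZero e] {F : Type*} [Field F] (ξ : F)
    (i : ZMod e) : F :=
  if ξ = 1 then
    (if i = 0 then 1
     else if e = 2 then 1
     else if i = 1 then 1
     else if i = -1 then 2
     else 1 - ((i.val : F))⁻¹)
  else
    (if i = 0 then 1 - ξ
     else if e = 2 then 1 / (ξ - 1)
     else if i = 1 then 1
     else if i = -1 then ξ * ((ξ⁻¹) ^ 2 - 1) / (ξ⁻¹ - 1) ^ 2
     else ξ * (ξ ^ (i.val - 1) - 1) / (ξ ^ i.val - 1))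

open scoped Classical in
private lemma Qconst_mid {F : Type*} [Field F] (e : ℕ) [NeZero e] (ξ : F) (k : ℕ)
    (h2 : 2 ≤ k) (hk : k < e - 1) :
    Qconst e ξ (k : ZMod e) =
      if ξ = 1 then 1 - ((k : F))⁻¹ else ξ * (ξ ^ (k - 1) - 1) / (ξ ^ k - 1) := by
  have hke : k < e := by omega
  have h0 : (k : ZMod e) ≠ 0 := by
    simpa using zmod_ne e k 0 hke (by omega) (by omega)
  have h1 : (k : ZMod e) ≠ 1 := by
    simpa using zmod_ne e k 1 hke (by omega) (by omega)
  have hm1 : (k : ZMod e) ≠ -1 := by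
    rw [← zmod_neg_one e (by omega)]
    exact zmod_ne e k (e - 1) hke (by omega) (by omega)
  have hval : ((k : ZMod e)).val = k := ZMod.val_natCast_of_lt hke
  by_cases hξ : ξ = 1 <;>
    simp [Qconst, hξ, h0, h1, hm1, hval, show e ≠ 2 by omega]

/-- `Q_0^{(0)} Q_1^{(0)} ⋯ Q_{e-1}^{(0)} = -1`, where `e` is the quantum
characteristic of `ξ`. -/
theorem Qconst_prod_eq_neg_one (F : Type*) [Field F] (e : ℕ) (he : 2 ≤ e)
    [NeZero e] (ξ : F)
    (hsum : ∑ k ∈ Finset.range e, ξ ^ k = 0)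
    (hmin : ∀ e' : ℕ, 2 ≤ e' → e' < e → ∑ k ∈ Finset.range e', ξ ^ k ≠ 0) :
    ∏ i : ZMod e, Qconst e ξ i = -1 := by
  rw [prod_zmod_eq]
  by_cases hξ : ξ = 1
  · subst hξ
    have heF : (e : F) = 0 := by simpa using hsum
    have hne : ∀ k : ℕ, 0 < k → k < e → (k : F) ≠ 0 := by
      intro k hk hke
      rcases Nat.lt_or_ge k 2 with h | h
      · interval_cases k; simp
      · have := hmin k h hke
        simpa using this
    rcases eq_or_lt_of_le he with he2 | he3
    · obtain rfl : e = 2 := he2.symm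
      have h2 : (2 : F) = 0 := by exact_mod_cast heF
      simp only [Finset.prod_range_succ, Finset.prod_range_zero, one_mul]
      rw [Qconst, Qconst]
      norm_num [show ((1 : ℕ) : ZMod 2) ≠ 0 from by decide]
      linear_combination h2
    · obtain ⟨n, rfl⟩ : ∃ n, e = n + 3 := ⟨e - 3, by omega⟩
      rw [Finset.prod_range_succ, Finset.prod_range_succ', Finset.prod_range_succ']
      have hf0 : Qconst (n + 3) (1 : F) ((0 : ℕ) : ZMod (n + 3)) = 1 := by
        rw [Qconst]; simp
      have hf1 : Qconst (n + 3) (1 : F) ((0 + 1 : ℕ) : ZMod (n + 3)) = 1 := by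
        rw [Qconst]
        have h1 : ((0 + 1 : ℕ) : ZMod (n + 3)) = 1 := by push_cast; ring
        have h10 : (1 : ZMod (n + 3)) ≠ 0 := by
          simpa using zmod_ne (n + 3) 1 0 (by omega) (by omega) (by omega)
        simp [h1, h10]
      have hm : ((n + 2 : ℕ) : ZMod (n + 3)) = -1 := by
        rw [← zmod_neg_one (n + 3) (by omega)]; norm_num
      have hne10 : (-1 : ZMod (n + 3)) ≠ 0 := by
        rw [← hm]; simpa using zmod_ne (n + 3) (n + 2) 0 (by omega) (by omega) (by omega)
      have hne11 : (-1 : ZMod (n + 3)) ≠ 1 := by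
        rw [← hm]; simpa using zmod_ne (n + 3) (n + 2) 1 (by omega) (by omega) (by omega)
      have hftop : Qconst (n + 3) (1 : F) ((n + 2 : ℕ) : ZMod (n + 3)) = 2 := by
        rw [Qconst, hm]
        simp [hne10, hne11, show n + 3 ≠ 2 by omega]
      have hmid : ∀ k ∈ Finset.range n,
          Qconst (n + 3) (1 : F) ((k + 1 + 1 : ℕ) : ZMod (n + 3))
            = 1 - (((k + 2 : ℕ) : F))⁻¹ := by
        intro k hk
        have hk' := Finset.mem_range.mp hk
        rw [show (k + 1 + 1 : ℕ) = k + 2 by ring,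
          Qconst_mid (n + 3) 1 (k + 2) (by omega) (by omega)]
        simp
      rw [Finset.prod_congr rfl hmid, tele1 n (fun k hk hk' => hne k hk (by omega)),
        hf0, hf1, hftop]
      have hn1 : ((n + 1 : ℕ) : F) = -2 := by
        have h3 : ((n + 3 : ℕ) : F) = 0 := heF
        push_cast at h3 ⊢
        linear_combination h3
      have h2 : (2 : F) ≠ 0 := hne 2 (by omega) (by omega)
      rw [hn1]
      have : ((-2 : F))⁻¹ * 2 = -1 := by
        field_simp
      linear_combination this
  · -- ξ ≠ 1
    have hξ1 : ξ - 1 ≠ 0 := sub_ne_zero.mpr hξ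
    have hξe : ξ ^ e = 1 := by
      rw [geom_sum_eq hξ] at hsum
      exact sub_eq_zero.mp ((div_eq_zero_iff.mp hsum).resolve_right hξ1)
    have hord : ∀ k : ℕ, 0 < k → k < e → ξ ^ k ≠ 1 := by
      intro k hk hke h1
      rcases Nat.lt_or_ge k 2 with h | h
      · interval_cases k; simp at h1; exact hξ h1
      · exact hmin k h hke (by rw [geom_sum_eq hξ, h1, sub_self, zero_div])
    have hξ0 : ξ ≠ 0 := by
      intro h
      rw [h, zero_pow (NeZero.ne e)] at hξe
      exact one_ne_zero hξe.symm
    rcases eq_or_lt_of_le he with he2 | he3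
    · obtain rfl : e = 2 := he2.symm
      simp only [Finset.prod_range_succ, Finset.prod_range_zero, one_mul]
      have h10 : ((1 : ℕ) : ZMod 2) ≠ 0 := by decide
      rw [show ((0:ℕ) : ZMod 2) = 0 from rfl]
      simp only [Qconst, if_pos rfl, if_neg hξ, if_neg h10, if_pos rfl]
      simp only [↓reduceIte]
      rw [mul_one_div, div_eq_iff hξ1]
      ring
    · obtain ⟨n, rfl⟩ : ∃ n, e = n + 3 := ⟨e - 3, by omega⟩
      rw [Finset.prod_range_succ, Finset.prod_range_succ', Finset.prod_range_succ']
      have hf0 : Qconst (n + 3) ξ ((0 : ℕ) : ZMod (n + 3)) = 1 - ξ := by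
        rw [Qconst]; simp [hξ]
      have hf1 : Qconst (n + 3) ξ ((0 + 1 : ℕ) : ZMod (n + 3)) = 1 := by
        rw [Qconst]
        have h1 : ((0 + 1 : ℕ) : ZMod (n + 3)) = 1 := by push_cast; ring
        have h10 : (1 : ZMod (n + 3)) ≠ 0 := by
          simpa using zmod_ne (n + 3) 1 0 (by omega) (by omega) (by omega)
        simp [h1, h10, hξ, show n + 3 ≠ 2 by omega]
      have hm : ((n + 2 : ℕ) : ZMod (n + 3)) = -1 := by
        rw [← zmod_neg_one (n + 3) (by omega)]; norm_num
      have hne10 : (-1 : ZMod (n + 3)) ≠ 0 := by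
        rw [← hm]; simpa using zmod_ne (n + 3) (n + 2) 0 (by omega) (by omega) (by omega)
      have hne11 : (-1 : ZMod (n + 3)) ≠ 1 := by
        rw [← hm]; simpa using zmod_ne (n + 3) (n + 2) 1 (by omega) (by omega) (by omega)
      have hftop : Qconst (n + 3) ξ ((n + 2 : ℕ) : ZMod (n + 3))
          = ξ * ((ξ⁻¹) ^ 2 - 1) / (ξ⁻¹ - 1) ^ 2 := by
        rw [Qconst, hm]
        simp [hne10, hne11, hξ, show n + 3 ≠ 2 by omega]
      have hmid : ∀ k ∈ Finset.range n,
          Qconst (n + 3) ξ ((k + 1 + 1 : ℕ) : ZMod (n + 3))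
            = ξ * (ξ ^ (k + 1) - 1) / (ξ ^ (k + 2) - 1) := by
        intro k hk
        have hk' := Finset.mem_range.mp hk
        rw [show (k + 1 + 1 : ℕ) = k + 2 by ring,
          Qconst_mid (n + 3) ξ (k + 2) (by omega) (by omega)]
        simp [hξ]
      rw [Finset.prod_congr rfl hmid,
        tele2 ξ n (fun k hk hk' => hord k hk (by omega)), hf0, hf1, hftop]
      -- final identity
      have hinv : ξ⁻¹ - 1 ≠ 0 := by
        intro h
        exact hξ (inv_eq_one.mp (sub_eq_zero.mp h))
      have h2 : ξ ^ 2 ≠ 1 := hord 2 (by omega) (by omega)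
      have h21 : (ξ ^ 2 : F) - 1 ≠ 0 := sub_ne_zero.mpr h2
      have hn1 : ξ ^ (n + 1) - 1 ≠ 0 := sub_ne_zero.mpr (hord (n + 1) (by omega) (by omega))
      have hne' : ξ ^ (n + 3) = 1 := hξe
      field_simp
      linear_combination (1 - ξ) * hne'
end

section
/- Let $e \ge 2$, $d \ge 1$, and let $\mathbf{i}^{(1)}, \ldots, \mathbf{i}^{(d)} \in (\mathbb{Z}/e\mathbb{Z})^e$ each be a permutation-type tuple of content $\delta$ (i.e. containing each residue exactly once). If the concatenation $\mathbf{i}^{(1)} \cdots \mathbf{i}^{(d)}$ belongs to $\mathcal{E}_d$ (defined via partitions of $\{1,\ldots,de\}$ into $d$ blocks of size $e$ whose induced subtuples are residue sequences of standard $e$-hook tableaux) and if for some $k > 0$ the first $k$ tuples $\mathbf{i}^{(1)}, \ldots, \mathbf{i}^{(k)}$ each contain every residue exactly once, then each of $\mathbf{i}^{(1)}, \ldots, \mathbf{i}^{(k)}$ is itself the residue sequence of a standard tableau of $e$-hook shape. -/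
/-- `v` is the residue sequence of a standard tableau of `e`-hook shape. -/
def IsHookResidueSeq (e : ℕ) (v : Fin e → ZMod e) : Prop :=
  ∃ (t : Fin e → ℕ × ℕ) (k : ℕ), 1 ≤ k ∧ k ≤ e ∧ IsStandardTableau e t ∧
    Finset.image t Finset.univ = hookCells e k ∧ ∀ m : Fin e, boxRes e (t m) = v m

/-- The position of the `l`-th entry of the `r`-th block of size `e`. -/
def blockPos (d e : ℕ) (r : Fin d) (l : Fin e) : Fin (d * e) :=
  ⟨r.val * e + l.val, by
    calc r.val * e + l.val < r.val * e + e := by omega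
      _ = (r.val + 1) * e := by ring
      _ ≤ d * e := Nat.mul_le_mul_right e r.isLt⟩

/-- `w` is a minimal-length left coset representative of the Young subgroup
`𝔖_{(e,…,e)}` of `𝔖_{de}`: it is increasing on each block of the composition. -/
def CosetMinLeft (d e : ℕ) (w : Equiv.Perm (Fin (d * e))) : Prop :=
  ∀ k k' : Fin (d * e), k < k' → k.val / e = k'.val / e → w k < w k'

/-- `i ∈ 𝓔_d`: `i = w · (i⁽¹⁾ ⋯ i⁽ᵈ⁾)` for a minimal-length coset representative
`w` and residue sequences `i⁽ʳ⁾` of standard tableaux of `e`-hook shape. -/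
def MemEd (d e : ℕ) (i : Fin (d * e) → ZMod e) : Prop :=
  ∃ w : Equiv.Perm (Fin (d * e)), CosetMinLeft d e w ∧
    ∃ v : Fin d → Fin e → ZMod e, (∀ r : Fin d, IsHookResidueSeq e (v r)) ∧
      ∀ (r : Fin d) (l : Fin e), i (w (blockPos d e r l)) = v r l

/-- The alternative description of `𝓔_d`: `{1, …, de}` can be partitioned into
`d` subsets of size `e` whose induced subtuples (in increasing order of
positions) are residue sequences of standard tableaux of `e`-hook shape. -/
def MemEdPartition (d e : ℕ) (i : Fin (d * e) → ZMod e) : Prop :=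
  ∃ (Y : Fin (d * e) → Fin d)
    (h : ∀ r : Fin d, (Finset.univ.filter fun k => Y k = r).card = e),
      ∀ r : Fin d, IsHookResidueSeq e fun l =>
        i (((Finset.univ.filter fun k => Y k = r).orderIsoOfFin (h r) l : Fin (d * e)))


lemma hook_first (e : ℕ) (he : 2 ≤ e) (w : Fin e → ZMod e)
    (hw : IsHookResidueSeq e w) : w ⟨0, by omega⟩ = 0 := by
  obtain ⟨t, k, hk1, hke, ⟨hinj, hlow, hrow, hcol⟩, himg, hres⟩ := hw
  have hcell : ∀ m : Fin e, t m ∈ hookCells e k := by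
    intro m; rw [← himg]; exact Finset.mem_image_of_mem t (Finset.mem_univ m)
  have h00 : ((0, 0) : ℕ × ℕ) ∈ hookCells e k := by
    apply Finset.mem_union_left
    exact Finset.mem_image.2 ⟨0, Finset.mem_range.2 (by omega), rfl⟩
  rw [← himg] at h00
  obtain ⟨m, -, hm⟩ := Finset.mem_image.1 h00
  have hm0 : m = ⟨0, by omega⟩ := by
    by_contra hne
    have hlt : (⟨0, by omega⟩ : Fin e) < m := by
      rcases Nat.eq_zero_or_pos m.val with h0 | h0
      · exact absurd (Fin.ext h0.symm) (fun hc => hne hc.symm)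
      · exact Fin.lt_def.mpr h0
    have hnotlt : ¬ m < (⟨0, by omega⟩ : Fin e) := fun hc => absurd (lt_trans hc hlt) (lt_irrefl m)
    rcases Finset.mem_union.1 (hcell ⟨0, by omega⟩) with h1 | h1
    · obtain ⟨j, hj, hj2⟩ := Finset.mem_image.1 h1
      by_cases hj0 : j = 0
      · exact hne (hinj (by rw [hm, ← hj2, hj0]))
      · apply hnotlt
        apply hrow m ⟨0, by omega⟩
        · rw [hm, ← hj2]
        · rw [hm, ← hj2]; exact Nat.pos_of_ne_zero hj0
    · obtain ⟨a, ha, ha2⟩ := Finset.mem_image.1 h1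
      by_cases ha0 : a = 0
      · exact hne (hinj (by rw [hm, ← ha2, ha0]))
      · apply hnotlt
        apply hcol m ⟨0, by omega⟩
        · rw [hm, ← ha2]
        · rw [hm, ← ha2]; exact Nat.pos_of_ne_zero ha0
  rw [← hres ⟨0, by omega⟩, ← hm0, hm]
  simp [boxRes]

lemma first_val_zero {α : Type*} [LinearOrder α] (e : ℕ) (he : 2 ≤ e)
    (F : Finset α) (hF : F.card = e) (f : α → ZMod e)
    (hhook : IsHookResidueSeq e fun l => f ((F.orderIsoOfFin hF l : α)))
    (p : α) (hp : p ∈ F) (hmin : ∀ q ∈ F, p ≤ q) : f p = 0 := by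
  have h0 := hook_first e he _ hhook
  have hmem : ((F.orderIsoOfFin hF ⟨0, by omega⟩ : F) : α) ∈ F :=
    (F.orderIsoOfFin hF ⟨0, by omega⟩).2
  have h1 : p ≤ ((F.orderIsoOfFin hF ⟨0, by omega⟩ : F) : α) := hmin _ hmem
  have h2 : ((F.orderIsoOfFin hF ⟨0, by omega⟩ : F) : α) ≤ p := by
    obtain ⟨m, hmm⟩ := (F.orderIsoOfFin hF).surjective ⟨p, hp⟩
    have hle : (F.orderIsoOfFin hF ⟨0, by omega⟩) ≤ (F.orderIsoOfFin hF m) :=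
      (F.orderIsoOfFin hF).monotone (by exact Nat.zero_le _)
    rw [hmm] at hle
    exact hle
  have heq : ((F.orderIsoOfFin hF ⟨0, by omega⟩ : F) : α) = p := le_antisymm h2 h1
  rw [← heq]
  exact h0

lemma aux_lt {d e s l : ℕ} (hs : s < d) (hl : l < e) : s * e + l < d * e := by
  have h1 : (s + 1) * e ≤ d * e := Nat.mul_le_mul_right e hs
  have h2 : (s + 1) * e = s * e + e := by ring
  omega

lemma aux_lt0 {d e s : ℕ} (hs : s < d) (he0 : 0 < e) : s * e < d * e := by
  have := aux_lt (l := 0) hs he0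
  omega


/-- If the concatenation of tuples `v⁽¹⁾, …, v⁽ᵈ⁾ ∈ (ℤ/eℤ)^e`, each containing
every residue exactly once, lies in `𝓔_d` (in its partition description), then
each of the first `k` tuples (`k > 0`) is itself the residue sequence of a
standard tableau of `e`-hook shape. -/
theorem first_blocks_are_hook_sequences (d e : ℕ) (hd : 1 ≤ d) (he : 2 ≤ e)
    (v : Fin d → Fin e → ZMod e) (hv : ∀ r : Fin d, Function.Bijective (v r))
    (i : Fin (d * e) → ZMod e)
    (hconc : ∀ (r : Fin d) (l : Fin e), i (blockPos d e r l) = v r l)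
    (hEd : MemEdPartition d e i)
    (k : ℕ) (hk0 : 0 < k) (hkd : k ≤ d) :
    ∀ r : Fin d, r.val < k → IsHookResidueSeq e (v r) := by
  intro r hrk
  obtain ⟨Y, h, hY⟩ := hEd
  have he0 : 0 < e := by omega
  -- each block (as a set of positions) has cardinality e
  have hblockcard : ∀ s : ℕ, s < d →
      (Finset.univ.filter fun p : Fin (d * e) => s * e ≤ p.val ∧ p.val < s * e + e).card = e := by
    intro s hs
    have himg : (Finset.univ.filter fun p : Fin (d * e) => s * e ≤ p.val ∧ p.val < s * e + e)
        = Finset.image (fun l : Fin e => (⟨s * e + l.val, aux_lt hs l.isLt⟩ : Fin (d * e)))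
            Finset.univ := by
      ext p
      simp only [Finset.mem_filter, Finset.mem_univ, true_and]
      constructor
      · rintro ⟨h1, h2⟩
        apply Finset.mem_image.2
        refine ⟨⟨p.val - s * e, by omega⟩, Finset.mem_univ _, Fin.ext ?_⟩
        show s * e + (p.val - s * e) = p.val
        omega
      · intro hp
        obtain ⟨l, -, hl⟩ := Finset.mem_image.1 hp
        have hv : p.val = s * e + l.val := by rw [← hl]
        have := l.isLt
        omega
    rw [himg, Finset.card_image_of_injective _ ?_, Finset.card_univ, Fintype.card_fin]
    intro a b hab
    have hab' : s * e + a.val = s * e + b.val := congrArg Fin.val hab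
    exact Fin.ext (by omega)
  -- the key induction: Y is constant on each block
  have J : ∀ n : ℕ, ∀ hn : n < d * e, ∀ s l : ℕ, s < d → l < e → n = s * e + l →
      ∀ hse : s * e < d * e, Y ⟨n, hn⟩ = Y ⟨s * e, hse⟩ := by
    intro n
    induction n using Nat.strong_induction_on with
    | _ n IH =>
      intro hn s l hs hl heq hse
      rcases Nat.eq_zero_or_pos l with hl0 | hl0
      · exact congrArg Y (Fin.ext (show n = s * e by omega))
      by_contra hne
      -- earlier blocks' classes are exhausted
      have exhausted : ∀ s' : ℕ, s' < s → ∀ hs'e : s' * e < d * e,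
          (Finset.univ.filter fun p : Fin (d * e) => Y p = Y ⟨s' * e, hs'e⟩)
            = Finset.univ.filter fun p : Fin (d * e) => s' * e ≤ p.val ∧ p.val < s' * e + e := by
        intro s' hs' hs'e
        symm
        apply Finset.eq_of_subset_of_card_le
        · intro q hq
          simp only [Finset.mem_filter, Finset.mem_univ, true_and] at hq ⊢
          have hqn : q.val < n := by
            have h1 : (s' + 1) * e ≤ s * e := Nat.mul_le_mul_right e hs'
            have h2 : (s' + 1) * e = s' * e + e := by ring
            omega
          have := IH q.val hqn q.isLt s' (q.val - s' * e) (by omega) (by omega) (by omega) hs'e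
          rwa [Fin.eta] at this
        · have h1 := h (Y ⟨s' * e, hs'e⟩)
          have h2 := hblockcard s' (by omega)
          omega
      -- position n is minimal in its class
      have hminc : ∀ q : Fin (d * e), Y q = Y ⟨n, hn⟩ → n ≤ q.val := by
        intro q hq
        by_contra hlt
        push_neg at hlt
        rcases lt_or_ge q.val (s * e) with hcase | hcase
        · obtain ⟨s', l', hl', hq'⟩ : ∃ s' l', l' < e ∧ q.val = s' * e + l' :=
            ⟨q.val / e, q.val % e, Nat.mod_lt _ he0, (Nat.div_add_mod' q.val e).symm⟩
          have hs'lt : s' < s := by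
            by_contra hge
            push_neg at hge
            have : s * e ≤ s' * e := Nat.mul_le_mul_right e hge
            omega
          have hs'e : s' * e < d * e := aux_lt0 (by omega) he0
          have hYq : Y q = Y ⟨s' * e, hs'e⟩ := by
            have := IH q.val (by omega) q.isLt s' l' (by omega) hl' hq' hs'e
            rwa [Fin.eta] at this
          have hmem : (⟨n, hn⟩ : Fin (d * e)) ∈
              (Finset.univ.filter fun p : Fin (d * e) => Y p = Y ⟨s' * e, hs'e⟩) := by
            simp only [Finset.mem_filter, Finset.mem_univ, true_and]
            rw [← hq]; exact hYq
          rw [exhausted s' hs'lt hs'e] at hmem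
          simp only [Finset.mem_filter, Finset.mem_univ, true_and] at hmem
          have h1 : (s' + 1) * e ≤ s * e := Nat.mul_le_mul_right e hs'lt
          have h2 : (s' + 1) * e = s' * e + e := by ring
          omega
        · have := IH q.val hlt q.isLt s (q.val - s * e) hs (by omega) (by omega) hse
          rw [Fin.eta] at this
          exact hne (by rw [← hq]; exact this)
      -- position s*e is minimal in its class
      have hmin0 : ∀ q : Fin (d * e), Y q = Y ⟨s * e, hse⟩ → s * e ≤ q.val := by
        intro q hq
        by_contra hlt
        push_neg at hlt
        obtain ⟨s', l', hl', hq'⟩ : ∃ s' l', l' < e ∧ q.val = s' * e + l' :=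
          ⟨q.val / e, q.val % e, Nat.mod_lt _ he0, (Nat.div_add_mod' q.val e).symm⟩
        have hs'lt : s' < s := by
          by_contra hge
          push_neg at hge
          have : s * e ≤ s' * e := Nat.mul_le_mul_right e hge
          omega
        have hs'e : s' * e < d * e := aux_lt0 (by omega) he0
        have hYq : Y q = Y ⟨s' * e, hs'e⟩ := by
          have := IH q.val (by omega) q.isLt s' l' (by omega) hl' hq' hs'e
          rwa [Fin.eta] at this
        have hmem : (⟨s * e, hse⟩ : Fin (d * e)) ∈
            (Finset.univ.filter fun p : Fin (d * e) => Y p = Y ⟨s' * e, hs'e⟩) := by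
          simp only [Finset.mem_filter, Finset.mem_univ, true_and]
          rw [← hq]; exact hYq
        rw [exhausted s' hs'lt hs'e] at hmem
        simp only [Finset.mem_filter, Finset.mem_univ, true_and] at hmem
        have h1 : (s' + 1) * e ≤ s * e := Nat.mul_le_mul_right e hs'lt
        have h2 : (s' + 1) * e = s' * e + e := by ring
        omega
      -- hence both positions carry residue 0
      have hz1 : i (⟨n, hn⟩ : Fin (d * e)) = 0 := by
        apply first_val_zero e he _ (h (Y ⟨n, hn⟩)) i (hY (Y ⟨n, hn⟩))
        · simp
        · intro q hq
          simp only [Finset.mem_filter, Finset.mem_univ, true_and] at hq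
          exact Fin.le_def.mpr (hminc q hq)
      have hz0 : i (⟨s * e, hse⟩ : Fin (d * e)) = 0 := by
        apply first_val_zero e he _ (h (Y ⟨s * e, hse⟩)) i (hY (Y ⟨s * e, hse⟩))
        · simp
        · intro q hq
          simp only [Finset.mem_filter, Finset.mem_univ, true_and] at hq
          exact Fin.le_def.mpr (hmin0 q hq)
      -- contradiction with injectivity of v ⟨s, hs⟩
      have hv1 : i (⟨n, hn⟩ : Fin (d * e)) = v ⟨s, hs⟩ ⟨l, hl⟩ := by
        have hc := hconc ⟨s, hs⟩ ⟨l, hl⟩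
        rwa [show blockPos d e ⟨s, hs⟩ ⟨l, hl⟩ = ⟨n, hn⟩ from Fin.ext (show s * e + l = n by omega)] at hc
      have hv0 : i (⟨s * e, hse⟩ : Fin (d * e)) = v ⟨s, hs⟩ ⟨0, he0⟩ := by
        have hc := hconc ⟨s, hs⟩ ⟨0, he0⟩
        rwa [show blockPos d e ⟨s, hs⟩ ⟨0, he0⟩ = ⟨s * e, hse⟩ from Fin.ext (show s * e + 0 = s * e by omega)] at hc
      have heq2 : (⟨l, hl⟩ : Fin e) = ⟨0, he0⟩ :=
        (hv ⟨s, hs⟩).1 (by rw [← hv1, ← hv0, hz1, hz0])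
      have := congrArg Fin.val heq2
      simp at this
      omega
  -- conclude: the class of block r is exactly block r
  have hre : r.val * e < d * e := aux_lt0 r.isLt he0
  have hfib : (Finset.univ.filter fun p : Fin (d * e) => Y p = Y ⟨r.val * e, hre⟩)
      = Finset.univ.filter fun p : Fin (d * e) => r.val * e ≤ p.val ∧ p.val < r.val * e + e := by
    symm
    apply Finset.eq_of_subset_of_card_le
    · intro q hq
      simp only [Finset.mem_filter, Finset.mem_univ, true_and] at hq ⊢
      have := J q.val q.isLt r.val (q.val - r.val * e) r.isLt (by omega) (by omega) hre
      rwa [Fin.eta] at this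
    · have h1 := h (Y ⟨r.val * e, hre⟩)
      have h2 := hblockcard r.val r.isLt
      omega
  have henum : ∀ l : Fin e,
      (((Finset.univ.filter fun p : Fin (d * e) => Y p = Y ⟨r.val * e, hre⟩).orderIsoOfFin
        (h (Y ⟨r.val * e, hre⟩)) l : _) : Fin (d * e)) = blockPos d e r l := by
    have hmem : ∀ x : Fin e, blockPos d e r x ∈
        (Finset.univ.filter fun p : Fin (d * e) => Y p = Y ⟨r.val * e, hre⟩) := by
      intro x
      rw [hfib]
      simp only [Finset.mem_filter, Finset.mem_univ, true_and]
      exact ⟨Nat.le_add_right _ _, show r.val * e + x.val < r.val * e + e from by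
        have := x.isLt; omega⟩
    have hmono : StrictMono (blockPos d e r) := by
      intro a b hab
      exact Fin.lt_def.mpr (show r.val * e + a.val < r.val * e + b.val from by
        have : a.val < b.val := hab; omega)
    have huniq := Finset.orderEmbOfFin_unique (h (Y ⟨r.val * e, hre⟩)) hmem hmono
    intro l
    rw [Finset.coe_orderIsoOfFin_apply, ← huniq]
  have hseq := hY (Y ⟨r.val * e, hre⟩)
  have key : (fun l => i (((Finset.univ.filter fun p : Fin (d * e) => Y p = Y ⟨r.val * e, hre⟩).orderIsoOfFin
      (h (Y ⟨r.val * e, hre⟩)) l : Fin (d * e)))) = v r := by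
    funext l
    rw [henum l]
    exact hconc r l
  rwa [key] at hseq
end
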